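/- arXiv:2507.17739 — 8 statements merged into one kernel-verified Lean document; each statement's English description precedes it below -/
import Mathlib

section
/- Let r ≥ 2 and m ≥ 1 be integers, let G be an n-vertex graph with minimum degree δ(G) ≥ n/2 + 6r²m, and let χ : E(G) → [r] be an edge-coloring such that every Hamilton cycle H of G satisfies d_χ(H) < m. Then every family of pairwise vertex-disjoint bad bowties in G has size at most 2rm. -/
open SimpleGraph

/-- A bowtie on vertices `v₁,…,v₅`: five distinct vertices with edges
`v₁v₂, v₁v₃, v₁v₄, v₁v₅, v₂v₃, v₄v₅`. -/
def IsBowtie {V : Type*} (G : SimpleGraph V) (v₁ v₂ v₃ v₄ v₅ : V) : Prop :=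
  [v₁, v₂, v₃, v₄, v₅].Nodup ∧
    G.Adj v₁ v₂ ∧ G.Adj v₁ v₃ ∧ G.Adj v₁ v₄ ∧ G.Adj v₁ v₅ ∧ G.Adj v₂ v₃ ∧ G.Adj v₄ v₅

/-- The color-counting function
`f(B,k) = 1_k(v₁v₂)+1_k(v₁v₃)+1_k(v₄v₅)−1_k(v₁v₄)−1_k(v₁v₅)−1_k(v₂v₃)` of a bowtie.
The bowtie is `k`-bad if `f(B,k) ≠ 0`, and bad if it is `k`-bad for some color `k`. -/
def bowtieF {V : Type*} {r : ℕ} (χ : Sym2 V → Fin r) (v₁ v₂ v₃ v₄ v₅ : V) (k : Fin r) : ℤ :=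
  (if χ s(v₁, v₂) = k then 1 else 0) + (if χ s(v₁, v₃) = k then 1 else 0)
    + (if χ s(v₄, v₅) = k then 1 else 0) - (if χ s(v₁, v₄) = k then 1 else 0)
    - (if χ s(v₁, v₅) = k then 1 else 0) - (if χ s(v₂, v₃) = k then 1 else 0)

open List Finset
set_option linter.unusedSectionVars false
set_option linter.unusedVariables false
set_option maxHeartbeats 1600000

namespace HamAux
variable {V : Type*} [DecidableEq V]

def pE : List V → List (Sym2 V)
  | a :: b :: t => s(a, b) :: pE (b :: t)
  | _ => []

@[simp] lemma pE_nil : pE ([] : List V) = [] := rfl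
@[simp] lemma pE_single (a : V) : pE [a] = [] := rfl
@[simp] lemma pE_cons_cons (a b : V) (t : List V) :
    pE (a :: b :: t) = s(a, b) :: pE (b :: t) := rfl

lemma pE_append (l₁ : List V) (x : V) (l₂ : List V) :
    pE (l₁ ++ x :: l₂) = pE (l₁ ++ [x]) ++ pE (x :: l₂) := by
  induction l₁ with
  | nil => simp
  | cons a t ih =>
    cases t with
    | nil => simp
    | cons b t' => simpa using ih

lemma pE_concat (l : List V) (hl : l ≠ []) (x : V) :
    pE (l ++ [x]) = pE l ++ [s(l.getLast hl, x)] := by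
  induction l with
  | nil => simp at hl
  | cons a t ih =>
    cases t with
    | nil => simp
    | cons b t' =>
      have h : (b :: t') ≠ [] := by simp
      simp only [List.cons_append, pE_cons_cons]
      rw [show (b :: (t' ++ [x])) = (b :: t') ++ [x] from rfl, ih h]
      simp [List.getLast]

lemma mem_of_mem_pE {e : Sym2 V} {l : List V} (he : e ∈ pE l) {v : V} (hv : v ∈ e) :
    v ∈ l := by
  induction l with
  | nil => simp [pE] at he
  | cons a t ih =>
    cases t with
    | nil => simp [pE] at he
    | cons b t' =>
      simp only [pE_cons_cons, List.mem_cons] at he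
      rcases he with rfl | he
      · rcases Sym2.mem_iff.1 hv with rfl | rfl <;> simp
      · exact List.mem_cons_of_mem _ (ih he)

lemma mem_pE_split {e : Sym2 V} {l : List V} (he : e ∈ pE l) :
    ∃ l₁ x y l₂, l = l₁ ++ x :: y :: l₂ ∧ e = s(x, y) := by
  induction l with
  | nil => simp [pE] at he
  | cons a t ih =>
    cases t with
    | nil => simp [pE] at he
    | cons b t' =>
      simp only [pE_cons_cons, List.mem_cons] at he
      rcases he with rfl | he
      · exact ⟨[], a, b, t', by simp⟩
      · obtain ⟨l₁, x, y, l₂, h1, h2⟩ := ih he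
        exact ⟨a :: l₁, x, y, l₂, by simp [h1], h2⟩

lemma pE_reverse (l : List V) : pE l.reverse = (pE l).reverse := by
  induction l with
  | nil => simp
  | cons a t ih =>
    cases t with
    | nil => simp
    | cons b t' =>
      have hne : (b :: t').reverse ≠ [] := by simp
      have : (a :: b :: t').reverse = (b :: t').reverse ++ [a] := by simp
      rw [this, pE_concat _ hne, ih]
      have hlast : (b :: t').reverse.getLast hne = b := by
        simp [List.getLast_reverse]
      rw [hlast, pE_cons_cons]
      simp [Sym2.eq_swap]

lemma pE_nodup {l : List V} (hl : l.Nodup) : (pE l).Nodup := by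
  induction l with
  | nil => simp
  | cons a t ih =>
    cases t with
    | nil => simp
    | cons b t' =>
      simp only [pE_cons_cons]
      refine List.nodup_cons.2 ⟨?_, ih (List.nodup_cons.1 hl).2⟩
      intro hmem
      have : a ∈ b :: t' := mem_of_mem_pE hmem (by simp)
      exact (List.nodup_cons.1 hl).1 this

lemma pE_sublist_chain' {G : SimpleGraph V} {l : List V} (h : List.Chain' G.Adj l)
    {e : Sym2 V} (he : e ∈ pE l) : ∃ x y, e = s(x,y) ∧ G.Adj x y := by
  induction l with
  | nil => simp [pE] at he
  | cons a t ih =>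
    cases t with
    | nil => simp [pE] at he
    | cons b t' =>
      simp only [pE_cons_cons, List.mem_cons] at he
      rcases he with rfl | he
      · exact ⟨a, b, rfl, h.rel_head⟩
      · exact ih h.tail he


/-- closure of a list: repeat the head at the end -/
def cl : List V → List V
  | [] => []
  | a :: t => a :: (t ++ [a])

def cE (l : List V) : List (Sym2 V) := pE (cl l)

def IsCyc (G : SimpleGraph V) (l : List V) : Prop :=
  3 ≤ l.length ∧ l.Nodup ∧ List.Chain' G.Adj (cl l)

lemma mem_of_mem_cE {e : Sym2 V} {l : List V} (he : e ∈ cE l) {v : V} (hv : v ∈ e) :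
    v ∈ l := by
  cases l with
  | nil => simp [cE, cl, pE] at he
  | cons a t =>
    have h2 : v ∈ a :: (t ++ [a]) := mem_of_mem_pE he hv
    simp only [List.mem_cons, List.mem_append, List.mem_singleton] at h2 ⊢
    tauto

lemma rot {G : SimpleGraph V} {C₁ C₂ : List V} {u : V} (h : IsCyc G (C₁ ++ u :: C₂)) :
    IsCyc G (u :: (C₂ ++ C₁)) ∧ (cE (u :: (C₂ ++ C₁))).Perm (cE (C₁ ++ u :: C₂)) := by
  obtain ⟨hlen, hnd, hch⟩ := h
  have hperm : (u :: (C₂ ++ C₁)).Perm (C₁ ++ u :: C₂) := by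
    refine List.Perm.trans ?_ (List.perm_append_comm)
    simp [List.perm_comm]
  cases C₁ with
  | nil => exact ⟨⟨by simpa using hlen, by simpa using hnd, by simpa using hch⟩, by simp⟩
  | cons a D =>
    -- source closure:  (a::D) ++ u :: (C₂ ++ [a])
    have hsrc : cl ((a :: D) ++ u :: C₂) = (a :: D) ++ u :: (C₂ ++ [a]) := by
      simp [cl]
    -- target closure:  (u::C₂) ++ a :: (D ++ [u])
    have htgt : cl (u :: (C₂ ++ (a :: D))) = (u :: C₂) ++ a :: (D ++ [u]) := by
      simp [cl]
    rw [hsrc] at hch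
    rw [List.Chain', List.isChain_append] at hch
    obtain ⟨hch1, hch2, hj1⟩ := hch
    -- hch2 : Chain' (u :: (C₂ ++ [a])) = Chain' ((u::C₂) ++ [a])
    have hch2' : List.Chain' G.Adj ((u :: C₂) ++ [a]) := by simpa [List.Chain'] using hch2
    rw [List.Chain', List.isChain_append] at hch2'
    obtain ⟨hchu, _, hj2⟩ := hch2'
    constructor
    · refine ⟨?_, hperm.symm.nodup hnd, ?_⟩
      · have := hperm.length_eq; omega
      · rw [htgt, List.Chain', List.isChain_append]
        refine ⟨hchu, ?_, ?_⟩
        · have : (a :: (D ++ [u])) = (a :: D) ++ [u] := by simp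
          rw [this, List.isChain_append]
          refine ⟨hch1, by simp, ?_⟩
          simpa using hj1
        · simpa using hj2
    · unfold cE
      rw [hsrc, htgt, pE_append (a :: D) u (C₂ ++ [a]), pE_append (u :: C₂) a (D ++ [u])]
      have e1 : (a :: D) ++ [u] = a :: (D ++ [u]) := by simp
      have e2 : (u :: C₂) ++ [a] = u :: (C₂ ++ [a]) := by simp
      rw [e1, e2]
      exact List.perm_append_comm

lemma exists_rot {G : SimpleGraph V} {C : List V} {u : V} (h : IsCyc G C) (hu : u ∈ C) :
    ∃ T, IsCyc G (u :: T) ∧ (u :: T).Perm C ∧ (cE (u :: T)).Perm (cE C) := by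
  obtain ⟨l₁, l₂, rfl⟩ := List.append_of_mem hu
  have := rot (G := G) (C₁ := l₁) (C₂ := l₂) h
  refine ⟨l₂ ++ l₁, this.1, ?_, this.2⟩
  refine List.Perm.trans ?_ (List.perm_append_comm)
  simp [List.perm_comm]


def mkWalk (G : SimpleGraph V) : (l : List V) → (a b : V) →
    List.Chain' G.Adj (a :: (l ++ [b])) → G.Walk a b
  | [], a, b, h => Walk.cons (h.rel_head) Walk.nil
  | c :: t, a, b, h => Walk.cons (h.rel_head) (mkWalk G t c b h.tail)

lemma mkWalk_support (G : SimpleGraph V) (l : List V) (a b : V)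
    (h : List.Chain' G.Adj (a :: (l ++ [b]))) :
    (mkWalk G l a b h).support = a :: (l ++ [b]) := by
  induction l generalizing a with
  | nil => simp [mkWalk]
  | cons c t ih => simp [mkWalk, ih]; exact ih _ _

lemma mkWalk_edges (G : SimpleGraph V) (l : List V) (a b : V)
    (h : List.Chain' G.Adj (a :: (l ++ [b]))) :
    (mkWalk G l a b h).edges = pE (a :: (l ++ [b])) := by
  induction l generalizing a with
  | nil => simp [mkWalk, pE]
  | cons c t ih => simp [mkWalk, ih, pE]; exact ih _ _

lemma isCyc_to_walk [Fintype V] {G : SimpleGraph V} {l : List V} (h : IsCyc G l)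
    (hall : ∀ v, v ∈ l) :
    ∃ (v : V) (H : G.Walk v v), H.IsHamiltonianCycle ∧ H.edges.Perm (cE l) := by
  obtain ⟨hlen, hnd, hch⟩ := h
  match l, hlen with
  | a :: b :: c :: t, _ =>
  set T : List V := b :: c :: t with hT
  have hchT : List.Chain' G.Adj (a :: (T ++ [a])) := by simpa [cl] using hch
  refine ⟨a, mkWalk G T a a hchT, ?_, ?_⟩
  swap
  · rw [mkWalk_edges]
    simp only [cE, cl]
    exact List.Perm.refl _
  have hndT : (T ++ [a]).Nodup := by
    simp only [List.nodup_cons] at hnd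
    refine List.Nodup.append hnd.2 (by simp) ?_
    intro x hx hy
    simp only [List.mem_singleton] at hy
    subst hy
    exact hnd.1 hx
  have hsupp := mkWalk_support G T a a hchT
  have hedges := mkWalk_edges G T a a hchT
  rw [Walk.isHamiltonianCycle_iff_isCycle_and_support_count_tail_eq_one]
  constructor
  · -- IsCycle
    refine ⟨⟨⟨?_⟩, ?_⟩, ?_⟩
    · -- edges nodup
      rw [hedges]
      have : pE (a :: (T ++ [a])) = s(a, b) :: pE (T ++ [a]) := by simp [pE, hT]
      rw [this]
      refine List.nodup_cons.2 ⟨?_, pE_nodup hndT⟩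
      intro hmem
      rw [pE_concat T (by simp [hT]) a] at hmem
      rcases List.mem_append.1 hmem with hm | hm
      · have : a ∈ T := mem_of_mem_pE hm (by simp)
        simp only [List.nodup_cons] at hnd
        exact hnd.1 this
      · have heq : s(a, b) = s(T.getLast (by simp [hT]), a) := List.mem_singleton.1 hm
        rw [Sym2.eq_iff] at heq
        have hbl : b = T.getLast (by simp [hT]) := by
          rcases heq with ⟨h1, h2⟩ | ⟨h1, h2⟩
          · exfalso
            have hm2 : T.getLast (by simp [hT]) ∈ T := List.getLast_mem _
            rw [← h1] at hm2
            simp only [List.nodup_cons] at hnd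
            exact hnd.1 hm2
          · exact h2
        have : T.getLast (by simp [hT]) ∈ c :: t := by
          have : T.getLast (by simp [hT]) = (c :: t).getLast (by simp) := by
            simp [hT, List.getLast_cons]
          rw [this]; exact List.getLast_mem _
        rw [← hbl] at this
        simp only [hT, List.nodup_cons] at hnd
        exact hnd.2.1 this
    · -- ne nil
      intro hcon
      have hsup2 := congrArg Walk.support hcon
      rw [hsupp] at hsup2
      simp [Walk.support_nil] at hsup2
    · -- support tail nodup
      rw [hsupp]
      simpa using hndT
  · intro x
    rw [hsupp]
    simp only [List.tail_cons]
    refine List.count_eq_one_of_mem hndT ?_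
    rcases hall x with hx
    have : x ∈ a :: b :: c :: t := hall x
    simp only [List.mem_cons] at this
    simp only [hT, List.mem_append, List.mem_cons, List.mem_singleton]
    tauto


lemma pE_cons_of_ne (a : V) {l : List V} (h : l ≠ []) :
    pE (a :: l) = s(a, l.head h) :: pE l := by
  cases l with
  | nil => exact absurd rfl h
  | cons b t => rfl

lemma chain'_append_of {α : Type*} {R : α → α → Prop} {l₁ l₂ : List α}
    (hne₁ : l₁ ≠ []) (hne₂ : l₂ ≠ []) (h₁ : List.Chain' R l₁) (h₂ : List.Chain' R l₂)
    (hj : R (l₁.getLast hne₁) (l₂.head hne₂)) : List.Chain' R (l₁ ++ l₂) := by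
  rw [List.Chain', List.isChain_append]
  refine ⟨h₁, h₂, ?_⟩
  rw [List.getLast?_eq_getLast hne₁, List.head?_eq_head hne₂]
  rintro x hx y hy
  simp only [Option.mem_some_iff] at hx hy
  subst hx; subst hy
  exact hj

lemma chain_rev {G : SimpleGraph V} {l : List V} (h : List.Chain' G.Adj l) :
    List.Chain' G.Adj l.reverse :=
  List.isChain_reverse.2 (List.IsChain.imp (fun _ _ hab => hab.symm) h)

lemma switch_core {G : SimpleGraph V} {v₁ v₂ v₃ v₄ v₅ : V} {T₁ T₂ : List V}
    (hT₁ : T₁ ≠ []) (hT₂ : T₂ ≠ [])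
    (hD : IsCyc G (v₁ :: (T₁ ++ v₂ :: v₃ :: T₂)))
    (h5 : T₁.head hT₁ = v₅) (h4 : T₂.getLast hT₂ = v₄)
    (a12 : G.Adj v₁ v₂) (a31 : G.Adj v₃ v₁) (a54 : G.Adj v₅ v₄) :
    ∃ C', IsCyc G C' ∧ C'.Perm (v₁ :: (T₁ ++ v₂ :: v₃ :: T₂)) ∧
      (cE C' ++ [s(v₁,v₄), s(v₁,v₅), s(v₂,v₃)]).Perm
        (cE (v₁ :: (T₁ ++ v₂ :: v₃ :: T₂)) ++ [s(v₁,v₂), s(v₁,v₃), s(v₄,v₅)]) := by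
  obtain ⟨hlen, hnd, hch⟩ := hD
  have hT₁r : T₁.reverse ≠ [] := by simpa using hT₁
  have hT₂r : T₂.reverse ≠ [] := by simpa using hT₂
  set L₁ := T₁.getLast hT₁ with hL₁
  set H₂ := T₂.head hT₂ with hH₂
  -- heads/lasts of reverses
  have hT₁rh : T₁.reverse.head hT₁r = L₁ := by rw [List.head_reverse]
  have hT₁rl : T₁.reverse.getLast hT₁r = v₅ := by rw [List.getLast_reverse]; exact h5
  have hT₂rh : T₂.reverse.head hT₂r = v₄ := by rw [List.head_reverse]; exact h4
  have hT₂rl : T₂.reverse.getLast hT₂r = H₂ := by rw [List.getLast_reverse]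
  -- decompose cE of the original cycle
  have e1 : cl (v₁ :: (T₁ ++ v₂ :: v₃ :: T₂)) = (v₁ :: T₁) ++ v₂ :: (v₃ :: (T₂ ++ [v₁])) := by
    simp [cl]
  have hcED : cE (v₁ :: (T₁ ++ v₂ :: v₃ :: T₂)) =
      ((s(v₁, v₅) :: pE T₁ ++ [s(L₁, v₂)]) ++
        (s(v₂, v₃) :: (s(v₃, H₂) :: pE T₂ ++ [s(v₄, v₁)]))) := by
    unfold cE
    rw [e1, pE_append (v₁ :: T₁) v₂ (v₃ :: (T₂ ++ [v₁]))]
    rw [pE_concat (v₁ :: T₁) (by simp) v₂]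
    rw [pE_cons_of_ne v₁ hT₁, h5]
    have : (v₁ :: T₁).getLast (by simp) = L₁ := List.getLast_cons hT₁
    rw [this]
    rw [show (v₂ :: v₃ :: (T₂ ++ [v₁])) = v₂ :: ((v₃ :: T₂) ++ [v₁]) from by simp]
    rw [pE_cons_of_ne v₂ (by simp), pE_concat (v₃ :: T₂) (by simp) v₁]
    have h2 : (v₃ :: T₂).getLast (by simp) = v₄ := by
      rw [List.getLast_cons hT₂]; exact h4
    rw [h2]
    have h3 : ((v₃ :: T₂) ++ [v₁]).head (by simp) = v₃ := rfl
    rw [h3, pE_cons_of_ne v₃ hT₂]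
    try simp
  -- the new cycle
  set C' : List V := v₁ :: (v₂ :: (T₁.reverse ++ (T₂.reverse ++ [v₃]))) with hC'
  have f1 : cl C' = ((v₁ :: v₂ :: T₁.reverse) ++ T₂.reverse) ++ v₃ :: [v₁] := by
    simp [hC', cl]
  -- T₂.reverse = v₄ :: tail
  have hrev4 : T₂.reverse = v₄ :: T₂.reverse.tail := by
    conv_lhs => rw [← List.cons_head_tail hT₂r]
    rw [hT₂rh]
  have hcEC' : cE C' =
      ((((s(v₁, v₂) :: s(v₂, L₁) :: (pE T₁).reverse) ++ [s(v₅, v₄)]) ++ (pE T₂).reverse)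
        ++ [s(H₂, v₃)]) ++ [s(v₃, v₁)] := by
    unfold cE
    rw [f1]
    rw [pE_append (((v₁ :: v₂ :: T₁.reverse) ++ T₂.reverse)) v₃ [v₁]]
    rw [pE_concat (((v₁ :: v₂ :: T₁.reverse) ++ T₂.reverse)) (by simp) v₃]
    have g1 : ((v₁ :: v₂ :: T₁.reverse) ++ T₂.reverse).getLast (by simp) = H₂ := by
      rw [List.getLast_append]
      simp only [List.isEmpty_iff]
      rw [dif_neg hT₂r]
      exact hT₂rl
    rw [g1]
    conv_lhs => rw [hrev4]
    rw [show ((v₁ :: v₂ :: T₁.reverse) ++ (v₄ :: T₂.reverse.tail)) =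
      ((v₁ :: v₂ :: T₁.reverse) ++ v₄ :: T₂.reverse.tail) from rfl]
    rw [pE_append (v₁ :: v₂ :: T₁.reverse) v₄ T₂.reverse.tail]
    rw [← hrev4]
    rw [pE_concat (v₁ :: v₂ :: T₁.reverse) (by simp) v₄]
    have g2 : (v₁ :: v₂ :: T₁.reverse).getLast (by simp) = v₅ := by
      rw [List.getLast_cons (by simp : (v₂ :: T₁.reverse) ≠ []),
         List.getLast_cons hT₁r]
      exact hT₁rl
    rw [g2]
    rw [pE_cons_cons, pE_cons_of_ne v₂ hT₁r, hT₁rh, pE_reverse, pE_reverse]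
    simp
  -- chain facts from the original cycle
  rw [e1] at hch
  rw [List.Chain', List.isChain_append] at hch
  obtain ⟨hchA, hchB, hjAB⟩ := hch
  have jL₁2 : G.Adj L₁ v₂ := by
    apply hjAB
    · rw [List.getLast?_eq_getLast (l := v₁ :: T₁) (by simp)]
      have : (v₁ :: T₁).getLast (by simp) = L₁ := List.getLast_cons hT₁
      rw [this]; rfl
    · rfl
  have hchT₁ : List.Chain' G.Adj T₁ := hchA.tail
  have hchB' : List.Chain' G.Adj (v₃ :: (T₂ ++ [v₁])) := hchB.tail
  have j3H : G.Adj v₃ H₂ := by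
    have hrevH : T₂ = H₂ :: T₂.tail := (List.cons_head_tail hT₂).symm
    have : List.Chain' G.Adj (v₃ :: ((H₂ :: T₂.tail) ++ [v₁])) := by rw [← hrevH]; exact hchB'
    exact this.rel_head
  have hchB'' : List.Chain' G.Adj ((v₃ :: T₂) ++ [v₁]) := by simpa using hchB'
  rw [List.Chain', List.isChain_append] at hchB''
  obtain ⟨hch3T₂, _, hj41⟩ := hchB''
  have hchT₂ : List.Chain' G.Adj T₂ := hch3T₂.tail
  refine ⟨C', ⟨?_, ?_, ?_⟩, ?_, ?_⟩
  · -- length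
    have : C'.length = (v₁ :: (T₁ ++ v₂ :: v₃ :: T₂)).length := by simp [hC']; omega
    omega
  · -- nodup via perm
    have hperm : C'.Perm (v₁ :: (T₁ ++ v₂ :: v₃ :: T₂)) := by
      rw [List.perm_iff_count]
      intro x
      simp [hC', List.count_append, List.count_cons, List.count_reverse]
      omega
    exact hperm.symm.nodup hnd
  · -- chain
    rw [f1]
    have hchain1 : List.Chain' G.Adj (v₁ :: v₂ :: T₁.reverse) := by
      rw [List.Chain', List.isChain_cons_cons]
      refine ⟨a12, ?_⟩
      have hrevL : T₁.reverse = L₁ :: T₁.reverse.tail := by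
        conv_lhs => rw [← List.cons_head_tail hT₁r]
        rw [hT₁rh]
      rw [hrevL, List.isChain_cons_cons]
      refine ⟨jL₁2.symm, ?_⟩
      rw [← hrevL]
      exact chain_rev hchT₁
    refine chain'_append_of (by simp) (by simp) ?_ ?_ ?_
    · refine chain'_append_of (by simp) hT₂r hchain1 (chain_rev hchT₂) ?_
      have g2 : (v₁ :: v₂ :: T₁.reverse).getLast (by simp) = v₅ := by
        rw [List.getLast_cons (by simp : (v₂ :: T₁.reverse) ≠ []),
           List.getLast_cons hT₁r]
        exact hT₁rl
      rw [g2, hT₂rh]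
      exact a54
    · rw [List.Chain', List.isChain_cons_cons]
      exact ⟨a31, List.isChain_singleton _⟩
    · have g1 : ((v₁ :: v₂ :: T₁.reverse) ++ T₂.reverse).getLast (by simp) = H₂ := by
        rw [List.getLast_append]
        simp only [List.isEmpty_iff]
        rw [dif_neg hT₂r]
        exact hT₂rl
      rw [g1]
      exact j3H.symm
  · -- perm of vertex lists
    rw [List.perm_iff_count]
    intro x
    simp [hC', List.count_append, List.count_cons, List.count_reverse]
    omega
  · -- perm of edge lists
    rw [hcED, hcEC']
    rw [show s(v₂, L₁) = s(L₁, v₂) from Sym2.eq_swap]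
    rw [show s(H₂, v₃) = s(v₃, H₂) from Sym2.eq_swap]
    rw [show s(v₅, v₄) = s(v₄, v₅) from Sym2.eq_swap]
    rw [show s(v₃, v₁) = s(v₁, v₃) from Sym2.eq_swap]
    rw [show s(v₄, v₁) = s(v₁, v₄) from Sym2.eq_swap]
    rw [show s(v₁, v₅) = s(v₅, v₁) from Sym2.eq_swap]  -- dummy to be removed maybe
    rw [List.perm_iff_count]
    intro x
    simp [List.count_append, List.count_cons, List.count_reverse]
    omega


lemma switch_mid {G : SimpleGraph V} {v₁ v₂ v₃ v₄ v₅ : V} {T : List V} (hT : T ≠ [])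
    (hD : IsCyc G (v₁ :: T))
    (h5 : T.head hT = v₅) (h4 : T.getLast hT = v₄)
    (h23 : s(v₂, v₃) ∈ pE T)
    (n25 : v₂ ≠ v₅) (n34 : v₃ ≠ v₄) (n35 : v₃ ≠ v₅) (n24 : v₂ ≠ v₄)
    (a12 : G.Adj v₁ v₂) (a13 : G.Adj v₁ v₃) (a45 : G.Adj v₄ v₅) :
    ∃ C', IsCyc G C' ∧ C'.Perm (v₁ :: T) ∧
      (cE C' ++ [s(v₁,v₄), s(v₁,v₅), s(v₂,v₃)]).Perm
        (cE (v₁ :: T) ++ [s(v₁,v₂), s(v₁,v₃), s(v₄,v₅)]) := by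
  obtain ⟨T₁, x, y, T₂, hsplit, hxy⟩ := mem_pE_split h23
  subst hsplit
  rw [Sym2.eq_iff] at hxy
  have hgl : ∀ (z w : V) (L : List V), (T₁ ++ z :: w :: L).getLast (by simp) =
      (z :: w :: L).getLast (by simp) := by
    intro z w L
    rw [List.getLast_append, dif_neg (by simp)]
  rcases hxy with ⟨rfl, rfl⟩ | ⟨rfl, rfl⟩
  · have hT₁ : T₁ ≠ [] := by
      rintro rfl
      exact n25 (by simpa using h5)
    have hT₂ : T₂ ≠ [] := by
      rintro rfl
      apply n34
      rw [hgl] at h4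
      simpa using h4
    have h5' : T₁.head hT₁ = v₅ := by
      rw [List.head_append, dif_neg (by simpa using hT₁)] at h5
      exact h5
    have h4' : T₂.getLast hT₂ = v₄ := by
      rw [hgl] at h4
      rwa [List.getLast_cons (by simp), List.getLast_cons hT₂] at h4
    exact switch_core hT₁ hT₂ hD h5' h4' a12 a13.symm (a45.symm : G.Adj v₅ v₄)
  · have hT₁ : T₁ ≠ [] := by
      rintro rfl
      exact n35 (by simpa using h5)
    have hT₂ : T₂ ≠ [] := by
      rintro rfl
      apply n24
      rw [hgl] at h4
      simpa using h4
    have h5' : T₁.head hT₁ = v₅ := by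
      rw [List.head_append, dif_neg (by simpa using hT₁)] at h5
      exact h5
    have h4' : T₂.getLast hT₂ = v₄ := by
      rw [hgl] at h4
      rwa [List.getLast_cons (by simp), List.getLast_cons hT₂] at h4
    obtain ⟨C', hC1, hC2, hC3⟩ :=
      switch_core hT₁ hT₂ hD h5' h4' a13 a12.symm (a45.symm : G.Adj v₅ v₄)
    refine ⟨C', hC1, hC2, ?_⟩
    rw [show s(v₃, v₂) = s(v₂, v₃) from Sym2.eq_swap] at hC3
    refine hC3.trans (List.Perm.append_left _ ?_)
    exact List.Perm.swap _ _ _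

lemma switch_main {G : SimpleGraph V} {C : List V} (hC : IsCyc G C)
    {v₁ v₂ v₃ v₄ v₅ : V} (hnd : ([v₁, v₂, v₃, v₄, v₅] : List V).Nodup)
    (a12 : G.Adj v₁ v₂) (a13 : G.Adj v₁ v₃) (a45 : G.Adj v₄ v₅)
    (h14 : s(v₁,v₄) ∈ cE C) (h15 : s(v₁,v₅) ∈ cE C) (h23 : s(v₂,v₃) ∈ cE C) :
    ∃ C', IsCyc G C' ∧ C'.Perm C ∧
      (cE C' ++ [s(v₁,v₄), s(v₁,v₅), s(v₂,v₃)]).Perm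
        (cE C ++ [s(v₁,v₂), s(v₁,v₃), s(v₄,v₅)]) := by
  simp only [List.nodup_cons, List.mem_cons, List.mem_singleton, List.not_mem_nil,
    not_or, or_false, not_false_eq_true, List.nodup_nil, and_true] at hnd
  obtain ⟨⟨n12, n13, n14, n15⟩, ⟨n23, n24, n25⟩, ⟨n34, n35⟩, n45⟩ := hnd
  have hv₁C : v₁ ∈ C := mem_of_mem_cE h14 (by simp)
  obtain ⟨T, hDcyc, hpermD, hpermE⟩ := exists_rot hC hv₁C
  have h14' : s(v₁,v₄) ∈ cE (v₁ :: T) := hpermE.mem_iff.2 h14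
  have h15' : s(v₁,v₅) ∈ cE (v₁ :: T) := hpermE.mem_iff.2 h15
  have h23' : s(v₂,v₃) ∈ cE (v₁ :: T) := hpermE.mem_iff.2 h23
  have hTne : T ≠ [] := by
    rintro rfl
    have := hDcyc.1
    simp at this
  have hv₁T : v₁ ∉ T := by
    have := hDcyc.2.1
    exact (List.nodup_cons.1 this).1
  have hsplit : cE (v₁ :: T) = s(v₁, T.head hTne) :: (pE T ++ [s(T.getLast hTne, v₁)]) := by
    unfold cE cl
    have h1 : (T ++ [v₁]) ≠ [] := by simp
    rw [pE_cons_of_ne v₁ h1]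
    rw [List.head_append, dif_neg (by simpa using hTne)]
    rw [pE_concat T hTne v₁]
  have aux : ∀ w, v₁ ≠ w → s(v₁, w) ∈ cE (v₁ :: T) →
      w = T.head hTne ∨ w = T.getLast hTne := by
    intro w hw hmem
    rw [hsplit] at hmem
    simp only [List.mem_cons, List.mem_append, List.mem_singleton, List.not_mem_nil, or_false] at hmem
    rcases hmem with heq | hm | heq
    · obtain ⟨htriv, h⟩ | ⟨h1, h2⟩ := Sym2.eq_iff.1 heq
      · exact Or.inl h
      · exfalso
        rw [h1] at hv₁T
        exact hv₁T (List.head_mem hTne)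
    · exfalso
      exact hv₁T (mem_of_mem_pE hm (by simp))
    · obtain ⟨h1, h2⟩ | ⟨htriv, h⟩ := Sym2.eq_iff.1 heq
      · exact absurd h2.symm hw
      · exact Or.inr h
  have h23pE : s(v₂, v₃) ∈ pE T := by
    rw [hsplit] at h23'
    simp only [List.mem_cons, List.mem_append, List.mem_singleton, List.not_mem_nil, or_false] at h23'
    rcases h23' with heq | hm | heq
    · exfalso
      obtain ⟨h1, hu1⟩ | ⟨hu2, h2⟩ := Sym2.eq_iff.1 heq
      · exact n12 h1.symm
      · exact n13 h2.symm
    · exact hm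
    · exfalso
      obtain ⟨hu1, h2⟩ | ⟨h1, hu2⟩ := Sym2.eq_iff.1 heq
      · exact n13 h2.symm
      · exact n12 h1.symm
  have c4 := aux v₄ n14 h14'
  have c5 := aux v₅ n15 h15'
  rcases c4 with c4 | c4 <;> rcases c5 with c5 | c5
  · exact absurd (c4.trans c5.symm) n45
  · -- v₄ = head, v₅ = last : swapped roles
    obtain ⟨C', hC1, hC2, hC3⟩ := switch_mid hTne hDcyc c4.symm c5.symm h23pE
      n24 n35 n34 n25 a12 a13 a45.symm
    refine ⟨C', hC1, hC2.trans hpermD, ?_⟩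
    have step1 : (cE C' ++ [s(v₁,v₄), s(v₁,v₅), s(v₂,v₃)]).Perm
        (cE C' ++ [s(v₁,v₅), s(v₁,v₄), s(v₂,v₃)]) :=
      List.Perm.append_left _ (List.Perm.swap _ _ _)
    rw [show s(v₅, v₄) = s(v₄, v₅) from Sym2.eq_swap] at hC3
    exact step1.trans (hC3.trans (List.Perm.append_right _ hpermE))
  · -- v₅ = head, v₄ = last : direct
    obtain ⟨C', hC1, hC2, hC3⟩ := switch_mid hTne hDcyc c5.symm c4.symm h23pE
      n25 n34 n35 n24 a12 a13 a45
    exact ⟨C', hC1, hC2.trans hpermD, hC3.trans (List.Perm.append_right _ hpermE)⟩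
  · exact absurd (c4.trans c5.symm) n45


lemma cl_eq {C : List V} (hC : C ≠ []) : cl C = C ++ [C.head hC] := by
  cases C with
  | nil => exact absurd rfl hC
  | cons a t => simp [cl]

lemma pE_mem_cons {e : Sym2 V} {L : List V} (he : e ∈ pE L) (a : V) : e ∈ pE (a :: L) := by
  cases L with
  | nil => simp at he
  | cons b t => simp [he]

lemma pE_mem_append_right {e : Sym2 V} (X : List V) {Y : List V} (he : e ∈ pE Y) :
    e ∈ pE (X ++ Y) := by
  induction X with
  | nil => simpa using he
  | cons a t ih => exact pE_mem_cons ih a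

lemma pE_mem_append_left {e : Sym2 V} {X : List V} (Y : List V) (he : e ∈ pE X) :
    e ∈ pE (X ++ Y) := by
  induction X with
  | nil => simp at he
  | cons a t ih =>
    cases t with
    | nil => simp at he
    | cons b t' =>
      simp only [pE_cons_cons, List.mem_cons] at he
      rcases he with rfl | he
      · simp
      · simpa using pE_mem_cons (ih he) a

lemma pE_mem_append_cases {e : Sym2 V} {X Y : List V} (hX : X ≠ []) (hY : Y ≠ [])
    (he : e ∈ pE (X ++ Y)) :
    e ∈ pE X ∨ e = s(X.getLast hX, Y.head hY) ∨ e ∈ pE Y := by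
  cases Y with
  | nil => exact absurd rfl hY
  | cons y Y' =>
    rw [pE_append X y Y', pE_concat X hX y] at he
    simp only [List.mem_append, List.mem_singleton] at he
    tauto

lemma cross {G : SimpleGraph V} [Fintype V] [DecidableRel G.Adj] {δ : ℕ}
    (hdeg : ∀ v, δ ≤ G.degree v) (hd3 : 3 ≤ δ) (F : List (Sym2 V))
    (hbound : Fintype.card V + F.length + 1 ≤ 2 * δ)
    {P : List V} (hPne : P ≠ []) (hPnd : P.Nodup) (hPch : List.Chain' G.Adj P)
    (hhead : ∀ w, G.Adj (P.head hPne) w → w ∈ P)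
    (hlast : ∀ w, G.Adj (P.getLast hPne) w → w ∈ P)
    (hF : ∀ e ∈ F, e ∈ pE P) :
    ∃ C, IsCyc G C ∧ C.Perm P ∧ (∀ e ∈ F, e ∈ cE C) := by
  set dflt := P.head hPne with hdflt
  -- P.length ≥ δ + 1
  have hpδ : δ + 1 ≤ P.length := by
    have hsub : insert (P.getLast hPne) (G.neighborFinset (P.getLast hPne)) ⊆ P.toFinset := by
      intro w hw
      rw [Finset.mem_insert] at hw
      rcases hw with rfl | hw
      · exact List.mem_toFinset.2 (List.getLast_mem hPne)
      · exact List.mem_toFinset.2 (hlast w (by simpa using hw))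
    have hcard := Finset.card_le_card hsub
    rw [Finset.card_insert_of_notMem (by simp), List.toFinset_card_of_nodup hPnd] at hcard
    have := hdeg (P.getLast hPne)
    rw [← G.card_neighborFinset_eq_degree] at this
    omega
  have hpn : P.length ≤ Fintype.card V := hPnd.length_le_card
  have hgetD : ∀ {i : ℕ} (hi : i < P.length), P.getD i dflt = P[i]'hi := by
    intro i hi
    exact List.getD_eq_getElem P dflt hi
  have hidx : ∀ w ∈ P, P.getD (P.idxOf w) dflt = w := by
    intro w hw
    rw [hgetD (by exact List.idxOf_lt_length_iff.2 hw)]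
    exact List.getElem_idxOf (List.idxOf_lt_length_iff.2 hw)
  set A := (Finset.range (P.length-1)).filter
    (fun i => G.Adj (P.getLast hPne) (P.getD i dflt)) with hA
  set B := (Finset.range (P.length-1)).filter
    (fun i => G.Adj (P.head hPne) (P.getD (i+1) dflt)) with hB
  set Bad := (Finset.range (P.length-1)).filter
    (fun i => s(P.getD i dflt, P.getD (i+1) dflt) ∈ F) with hBad
  have hAcard : δ ≤ A.card := by
    have := Finset.card_le_card_of_injOn (fun w => P.idxOf w)
      (s := G.neighborFinset (P.getLast hPne)) (t := A) ?_ ?_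
    · rw [G.card_neighborFinset_eq_degree] at this
      exact le_trans (hdeg _) this
    · intro w hw
      rw [Finset.mem_coe, mem_neighborFinset] at hw
      have hwP : w ∈ P := hlast w hw
      have hlt : P.idxOf w < P.length := by exact List.idxOf_lt_length_iff.2 hwP
      have hne' : P.idxOf w ≠ P.length - 1 := by
        intro hcon
        have hth : P.getD (P.idxOf w) dflt = P.getLast hPne := by
          rw [hcon, hgetD (show P.length - 1 < P.length by omega), List.getLast_eq_getElem]
        rw [hidx w hwP] at hth
        rw [hth] at hw
        exact G.irrefl hw
      show P.idxOf w ∈ A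
      rw [hA, Finset.mem_filter, Finset.mem_range]
      exact ⟨by omega, by rw [hidx w hwP]; exact hw⟩
    · intro w hw w' hw' he
      rw [mem_coe, mem_neighborFinset] at hw hw'
      simp only at he
      have h1 := hidx w (hlast w hw)
      have h2 := hidx w' (hlast w' hw')
      rw [← h1, ← h2, he]
  have hBcard : δ ≤ B.card := by
    have := Finset.card_le_card_of_injOn (fun w => P.idxOf w - 1)
      (s := G.neighborFinset (P.head hPne)) (t := B) ?_ ?_
    · rw [G.card_neighborFinset_eq_degree] at this
      exact le_trans (hdeg _) this
    · intro w hw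
      rw [Finset.mem_coe, mem_neighborFinset] at hw
      have hwP : w ∈ P := hhead w hw
      have hlt : P.idxOf w < P.length := by exact List.idxOf_lt_length_iff.2 hwP
      have hne0 : P.idxOf w ≠ 0 := by
        intro hcon
        have hth : P.getD (P.idxOf w) dflt = P.head hPne := by
          rw [hcon, hgetD (show 0 < P.length by omega), List.head_eq_getElem]
        rw [hidx w hwP] at hth
        rw [hth] at hw
        exact G.irrefl hw
      show P.idxOf w - 1 ∈ B
      rw [hB, Finset.mem_filter, Finset.mem_range]
      constructor
      · omega
      · rw [show P.idxOf w - 1 + 1 = P.idxOf w by omega, hidx w hwP]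
        exact hw
    · intro w hw w' hw' he
      rw [mem_coe, mem_neighborFinset] at hw hw'
      have hwP : w ∈ P := hhead w hw
      have hwP' : w' ∈ P := hhead w' hw'
      have hne0 : P.idxOf w ≠ 0 := by
        intro hcon
        have hth : P.getD (P.idxOf w) dflt = P.head hPne := by
          rw [hcon, hgetD (show 0 < P.length by omega), List.head_eq_getElem]
        rw [hidx w hwP] at hth
        rw [hth] at hw
        exact G.irrefl hw
      have hne0' : P.idxOf w' ≠ 0 := by
        intro hcon
        have hth : P.getD (P.idxOf w') dflt = P.head hPne := by
          rw [hcon, hgetD (show 0 < P.length by omega), List.head_eq_getElem]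
        rw [hidx w' hwP'] at hth
        rw [hth] at hw'
        exact G.irrefl hw'
      simp only at he
      have : P.idxOf w = P.idxOf w' := by omega
      rw [← hidx w hwP, ← hidx w' hwP', this]
  have hBadcard : Bad.card ≤ F.length := by
    have h1 : Bad.card ≤ F.toFinset.card := by
      apply Finset.card_le_card_of_injOn (fun i => s(P.getD i dflt, P.getD (i+1) dflt))
      · intro i hi
        rw [Finset.mem_coe, hBad, Finset.mem_filter] at hi
        exact List.mem_toFinset.2 hi.2
      · intro i hi j hj he
        rw [mem_coe, hBad, Finset.mem_filter, Finset.mem_range] at hi hj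
        have hi1 : i < P.length := by omega
        have hi2 : i + 1 < P.length := by omega
        have hj1 : j < P.length := by omega
        have hj2 : j + 1 < P.length := by omega
        simp only at he
        rw [hgetD hi1, hgetD hi2, hgetD hj1, hgetD hj2, Sym2.eq_iff] at he
        rcases he with ⟨h1, h2⟩ | ⟨h1, h2⟩
        · exact (hPnd.getElem_inj_iff).1 h1
        · have e1 : i = j + 1 := (hPnd.getElem_inj_iff).1 h1
          have e2 : i + 1 = j := (hPnd.getElem_inj_iff).1 h2
          omega
    exact le_trans h1 (List.toFinset_card_le F)
  -- find the crossing index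
  have hgood : ((A ∩ B) \ Bad).Nonempty := by
    rw [← Finset.card_pos]
    have h1 : A.card + B.card ≤ (A ∩ B).card + (P.length - 1) := by
      have := Finset.card_inter_add_card_union A B
      have h2 : (A ∪ B).card ≤ P.length - 1 := by
        have : A ∪ B ⊆ Finset.range (P.length-1) := by
          rw [hA, hB]
          intro x hx
          rw [Finset.mem_union, Finset.mem_filter, Finset.mem_filter] at hx
          tauto
        simpa using Finset.card_le_card this
      omega
    have h3 := Finset.le_card_sdiff Bad (A ∩ B)
    omega
  obtain ⟨i, hi⟩ := hgood
  rw [Finset.mem_sdiff, Finset.mem_inter] at hi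
  obtain ⟨⟨hiA, hiB⟩, hiBad⟩ := hi
  rw [hA, Finset.mem_filter, Finset.mem_range] at hiA
  rw [hB, Finset.mem_filter, Finset.mem_range] at hiB
  have hilt : i < P.length - 1 := hiA.1
  have hi1p : i + 1 < P.length := by omega
  have hAdj1 : G.Adj (P.getLast hPne) (P[i]'(by omega)) := by
    have h' := hiA.2
    rwa [hgetD (show i < P.length by omega)] at h'
  have hAdj2 : G.Adj (P.head hPne) (P[i+1]'(by omega)) := by
    have h' := hiB.2
    rwa [hgetD hi1p] at h'
  -- build the cycle
  set X := P.take (i+1) with hX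
  set Y := P.drop (i+1) with hY
  have hXY : X ++ Y = P := List.take_append_drop _ _
  have hXlen : X.length = i + 1 := by rw [hX, List.length_take]; omega
  have hYlen : Y.length = P.length - (i+1) := by rw [hY, List.length_drop]
  have hXne : X ≠ [] := by
    intro hcon
    rw [hcon] at hXlen
    simp at hXlen
  have hYne : Y ≠ [] := by
    intro hcon
    rw [hcon] at hYlen
    simp at hYlen
    omega
  have key : ∀ (j k : ℕ) (h1 : j < X.length) (hjk : j = k) (h2 : k < P.length),
      X[j]'h1 = P[k]'h2 := by
    intro j k h1 hjk h2
    subst hjk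
    have h3 : j < (P.take (i+1)).length := by rw [← hX]; exact h1
    have : X[j]'h1 = (P.take (i+1))[j]'h3 := by
      congr 1
    rw [this]
    exact List.getElem_take
  have hXlast : X.getLast hXne = P[i]'(by omega) := by
    rw [List.getLast_eq_getElem]
    exact key _ i (by omega) (by omega) (by omega)
  have hXhead : X.head hXne = P.head hPne := by
    rw [List.head_eq_getElem, List.head_eq_getElem]
    exact key 0 0 (by omega) rfl (by omega)
  have hYhead : Y.head hYne = P[i+1]'(by omega) := List.head_drop _
  have hYlast : Y.getLast hYne = P.getLast hPne := List.getLast_drop _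
  have hCne : X ++ Y.reverse ≠ [] := by
    intro hcon
    rcases List.append_eq_nil_iff.1 hcon with ⟨h1, _⟩
    exact hXne h1
  have hCperm : (X ++ Y.reverse).Perm P := by
    rw [← hXY]
    exact List.Perm.append_left X (List.reverse_perm Y)
  have hYrne : Y.reverse ≠ [] := by simpa using hYne
  have hChead : (X ++ Y.reverse).head hCne = P.head hPne := by
    rw [List.head_append, dif_neg (by simpa using hXne)]
    exact hXhead
  refine ⟨X ++ Y.reverse, ⟨?_, hCperm.symm.nodup hPnd, ?_⟩, hCperm, ?_⟩
  · have := hCperm.length_eq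
    omega
  · -- the chain
    rw [cl_eq hCne, hChead, List.append_assoc]
    refine chain'_append_of hXne (by simp) (hPch.prefix (List.take_prefix _ _)) ?_ ?_
    · refine chain'_append_of hYrne (by simp)
        (chain_rev (hPch.suffix (List.drop_suffix _ _))) (List.isChain_singleton _) ?_
      have h1 : Y.reverse.getLast hYrne = Y.head hYne := by
        rw [List.getLast_reverse]
      rw [h1, hYhead]
      simp only [List.head_cons]
      exact hAdj2.symm
    · rw [hXlast]
      rw [List.head_append, dif_neg (by simpa using hYrne)]
      have h2 : Y.reverse.head (by simpa using hYne) = Y.getLast hYne := by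
        rw [List.head_reverse]
      rw [h2, hYlast]
      exact hAdj1.symm
  · -- F containment
    intro e he
    have heP : e ∈ pE P := hF e he
    rw [← hXY] at heP
    rcases pE_mem_append_cases hXne hYne heP with hm | hm | hm
    · unfold cE
      rw [cl_eq hCne, List.append_assoc]
      exact pE_mem_append_left _ hm
    · exfalso
      apply hiBad
      rw [hBad, Finset.mem_filter, Finset.mem_range]
      refine ⟨by omega, ?_⟩
      rw [hgetD (show i < P.length by omega), hgetD hi1p, ← hXlast, ← hYhead, ← hm]
      exact he
    · unfold cE
      rw [cl_eq hCne, List.append_assoc]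
      apply pE_mem_append_right
      apply pE_mem_append_left
      rw [pE_reverse]
      simpa using hm

lemma common_nbr {G : SimpleGraph V} [Fintype V] [DecidableRel G.Adj] {δ : ℕ}
    (hdeg : ∀ v, δ ≤ G.degree v) (x y : V) (S : Finset V)
    (hbound : Fintype.card V + S.card + 1 ≤ 2 * δ) :
    ∃ w, w ∉ S ∧ G.Adj x w ∧ G.Adj y w := by
  have h1 := Finset.card_inter_add_card_union (G.neighborFinset x) (G.neighborFinset y)
  have h2 : (G.neighborFinset x ∪ G.neighborFinset y).card ≤ Fintype.card V :=
    Finset.card_le_univ _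
  have hx := hdeg x
  have hy := hdeg y
  rw [← G.card_neighborFinset_eq_degree] at hx hy
  have h3 := Finset.card_sdiff_add_card_inter (G.neighborFinset x ∩ G.neighborFinset y) S
  have h4 : ((G.neighborFinset x ∩ G.neighborFinset y) ∩ S).card ≤ S.card :=
    Finset.card_le_card Finset.inter_subset_right
  obtain ⟨w, hw⟩ := Finset.card_pos.1 (show 0 <
    ((G.neighborFinset x ∩ G.neighborFinset y) \ S).card by omega)
  rw [Finset.mem_sdiff, Finset.mem_inter, mem_neighborFinset, mem_neighborFinset] at hw
  exact ⟨w, hw.2, hw.1.1, hw.1.2⟩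

lemma all_mem_of_big {P : List V} [Fintype V] (hPnd : P.Nodup)
    (hlen : Fintype.card V ≤ P.length) : ∀ v, v ∈ P := by
  intro v
  have h1 : P.toFinset.card = P.length := List.toFinset_card_of_nodup hPnd
  have h2 : P.toFinset = Finset.univ := by
    apply Finset.eq_univ_of_card
    have := hPnd.length_le_card
    omega
  rw [← List.mem_toFinset, h2]
  exact Finset.mem_univ v

lemma grow {G : SimpleGraph V} [Fintype V] [DecidableRel G.Adj] {δ : ℕ}
    (hdeg : ∀ v, δ ≤ G.degree v) (hd3 : 3 ≤ δ)
    (F : List (Sym2 V)) (W : List V)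
    (hFW : ∀ e ∈ F, ∀ v ∈ e, v ∈ W)
    (hboundF : Fintype.card V + F.length + 1 ≤ 2 * δ)
    (hboundW : Fintype.card V + W.length + 2 ≤ 2 * δ) :
    ∀ (k : ℕ) (P : List V), P ≠ [] → P.Nodup → List.Chain' G.Adj P →
      (∀ e ∈ F, e ∈ pE P) → Fintype.card V - P.length ≤ k →
      ∃ C, IsCyc G C ∧ (∀ v, v ∈ C) ∧ (∀ e ∈ F, e ∈ cE C) := by
  intro k
  induction k with
  | zero =>
    intro P hPne hPnd hPch hFP hk
    have hall : ∀ v, v ∈ P := all_mem_of_big hPnd (by omega)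
    obtain ⟨C, hC1, hC2, hC3⟩ := cross hdeg hd3 F hboundF hPne hPnd hPch
      (fun w _ => hall w) (fun w _ => hall w) hFP
    exact ⟨C, hC1, fun v => hC2.mem_iff.2 (hall v), hC3⟩
  | succ k ih =>
    intro P hPne hPnd hPch hFP hk
    by_cases hall : ∀ v, v ∈ P
    · obtain ⟨C, hC1, hC2, hC3⟩ := cross hdeg hd3 F hboundF hPne hPnd hPch
        (fun w _ => hall w) (fun w _ => hall w) hFP
      exact ⟨C, hC1, fun v => hC2.mem_iff.2 (hall v), hC3⟩
    push_neg at hall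
    obtain ⟨v₀, hv₀⟩ := hall
    have hplt : P.length < Fintype.card V := by
      by_contra hcon
      exact hv₀ (all_mem_of_big hPnd (by omega) v₀)
    by_cases hextL : ∃ w, w ∉ P ∧ G.Adj (P.getLast hPne) w
    · obtain ⟨w, hwP, hwa⟩ := hextL
      have hQne : P ++ [w] ≠ [] := by simp
      apply ih (P ++ [w]) hQne ?_ ?_ ?_ ?_
      · refine List.Nodup.append hPnd (by simp) ?_
        intro x hx hy
        rw [List.mem_singleton] at hy
        subst hy
        exact hwP hx
      · exact chain'_append_of hPne (by simp) hPch (List.isChain_singleton _) (by simpa using hwa)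
      · intro e he
        exact pE_mem_append_left _ (hFP e he)
      · have := hk
        simp only [List.length_append, List.length_singleton]
        omega
    by_cases hextH : ∃ w, w ∉ P ∧ G.Adj (P.head hPne) w
    · obtain ⟨w, hwP, hwa⟩ := hextH
      apply ih (w :: P) (by simp) ?_ ?_ ?_ ?_
      · exact List.nodup_cons.2 ⟨hwP, hPnd⟩
      · cases P with
        | nil => exact absurd rfl hPne
        | cons a t =>
          rw [List.Chain', List.isChain_cons_cons]
          exact ⟨hwa.symm, hPch⟩
      · intro e he
        exact pE_mem_cons (hFP e he) w
      · simp only [List.length_cons]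
        omega
    -- no extension possible: close up into a cycle, then absorb a new vertex
    push_neg at hextL hextH
    have hhead : ∀ w, G.Adj (P.head hPne) w → w ∈ P := by
      intro w hw
      by_contra hcon
      exact (hextH w hcon) hw
    have hlast : ∀ w, G.Adj (P.getLast hPne) w → w ∈ P := by
      intro w hw
      by_contra hcon
      exact (hextL w hcon) hw
    -- P.length ≥ δ + 1
    have hpδ : δ + 1 ≤ P.length := by
      have hsub : insert (P.getLast hPne) (G.neighborFinset (P.getLast hPne)) ⊆ P.toFinset := by
        intro w hw
        rw [Finset.mem_insert] at hw
        rcases hw with rfl | hw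
        · exact List.mem_toFinset.2 (List.getLast_mem hPne)
        · exact List.mem_toFinset.2 (hlast w (by simpa using hw))
      have hcard := Finset.card_le_card hsub
      rw [Finset.card_insert_of_notMem (by simp), List.toFinset_card_of_nodup hPnd] at hcard
      have := hdeg (P.getLast hPne)
      rw [← G.card_neighborFinset_eq_degree] at this
      omega
    obtain ⟨C, hC1, hC2, hC3⟩ := cross hdeg hd3 F hboundF hPne hPnd hPch hhead hlast hFP
    have hlenC : C.length = P.length := hC2.length_eq
    have hv₀C : v₀ ∉ C := fun hmem => hv₀ (hC2.mem_iff.1 hmem)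
    -- find u ∈ C adjacent to v₀ with u ∉ W
    have hfind : ∃ u, u ∈ C ∧ G.Adj v₀ u ∧ u ∉ W := by
      have h1 := Finset.card_inter_add_card_union (G.neighborFinset v₀) C.toFinset
      have h2 : (G.neighborFinset v₀ ∪ C.toFinset).card ≤ Fintype.card V :=
        Finset.card_le_univ _
      have hx := hdeg v₀
      rw [← G.card_neighborFinset_eq_degree] at hx
      have hcC : C.toFinset.card = P.length := by
        rw [List.toFinset_card_of_nodup hC1.2.1, hlenC]
      have h3 := Finset.card_sdiff_add_card_inter (G.neighborFinset v₀ ∩ C.toFinset) W.toFinset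
      have h4 := List.toFinset_card_le W
      have h4' : ((G.neighborFinset v₀ ∩ C.toFinset) ∩ W.toFinset).card ≤ W.toFinset.card :=
        Finset.card_le_card Finset.inter_subset_right
      obtain ⟨u, hu⟩ := Finset.card_pos.1 (show 0 <
        ((G.neighborFinset v₀ ∩ C.toFinset) \ W.toFinset).card by omega)
      rw [Finset.mem_sdiff, Finset.mem_inter, mem_neighborFinset, List.mem_toFinset,
        List.mem_toFinset] at hu
      exact ⟨u, hu.1.2, hu.1.1, hu.2⟩
    obtain ⟨u, huC, hadj, huW⟩ := hfind
    obtain ⟨T, hT1, hT2, hT3⟩ := exists_rot hC1 huC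
    -- new path v₀ :: u :: T
    have hchain : List.Chain' G.Adj (v₀ :: u :: T) := by
      rw [List.Chain', List.isChain_cons_cons]
      refine ⟨hadj, ?_⟩
      have := hT1.2.2
      rw [cl_eq (by simp : (u :: T) ≠ [])] at this
      exact this.prefix (List.prefix_append _ _)
    refine ih (v₀ :: u :: T) (by simp) ?nd hchain ?fmem ?len
    case nd =>
      refine List.nodup_cons.2 ⟨?_, hT1.2.1⟩
      intro hmem
      exact hv₀C (hT2.mem_iff.1 hmem)
    case len =>
      have h9 : (u :: T).length = P.length := hT2.length_eq.trans hlenC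
      simp only [List.length_cons] at h9 ⊢
      omega
    case fmem =>
      intro e he
      have heC : e ∈ cE (u :: T) := hT3.mem_iff.2 (hC3 e he)
      unfold cE at heC
      rw [cl_eq (by simp : (u :: T) ≠ [])] at heC
      simp only [List.head_cons] at heC
      rw [pE_concat (u :: T) (by simp) u] at heC
      rcases List.mem_append.1 heC with hm | hm
      · exact pE_mem_cons hm v₀
      · exfalso
        rw [List.mem_singleton] at hm
        apply huW
        apply hFW e he u
        rw [hm]
        simp

lemma connect {G : SimpleGraph V} [Fintype V] [DecidableRel G.Adj] {δ : ℕ}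
    (hdeg : ∀ v, δ ≤ G.degree v) :
    ∀ (comps : List (List V)) (P : List V), P ≠ [] → P.Nodup → List.Chain' G.Adj P →
      (∀ c ∈ comps, c ≠ [] ∧ c.Nodup ∧ List.Chain' G.Adj c) →
      (∀ c ∈ comps, ∀ x ∈ c, x ∉ P) →
      (List.Pairwise (fun c₁ c₂ => ∀ x ∈ c₁, x ∉ c₂) comps) →
      (Fintype.card V + P.length + comps.flatten.length + comps.length + 1 ≤ 2 * δ) →
      ∃ Q, Q ≠ [] ∧ Q.Nodup ∧ List.Chain' G.Adj Q ∧
        (∀ e ∈ pE P, e ∈ pE Q) ∧ (∀ c ∈ comps, ∀ e ∈ pE c, e ∈ pE Q) := by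
  intro comps
  induction comps with
  | nil =>
    intro P hPne hPnd hPch _ _ _ _
    exact ⟨P, hPne, hPnd, hPch, fun e he => he, by simp⟩
  | cons c rest ih =>
    intro P hPne hPnd hPch hcomps hdisjP hpair hbudget
    obtain ⟨hcne, hcnd, hcch⟩ := hcomps c (by simp)
    -- find a connector
    have hS : (P.toFinset ∪ c.toFinset ∪ rest.flatten.toFinset).card ≤
        P.length + c.length + rest.flatten.length := by
      calc (P.toFinset ∪ c.toFinset ∪ rest.flatten.toFinset).card
          ≤ (P.toFinset ∪ c.toFinset).card + rest.flatten.toFinset.card :=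
            Finset.card_union_le _ _
        _ ≤ P.toFinset.card + c.toFinset.card + rest.flatten.toFinset.card := by
            have := Finset.card_union_le P.toFinset c.toFinset
            omega
        _ ≤ P.length + c.length + rest.flatten.length := by
            have h1 := List.toFinset_card_le P
            have h2 := List.toFinset_card_le c
            have h3 := List.toFinset_card_le rest.flatten
            omega
    obtain ⟨w, hwS, hw1, hw2⟩ := common_nbr hdeg (P.getLast hPne) (c.head hcne)
      (P.toFinset ∪ c.toFinset ∪ rest.flatten.toFinset) (by
        simp only [List.flatten_cons, List.length_append, List.length_cons] at hbudget
        omega)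
    simp only [Finset.mem_union, not_or, List.mem_toFinset] at hwS
    obtain ⟨⟨hwP, hwc⟩, hwrest⟩ := hwS
    set Q' := P ++ w :: c with hQ'
    have hQ'ne : Q' ≠ [] := by simp [hQ']
    have hQ'nd : Q'.Nodup := by
      rw [hQ']
      refine List.Nodup.append hPnd (List.nodup_cons.2 ⟨hwc, hcnd⟩) ?_
      intro x hx hy
      rw [List.mem_cons] at hy
      rcases hy with rfl | hy
      · exact hwP hx
      · exact hdisjP c (by simp) x hy hx
    have hQ'ch : List.Chain' G.Adj Q' := by
      rw [hQ']
      refine chain'_append_of hPne (by simp) hPch ?_ ?_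
      · cases c with
        | nil => exact absurd rfl hcne
        | cons a t =>
          rw [List.Chain', List.isChain_cons_cons]
          exact ⟨by simpa using hw2.symm, hcch⟩
      · simpa using hw1
    have hQ'len : Q'.length = P.length + c.length + 1 := by
      rw [hQ']
      simp
      omega
    have hstep : ∀ e ∈ pE c, e ∈ pE Q' := by
      intro e he
      rw [hQ']
      exact pE_mem_append_right _ (pE_mem_cons he w)
    have hstepP : ∀ e ∈ pE P, e ∈ pE Q' := by
      intro e he
      rw [hQ']
      exact pE_mem_append_left _ he
    obtain ⟨Q, hQne, hQnd, hQch, hQP, hQcomps⟩ := ih Q' hQ'ne hQ'nd hQ'ch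
      (fun c' hc' => hcomps c' (by simp [hc']))
      (by
        intro c' hc' x hx hmem
        rw [hQ', List.mem_append, List.mem_cons] at hmem
        rcases hmem with hm | rfl | hm
        · exact hdisjP c' (by simp [hc']) x hx hm
        · exact hwrest (List.mem_flatten.2 ⟨c', hc', hx⟩)
        · exact (List.pairwise_cons.1 hpair).1 c' hc' x hm hx)
      ((List.pairwise_cons.1 hpair).2)
      (by
        simp only [List.flatten_cons, List.length_append, List.length_cons] at hbudget
        omega)
    refine ⟨Q, hQne, hQnd, hQch, fun e he => hQP e (hstepP e he), ?_⟩
    intro c' hc' e he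
    rw [List.mem_cons] at hc'
    rcases hc' with rfl | hc'
    · exact hQP e (hstep e he)
    · exact hQcomps c' hc' e he

def bwV (b : V × V × V × V × V) : List V :=
  [b.1, b.2.1, b.2.2.1, b.2.2.2.1, b.2.2.2.2]
def bwLow (b : V × V × V × V × V) : List (Sym2 V) :=
  [s(b.1, b.2.2.2.1), s(b.1, b.2.2.2.2), s(b.2.1, b.2.2.1)]
def bwHigh (b : V × V × V × V × V) : List (Sym2 V) :=
  [s(b.1, b.2.1), s(b.1, b.2.2.1), s(b.2.2.2.1, b.2.2.2.2)]

lemma bwLow_vmem {b : V × V × V × V × V} {e : Sym2 V} (he : e ∈ bwLow b) {x : V}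
    (hx : x ∈ e) : x ∈ bwV b := by
  obtain ⟨w1, w2, w3, w4, w5⟩ := b
  simp only [bwLow, List.mem_cons, List.not_mem_nil, or_false] at he
  rcases he with rfl | rfl | rfl <;>
    (rcases Sym2.mem_iff.1 hx with rfl | rfl <;> simp [bwV])

lemma iter {G : SimpleGraph V} {r : ℕ} (χ : Sym2 V → Fin r) (k : Fin r) :
    ∀ (bs : List (V × V × V × V × V)) (C : List V), IsCyc G C → (∀ v, v ∈ C) →
    (∀ b ∈ bs, (bwV b).Nodup ∧ G.Adj b.1 b.2.1 ∧ G.Adj b.1 b.2.2.1 ∧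
      G.Adj b.2.2.2.1 b.2.2.2.2) →
    List.Pairwise (fun b b' => ∀ x ∈ bwV b, x ∉ bwV b') bs →
    (∀ b ∈ bs, ∀ e ∈ bwLow b, e ∈ cE C) →
    (∀ b ∈ bs, (bwLow b).countP (fun e => χ e = k) + 1 ≤
      (bwHigh b).countP (fun e => χ e = k)) →
    ∃ C', IsCyc G C' ∧ (∀ v, v ∈ C') ∧
      (cE C).countP (fun e => χ e = k) + bs.length ≤
        (cE C').countP (fun e => χ e = k) := by
  intro bs
  induction bs with
  | nil =>
    intro C hC hall _ _ _ _
    exact ⟨C, hC, hall, by simp⟩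
  | cons b rest ih =>
    intro C hC hall hprops hpair hin hgain
    obtain ⟨hnd, a12, a13, a45⟩ := hprops b (by simp)
    obtain ⟨w1, w2, w3, w4, w5⟩ := b
    have h14 : s(w1, w4) ∈ cE C :=
      hin (w1,w2,w3,w4,w5) (by simp) s(w1, w4) (by simp [bwLow])
    have h15 : s(w1, w5) ∈ cE C :=
      hin (w1,w2,w3,w4,w5) (by simp) s(w1, w5) (by simp [bwLow])
    have h23 : s(w2, w3) ∈ cE C :=
      hin (w1,w2,w3,w4,w5) (by simp) s(w2, w3) (by simp [bwLow])
    obtain ⟨C2, hC2, hC2p, hC2e⟩ := switch_main hC (by simpa [bwV] using hnd) a12 a13 a45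
      h14 h15 h23
    have hall2 : ∀ v, v ∈ C2 := fun v => hC2p.mem_iff.2 (hall v)
    -- count gain at this step
    have hcnt : (cE C2).countP (fun e => χ e = k) +
        (bwLow (w1,w2,w3,w4,w5)).countP (fun e => χ e = k) =
        (cE C).countP (fun e => χ e = k) +
        (bwHigh (w1,w2,w3,w4,w5)).countP (fun e => χ e = k) := by
      have := hC2e.countP_eq (fun e => χ e = k)
      simpa [List.countP_append, bwLow, bwHigh] using this
    -- memberships preserved for the rest
    have hinrest : ∀ b' ∈ rest, ∀ e ∈ bwLow b', e ∈ cE C2 := by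
      intro b' hb' e he
      have heC : e ∈ cE C := hin b' (by simp [hb']) e he
      have hmem : e ∈ cE C2 ++ [s(w1,w4), s(w1,w5), s(w2,w3)] :=
        hC2e.mem_iff.2 (by simp [heC])
      rw [List.mem_append] at hmem
      rcases hmem with hm | hm
      · exact hm
      · exfalso
        have hdisj := (List.pairwise_cons.1 hpair).1 b' hb'
        -- e has an endpoint in bwV b' but equals an edge with endpt w1 or w2
        simp only [List.mem_cons, List.not_mem_nil, or_false] at hm
        have hx : w1 ∈ e ∨ w2 ∈ e := by
          rcases hm with rfl | rfl | rfl
          · exact Or.inl (by simp)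
          · exact Or.inl (by simp)
          · exact Or.inr (by simp)
        rcases hx with hx | hx
        · exact hdisj w1 (by simp [bwV]) (bwLow_vmem he hx)
        · exact hdisj w2 (by simp [bwV]) (bwLow_vmem he hx)
    obtain ⟨C', hC', hall', hcnt'⟩ := ih C2 hC2 hall2
      (fun b' hb' => hprops b' (by simp [hb']))
      ((List.pairwise_cons.1 hpair).2)
      hinrest
      (fun b' hb' => hgain b' (by simp [hb']))
    refine ⟨C', hC', hall', ?_⟩
    have hg := hgain _ (show (w1,w2,w3,w4,w5) ∈ (w1,w2,w3,w4,w5) :: rest by simp)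
    simp only [List.length_cons]
    omega

lemma flatMap_len {α β : Type*} (L : List α) (f : α → List β) (cc : ℕ)
    (h : ∀ x ∈ L, (f x).length = cc) : (L.flatMap f).length = cc * L.length := by
  induction L with
  | nil => simp
  | cons x L ih =>
    simp only [List.flatMap_cons, List.length_append, List.length_cons,
      h x (by simp), ih (fun y hy => h y (by simp [hy]))]
    ring

lemma flatten_flatMap_len {α β : Type*} (L : List α) (f : α → List (List β)) (cc : ℕ)
    (h : ∀ x ∈ L, ((f x).flatten).length = cc) :
    ((L.flatMap f).flatten).length = cc * L.length := by
  induction L with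
  | nil => simp
  | cons x L ih =>
    simp only [List.flatMap_cons, List.flatten_append, List.length_append,
      List.length_cons, h x (by simp), ih (fun y hy => h y (by simp [hy]))]
    ring

def gcomp (w : V × V × V × V × V) : List (List V) :=
  [[w.2.2.2.1, w.1, w.2.2.2.2], [w.2.1, w.2.2.1]]

lemma gcomp_sub {w : V × V × V × V × V} : ∀ cc ∈ gcomp w, ∀ x ∈ cc, x ∈ bwV w := by
  intro cc hcc x hx
  simp only [gcomp, List.mem_cons, List.not_mem_nil, or_false] at hcc
  rcases hcc with rfl | rfl <;>
    (simp only [List.mem_cons, List.not_mem_nil, or_false] at hx; simp only [bwV,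
      List.mem_cons, List.not_mem_nil, or_false]; tauto)

lemma pairwise_comps (bs : List (V × V × V × V × V))
    (hnd : ∀ w ∈ bs, (bwV w).Nodup)
    (hpair : List.Pairwise (fun b1 b2 => ∀ x ∈ bwV b1, x ∉ bwV b2) bs) :
    List.Pairwise (fun c₁ c₂ => ∀ x ∈ c₁, x ∉ c₂) (bs.flatMap gcomp) := by
  induction bs with
  | nil => simp
  | cons w rest ih =>
    rw [List.flatMap_cons, List.pairwise_append]
    refine ⟨?_, ih (fun w' hw' => hnd w' (by simp [hw'])) (List.pairwise_cons.1 hpair).2, ?_⟩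
    · have hnd5 := hnd w (by simp)
      simp only [gcomp, List.pairwise_cons, List.not_mem_nil, List.mem_singleton,
        forall_eq, List.Pairwise.nil, and_true]
      constructor
      · intro x hx hx2
        simp only [List.mem_cons, List.not_mem_nil, or_false] at hx hx2
        simp only [bwV, List.nodup_cons, List.mem_cons, List.not_mem_nil, or_false,
          List.nodup_nil, and_true, not_or, not_false_eq_true] at hnd5
        rcases hx with rfl | rfl | rfl <;> rcases hx2 with h | h <;> simp_all
      · intro c hc
        simp at hc
    · intro c1 hc1 c2 hc2 x hx1 hx2
      rw [List.mem_flatMap] at hc2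
      obtain ⟨w', hw', hc2⟩ := hc2
      exact (List.pairwise_cons.1 hpair).1 w' hw' x (gcomp_sub c1 hc1 x hx1)
        (gcomp_sub c2 hc2 x hx2)

lemma gcomp_good {G : SimpleGraph V} {w : V × V × V × V × V} (hnd5 : (bwV w).Nodup)
    (hA41 : G.Adj w.2.2.2.1 w.1) (hA15 : G.Adj w.1 w.2.2.2.2) (hA23 : G.Adj w.2.1 w.2.2.1) :
    ∀ cc ∈ gcomp w, cc ≠ [] ∧ cc.Nodup ∧ List.Chain' G.Adj cc := by
  intro cc hcc
  simp only [bwV, List.nodup_cons, List.mem_cons, List.not_mem_nil, or_false,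
    List.nodup_nil, and_true, not_or, not_false_eq_true] at hnd5
  obtain ⟨⟨n12, n13, n14, n15⟩, ⟨n23, n24, n25⟩, ⟨n34, n35⟩, n45⟩ := hnd5
  simp only [gcomp, List.mem_cons, List.not_mem_nil, or_false] at hcc
  rcases hcc with rfl | rfl
  · refine ⟨by simp, ?_, ?_⟩
    · simp only [List.nodup_cons, List.mem_cons, List.not_mem_nil, or_false,
        List.nodup_nil, and_true, not_or, not_false_eq_true]
      exact ⟨⟨fun h => n14 h.symm, fun h => n45 h⟩, fun h => n15 h⟩
    · rw [List.Chain', List.isChain_cons_cons]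
      exact ⟨hA41, List.isChain_pair.2 hA15⟩
  · refine ⟨by simp, ?_, ?_⟩
    · simp only [List.nodup_cons, List.not_mem_nil, List.mem_singleton,
        List.nodup_nil, and_true, not_false_eq_true]
      exact n23
    · exact List.isChain_pair.2 hA23


end HamAux

open HamAux

/-- If every Hamilton cycle of `G` has color-bias less than `m`, then every family of
pairwise vertex-disjoint bad bowties in `G` (given by five vertex functions whose combined
values are `5t` distinct vertices) has size at most `2rm`. -/
theorem statement5 {V : Type*} [Fintype V] [DecidableEq V] (r m : ℕ) (hr : 2 ≤ r) (hm : 1 ≤ m)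
    (G : SimpleGraph V) [DecidableRel G.Adj] (χ : Sym2 V → Fin r)
    (hδ : (Fintype.card V : ℚ) / 2 + 6 * r ^ 2 * m ≤ (G.minDegree : ℚ))
    (hbias : ∀ (v : V) (H : G.Walk v v), H.IsHamiltonianCycle →
      ∀ i : Fin r,
        |((H.edges.filter (fun e => χ e = i)).length : ℚ) - (Fintype.card V : ℚ) / r| < m)
    (t : ℕ) (a b c d e : Fin t → V)
    (hdistinct : Function.Injective
      fun p : Fin t × Fin 5 => ![a p.1, b p.1, c p.1, d p.1, e p.1] p.2)
    (hbad : ∀ i : Fin t, IsBowtie G (a i) (b i) (c i) (d i) (e i) ∧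
      ∃ k : Fin r, bowtieF χ (a i) (b i) (c i) (d i) (e i) k ≠ 0) :
    t ≤ 2 * r * m := by
  classical
  by_contra hcon
  push_neg at hcon
  have ht1 : 1 ≤ t := by omega
  have hVne : Nonempty V := ⟨a ⟨0, by omega⟩⟩
  have hdeg : ∀ v, G.minDegree ≤ G.degree v := fun v => G.minDegree_le_degree v
  have hr2 : 4 ≤ r ^ 2 := by nlinarith
  have hQ2 : (Fintype.card V : ℚ) + 12 * (r : ℚ) ^ 2 * m ≤ 2 * G.minDegree := by
    push_cast at hδ ⊢
    linarith
  have hN : Fintype.card V + 12 * r ^ 2 * m ≤ 2 * G.minDegree := by exact_mod_cast hQ2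
  have h48 : Fintype.card V + 48 * m ≤ 2 * G.minDegree := by
    have h1 : 48 * m ≤ 12 * r ^ 2 * m := by nlinarith
    omega
  have hn1 : 1 ≤ Fintype.card V := Fintype.card_pos
  have hδn : G.minDegree + 1 ≤ Fintype.card V := by
    have h1 := hdeg (Classical.arbitrary V)
    have h2 : G.degree (Classical.arbitrary V) < Fintype.card V := G.degree_lt_card_verts _
    omega
  have hd3 : 3 ≤ G.minDegree := by omega
  -- ### pigeonhole on colors
  choose ks hks using fun i => (hbad i).2
  have hfib : ∃ k : Fin r, 2 * m + 1 ≤ (Finset.univ.filter (fun i => ks i = k)).card := by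
    by_contra hno
    push_neg at hno
    have hsum := Finset.card_eq_sum_card_fiberwise
      (f := ks) (s := Finset.univ) (t := Finset.univ) (fun x _ => Finset.mem_univ _)
    have hle : ∑ k : Fin r, ((Finset.univ.filter (fun i => ks i = k)).card) ≤
        ∑ _k : Fin r, 2 * m :=
      Finset.sum_le_sum (fun k _ => by have := hno k; omega)
    simp only [Finset.card_univ, Fintype.card_fin, Finset.sum_const, smul_eq_mul] at hsum hle
    have hrr : r * (2 * m) = 2 * r * m := by ring
    omega
  obtain ⟨k, hk⟩ := hfib
  obtain ⟨S, hSsub, hScard⟩ := Finset.exists_subset_card_eq hk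
  have hSks : ∀ i ∈ S, ks i = k := by
    intro i hi
    have := hSsub hi
    rw [Finset.mem_filter] at this
    exact this.2
  -- ### normalized bowtie tuples
  set vlist : Fin t → List V := fun i => [a i, b i, c i, d i, e i] with hvlist
  have hbF : ∀ i : Fin t, bowtieF χ (a i) (b i) (c i) (d i) (e i) k =
      ((bwHigh (a i, b i, c i, d i, e i)).countP (fun e' => χ e' = k) : ℤ) -
      ((bwLow (a i, b i, c i, d i, e i)).countP (fun e' => χ e' = k) : ℤ) := by
    intro i
    simp only [bowtieF, bwHigh, bwLow, List.countP_cons, List.countP_nil,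
      decide_eq_true_eq]
    push_cast [apply_ite (fun (x : ℕ) => (x : ℤ))]
    ring
  set norm : Fin t → V × V × V × V × V := fun i =>
    if 0 < bowtieF χ (a i) (b i) (c i) (d i) (e i) k then (a i, b i, c i, d i, e i)
    else (a i, d i, e i, b i, c i) with hnormdef
  set bs : List (V × V × V × V × V) := S.toList.map norm with hbs
  have hbslen : bs.length = 2 * m + 1 := by
    rw [hbs, List.length_map, Finset.length_toList, hScard]
  -- membership facts
  have hvmem : ∀ i x, x ∈ bwV (norm i) → x ∈ vlist i := by
    intro i x hx
    by_cases hpos : 0 < bowtieF χ (a i) (b i) (c i) (d i) (e i) k <;>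
      simp only [hnormdef, if_pos, if_neg, hpos, if_true, if_false, bwV] at hx <;>
      simp only [hvlist, List.mem_cons, List.not_mem_nil, or_false] at hx ⊢ <;> tauto
  have hvf : ∀ i x, x ∈ vlist i → ∃ p : Fin 5, ![a i, b i, c i, d i, e i] p = x := by
    intro i x hx
    simp only [hvlist, List.mem_cons, List.not_mem_nil, or_false] at hx
    rcases hx with rfl | rfl | rfl | rfl | rfl
    exacts [⟨0, rfl⟩, ⟨1, rfl⟩, ⟨2, rfl⟩, ⟨3, rfl⟩, ⟨4, rfl⟩]
  have hdisj : ∀ i j : Fin t, i ≠ j → ∀ x ∈ vlist i, x ∉ vlist j := by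
    intro i j hij x hxi hxj
    obtain ⟨p, hp⟩ := hvf i x hxi
    obtain ⟨q, hq⟩ := hvf j x hxj
    have heq : (i, p) = (j, q) := hdistinct (hp.trans hq.symm)
    exact hij (congrArg Prod.fst heq)
  -- per-bowtie structural facts
  have hbw : ∀ i : Fin t, (bwV (norm i)).Nodup ∧
      G.Adj (norm i).1 (norm i).2.1 ∧ G.Adj (norm i).1 (norm i).2.2.1 ∧
      G.Adj (norm i).2.2.2.1 (norm i).2.2.2.2 ∧
      G.Adj (norm i).2.2.2.1 (norm i).1 ∧ G.Adj (norm i).1 (norm i).2.2.2.2 ∧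
      G.Adj (norm i).2.1 (norm i).2.2.1 := by
    intro i
    obtain ⟨hnd5, A12, A13, A14, A15, A23, A45⟩ := (hbad i).1
    by_cases hpos : 0 < bowtieF χ (a i) (b i) (c i) (d i) (e i) k
    · simp only [hnormdef, if_pos hpos]
      exact ⟨hnd5, A12, A13, A45, A14.symm, A15, A23⟩
    · simp only [hnormdef, if_neg hpos]
      refine ⟨?_, A14, A15, A23, A12.symm, A13, A45⟩
      have hperm : ([a i, d i, e i, b i, c i] : List V).Perm [a i, b i, c i, d i, e i] := by
        refine List.Perm.cons _ ?_
        have := List.perm_append_comm (l₁ := [d i, e i]) (l₂ := [b i, c i])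
        simpa using this
      exact hperm.symm.nodup hnd5
  -- gain
  have hgain : ∀ i ∈ S, (bwLow (norm i)).countP (fun e' => χ e' = k) + 1 ≤
      (bwHigh (norm i)).countP (fun e' => χ e' = k) := by
    intro i hi
    have hne0 : bowtieF χ (a i) (b i) (c i) (d i) (e i) k ≠ 0 := by
      have := hks i
      rwa [hSks i hi] at this
    have hEq := hbF i
    by_cases hpos : 0 < bowtieF χ (a i) (b i) (c i) (d i) (e i) k
    · simp only [hnormdef, if_pos hpos]
      omega
    · simp only [hnormdef, if_neg hpos]
      have hneg : bowtieF χ (a i) (b i) (c i) (d i) (e i) k < 0 := by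
        rcases lt_trichotomy (bowtieF χ (a i) (b i) (c i) (d i) (e i) k) 0 with h | h | h
        · exact h
        · exact absurd h hne0
        · exact absurd h hpos
      have e1 : bwLow ((a i, d i, e i, b i, c i) : V × V × V × V × V) =
          bwHigh (a i, b i, c i, d i, e i) := rfl
      have e2 : bwHigh ((a i, d i, e i, b i, c i) : V × V × V × V × V) =
          bwLow (a i, b i, c i, d i, e i) := rfl
      rw [e1, e2]
      omega
  -- ### components
  set comps : List (List V) := bs.flatMap gcomp with hcomps
  set W : List V := bs.flatMap bwV with hW
  set F : List (Sym2 V) := bs.flatMap bwLow with hF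
  have hWlen : W.length = 5 * bs.length := flatMap_len bs bwV 5 (fun x _ => rfl)
  have hFlen : F.length = 3 * bs.length := flatMap_len bs bwLow 3 (fun x _ => rfl)
  have hcompslen : comps.length = 2 * bs.length := flatMap_len bs gcomp 2 (fun x _ => rfl)
  have hflatlen : comps.flatten.length = 5 * bs.length :=
    flatten_flatMap_len bs gcomp 5 (fun x _ => rfl)
  have hWmem : ∀ w ∈ bs, ∀ x ∈ bwV w, x ∈ W := by
    intro w hw x hx
    rw [hW, List.mem_flatMap]
    exact ⟨w, hw, hx⟩
  -- disjointness of normalized tuples along bs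
  have hbspair : List.Pairwise (fun b1 b2 => ∀ x ∈ bwV b1, x ∉ bwV b2) bs := by
    rw [hbs, List.pairwise_map]
    have hnod := S.nodup_toList
    refine List.Pairwise.imp_of_mem ?_ hnod
    intro i j hi hj hij x hxi hxj
    exact hdisj i j hij x (hvmem i x hxi) (hvmem j x hxj)
  -- bs facts via membership
  have hbsfacts : ∀ w ∈ bs, (bwV w).Nodup ∧ G.Adj w.1 w.2.1 ∧ G.Adj w.1 w.2.2.1 ∧
      G.Adj w.2.2.2.1 w.2.2.2.2 ∧ G.Adj w.2.2.2.1 w.1 ∧ G.Adj w.1 w.2.2.2.2 ∧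
      G.Adj w.2.1 w.2.2.1 := by
    intro w hw
    rw [hbs, List.mem_map] at hw
    obtain ⟨i, hi, rfl⟩ := hw
    exact hbw i
  -- choose a seed vertex z ∉ W
  have hzex : ∃ z : V, z ∉ W := by
    by_contra hno
    push_neg at hno
    have hsub : (Finset.univ : Finset V) ⊆ W.toFinset := fun x _ => List.mem_toFinset.2 (hno x)
    have h1 := Finset.card_le_card hsub
    have h2 := List.toFinset_card_le W
    rw [Finset.card_univ] at h1
    omega
  obtain ⟨z, hz⟩ := hzex
  -- ### connect components into one path
  obtain ⟨Q, hQne, hQnd, hQch, hQz, hQcomps⟩ := connect hdeg comps [z] (by simp)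
    (by simp) (by simp [List.Chain'])
    (by
      intro cc hcc
      rw [hcomps, List.mem_flatMap] at hcc
      obtain ⟨w, hw, hcc⟩ := hcc
      obtain ⟨hnd5, hA12, hA13, hA45, hA41, hA15', hA23⟩ := hbsfacts w hw
      exact gcomp_good hnd5 hA41 hA15' hA23 cc hcc)
    (by
      intro cc hcc x hx hxz
      rw [List.mem_singleton] at hxz
      subst hxz
      rw [hcomps, List.mem_flatMap] at hcc
      obtain ⟨w, hw, hcc⟩ := hcc
      exact hz (hWmem w hw x (gcomp_sub cc hcc x hx)))
    (by
      rw [hcomps]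
      exact pairwise_comps bs (fun w hw => (hbsfacts w hw).1) hbspair)
    (by
      simp only [List.length_singleton]
      omega)
  -- F is contained in pE Q
  have hFQ : ∀ e' ∈ F, e' ∈ pE Q := by
    intro e' he'
    rw [hF, List.mem_flatMap] at he'
    obtain ⟨w, hw, he'⟩ := he'
    simp only [bwLow, List.mem_cons, List.not_mem_nil, or_false] at he'
    rcases he' with rfl | rfl | rfl
    · refine hQcomps [w.2.2.2.1, w.1, w.2.2.2.2] ?_ _ ?_
      · rw [hcomps, List.mem_flatMap]
        exact ⟨w, hw, by simp [gcomp]⟩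
      · rw [show s(w.1, w.2.2.2.1) = s(w.2.2.2.1, w.1) from Sym2.eq_swap]
        simp [pE]
    · refine hQcomps [w.2.2.2.1, w.1, w.2.2.2.2] ?_ _ ?_
      · rw [hcomps, List.mem_flatMap]
        exact ⟨w, hw, by simp [gcomp]⟩
      · simp [pE]
    · refine hQcomps [w.2.1, w.2.2.1] ?_ _ ?_
      · rw [hcomps, List.mem_flatMap]
        exact ⟨w, hw, by simp [gcomp]⟩
      · simp [pE]
  -- ### grow to a Hamilton cycle containing F
  obtain ⟨C₀, hC₀, hC₀all, hC₀F⟩ := grow hdeg hd3 F W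
    (by
      intro e' he' v hv
      rw [hF, List.mem_flatMap] at he'
      obtain ⟨w, hw, he'⟩ := he'
      exact hWmem w hw v (bwLow_vmem he' hv))
    (by omega) (by omega) (Fintype.card V) Q hQne hQnd hQch hFQ (by omega)
  -- ### switch all bowties
  obtain ⟨C₁, hC₁, hC₁all, hcnt⟩ := iter χ k bs C₀ hC₀ hC₀all
    (fun w hw => ⟨(hbsfacts w hw).1, (hbsfacts w hw).2.1, (hbsfacts w hw).2.2.1,
      (hbsfacts w hw).2.2.2.1⟩)
    hbspair
    (by
      intro w hw e' he'
      apply hC₀F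
      rw [hF, List.mem_flatMap]
      exact ⟨w, hw, he'⟩)
    (by
      intro w hw
      rw [hbs, List.mem_map] at hw
      obtain ⟨i, hi, rfl⟩ := hw
      exact hgain i (Finset.mem_toList.1 hi))
  -- ### contradiction via bias
  obtain ⟨v₀, H₀, hH₀, hE₀⟩ := isCyc_to_walk hC₀ hC₀all
  obtain ⟨v₁, H₁, hH₁, hE₁⟩ := isCyc_to_walk hC₁ hC₁all
  have hb₀ := hbias v₀ H₀ hH₀ k
  have hb₁ := hbias v₁ H₁ hH₁ k
  have hc₀ : (H₀.edges.filter (fun e' => χ e' = k)).length =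
      (cE C₀).countP (fun e' => χ e' = k) := by
    rw [List.countP_eq_length_filter]
    exact (hE₀.filter _).length_eq
  have hc₁ : (H₁.edges.filter (fun e' => χ e' = k)).length =
      (cE C₁).countP (fun e' => χ e' = k) := by
    rw [List.countP_eq_length_filter]
    exact (hE₁.filter _).length_eq
  rw [hc₀, abs_lt] at hb₀
  rw [hc₁, abs_lt] at hb₁
  have hstep : ((cE C₀).countP (fun e' => χ e' = k) : ℚ) + (2 * m + 1) ≤
      ((cE C₁).countP (fun e' => χ e' = k) : ℚ) := by
    rw [hbslen] at hcnt
    exact_mod_cast hcnt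
  have hmQ : (1 : ℚ) ≤ m := by exact_mod_cast hm
  linarith [hb₀.1, hb₀.2, hb₁.1, hb₁.2]
end

section
/- Let G be a graph and let a_i, b_i, c_i, d_i, e_i (1 ≤ i ≤ t) be 5t distinct vertices of G such that for each i all six edges a_ib_i, a_ic_i, a_id_i, a_ie_i, b_ic_i, d_ie_i belong to G (so a_ib_ic_id_ie_i are pairwise vertex-disjoint bowtie subgraphs of G). If H₁ is a Hamilton cycle of G containing all the edges a_ib_i, a_ic_i, d_ie_i for 1 ≤ i ≤ t, then the spanning subgraph H₂ with edge set (E(H₁) ∖ {a_ib_i, a_ic_i, d_ie_i : 1 ≤ i ≤ t}) ∪ {b_ic_i, a_id_i, a_ie_i : 1 ≤ i ≤ t} is also a Hamilton cycle of G. -/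
open SimpleGraph

lemma exists_split_of_mem_edges {V : Type*} {G : SimpleGraph V} {u w p q : V}
    (P : G.Walk u w) (hm : s(p,q) ∈ P.edges) :
    (∃ (P₁ : G.Walk u p) (h : G.Adj p q) (P₂ : G.Walk q w), P = P₁.append (Walk.cons h P₂)) ∨
    (∃ (P₁ : G.Walk u q) (h : G.Adj q p) (P₂ : G.Walk p w), P = P₁.append (Walk.cons h P₂)) := by
  induction P with
  | nil => simp at hm
  | @cons u' v' w' h P ih =>
    rw [Walk.edges_cons, List.mem_cons] at hm
    rcases hm with hm | hm
    · rw [Sym2.eq_iff] at hm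
      rcases hm with ⟨rfl, rfl⟩ | ⟨rfl, rfl⟩
      · exact Or.inl ⟨Walk.nil, h, P, by simp⟩
      · exact Or.inr ⟨Walk.nil, h, P, by simp⟩
    · rcases ih hm with ⟨P₁, h', P₂, rfl⟩ | ⟨P₁, h', P₂, rfl⟩
      · exact Or.inl ⟨Walk.cons h P₁, h', P₂, by simp⟩
      · exact Or.inr ⟨Walk.cons h P₁, h', P₂, by simp⟩

lemma bowtie_swap {V : Type*} [DecidableEq V] {G : SimpleGraph V} {a b c d e : V}
    (hab : a ≠ b) (hac : a ≠ c) (had : a ≠ d) (hae : a ≠ e)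
    (hbc : b ≠ c) (hbd : b ≠ d) (hbe : b ≠ e) (hcd : c ≠ d) (hce : c ≠ e) (hde' : d ≠ e)
    (gbc : G.Adj b c) (gad : G.Adj a d) (gae : G.Adj a e)
    {v : V} {H : G.Walk v v} (hH : H.IsHamiltonianCycle)
    (e1 : s(a,b) ∈ H.edges) (e2 : s(a,c) ∈ H.edges) (e3 : s(d,e) ∈ H.edges) :
    ∃ (u : V) (N : G.Walk u u), N.IsHamiltonianCycle ∧
      ∀ ed : Sym2 V, (ed ∈ N.edges ↔
        (ed ∈ H.edges ∧ ed ≠ s(a,b) ∧ ed ≠ s(a,c) ∧ ed ≠ s(d,e)) ∨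
        ed = s(b,c) ∨ ed = s(a,d) ∨ ed = s(a,e)) := by
  classical
  have ha : a ∈ H.support := hH.mem_support a
  have hCcyc : (H.rotate a ha).IsCycle := hH.isCycle.rotate ha
  obtain ⟨x, hax, W, hCeq⟩ := Walk.not_nil_iff.mp hCcyc.not_nil
  have hWnn : ¬ W.reverse.Nil := Walk.not_nil_of_ne (Ne.symm hax.ne')
  obtain ⟨y, hay, U, hUeq⟩ := Walk.not_nil_iff.mp hWnn
  have hW : W = U.reverse.append (Walk.cons hay.symm Walk.nil) := by
    rw [← W.reverse_reverse, hUeq, Walk.reverse_cons]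
  rw [hW] at hCeq
  set P : G.Walk x y := U.reverse with hPdef
  clear_value P
  clear hUeq hW hWnn hPdef U
  -- membership in H.edges via the decomposition
  have hCedges : ∀ ed, ed ∈ H.edges ↔
      (ed = s(a,x) ∨ ed ∈ P.edges ∨ ed = s(y,a)) := by
    intro ed
    rw [← (H.rotate_edges a ha).perm.mem_iff (a := ed), hCeq]
    simp [Walk.edges_append, or_assoc, Sym2.eq_swap]
  -- support tail facts
  have hCtail : (H.rotate a ha).support.tail = P.support ++ [a] := by
    rw [hCeq]
    simp [Walk.support_append]
  have hCtnd : (P.support ++ [a]).Nodup := by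
    rw [← hCtail]
    exact ((Walk.isCycle_def _).mp hCcyc).2.2
  have haP : a ∉ P.support := by
    intro h
    exact (List.disjoint_of_nodup_append hCtnd) h (by simp)
  have hPnd : P.support.Nodup := (List.nodup_append.mp hCtnd).1
  -- identify x and y with b and c
  have hxyne : ∀ z, z ≠ a → s(a, z) ∈ H.edges → z = x ∨ z = y := by
    intro z hz hmem
    rw [hCedges] at hmem
    rcases hmem with h | h | h
    · left
      rw [Sym2.eq_iff] at h
      rcases h with ⟨-, h⟩ | ⟨h, -⟩
      · exact h
      · exact absurd h hax.ne
    · exact absurd (Walk.fst_mem_support_of_mem_edges P h) haP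
    · right
      rw [Sym2.eq_iff] at h
      rcases h with ⟨-, h⟩ | ⟨-, h⟩
      · exact absurd h hz
      · exact h
  have hxy : (x = b ∧ y = c) ∨ (x = c ∧ y = b) := by
    have hb := hxyne b (Ne.symm hab) e1
    have hc := hxyne c (Ne.symm hac) e2
    rcases hb with rfl | rfl <;> rcases hc with h | h
    · exact absurd h (Ne.symm hbc)
    · exact Or.inl ⟨rfl, h.symm⟩
    · exact Or.inr ⟨h.symm, rfl⟩
    · exact absurd h (Ne.symm hbc)
  -- locate the edge d e inside P
  have hdeP : s(d,e) ∈ P.edges := by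
    have := (hCedges s(d,e)).mp e3
    rcases this with h | h | h
    · rw [Sym2.eq_iff] at h
      rcases h with ⟨h, -⟩ | ⟨-, h⟩
      · exact absurd h (Ne.symm had)
      · exact absurd h (Ne.symm hae)
    · exact h
    · rw [Sym2.eq_iff] at h
      rcases h with ⟨-, h⟩ | ⟨h, -⟩
      · exact absurd h (Ne.symm hae)
      · exact absurd h (Ne.symm had)
  obtain ⟨p, q, gap, gaq, hpqde, P₁, hpq, P₂, hP⟩ :
      ∃ p q, G.Adj a p ∧ G.Adj a q ∧ ((p = d ∧ q = e) ∨ (p = e ∧ q = d)) ∧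
        ∃ (P₁ : G.Walk x p) (hpq : G.Adj p q) (P₂ : G.Walk q y),
          P = P₁.append (Walk.cons hpq P₂) := by
    rcases exists_split_of_mem_edges P hdeP with ⟨P₁, h, P₂, hP⟩ | ⟨P₁, h, P₂, hP⟩
    · exact ⟨d, e, gad, gae, Or.inl ⟨rfl, rfl⟩, P₁, h, P₂, hP⟩
    · exact ⟨e, d, gae, gad, Or.inr ⟨rfl, rfl⟩, P₁, h, P₂, hP⟩
  have gyx : G.Adj y x := by
    rcases hxy with ⟨rfl, rfl⟩ | ⟨rfl, rfl⟩
    · exact gbc.symm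
    · exact gbc
  rw [hP] at hCeq hCedges hCtail hCtnd haP hPnd
  clear hP hdeP P
  have hsupp : (P₁.append (Walk.cons hpq P₂)).support = P₁.support ++ P₂.support := by
    simp [Walk.support_append]
  have hPE : (P₁.append (Walk.cons hpq P₂)).edges = P₁.edges ++ s(p,q) :: P₂.edges := by
    simp [Walk.edges_append]
  rw [hsupp] at hCtail hCtnd haP hPnd
  have haP₁ : a ∉ P₁.support := fun h => haP (by simp [h])
  have haP₂ : a ∉ P₂.support := fun h => haP (by simp [h])
  have hsdisj : P₁.support.Disjoint P₂.support := List.disjoint_of_nodup_append hPnd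
  have hxP₂ : x ∉ P₂.support := fun h => hsdisj P₁.start_mem_support h
  have hyP₁ : y ∉ P₁.support := fun h => hsdisj h P₂.end_mem_support
  -- edge nodup facts from the trail
  have hend : (H.rotate a ha).edges.Nodup := hCcyc.isCircuit.isTrail.edges_nodup
  rw [hCeq] at hend
  have hend2 : (P₁.edges ++ s(p,q) :: P₂.edges).Nodup := by
    simp only [Walk.edges_cons, Walk.edges_append, Walk.edges_nil] at hend
    have := (List.nodup_cons.mp hend).2
    exact ((List.nodup_append.mp this).1)
  have hnd₁ : P₁.edges.Nodup := (List.nodup_append.mp hend2).1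
  have hnd₂ : P₂.edges.Nodup := (List.nodup_cons.mp (List.nodup_append.mp hend2).2.1).2
  have npq₁ : s(p,q) ∉ P₁.edges := fun h =>
    List.disjoint_of_nodup_append hend2 h List.mem_cons_self
  have npq₂ : s(p,q) ∉ P₂.edges := (List.nodup_cons.mp (List.nodup_append.mp hend2).2.1).1
  have hedisj : P₁.edges.Disjoint P₂.edges := by
    intro ed h h'
    exact List.disjoint_of_nodup_append hend2 h (List.mem_cons_of_mem _ h')
  -- membership helpers
  have nAx₁ : s(a,x) ∉ P₁.edges := fun h => haP₁ (Walk.fst_mem_support_of_mem_edges _ h)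
  have nAx₂ : s(a,x) ∉ P₂.edges := fun h => haP₂ (Walk.fst_mem_support_of_mem_edges _ h)
  have nYa₁ : s(y,a) ∉ P₁.edges := fun h => haP₁ (Walk.snd_mem_support_of_mem_edges _ h)
  have nYa₂ : s(y,a) ∉ P₂.edges := fun h => haP₂ (Walk.snd_mem_support_of_mem_edges _ h)
  -- the new walk
  set N : G.Walk a a :=
    Walk.cons gaq (P₂.append (Walk.cons gyx (P₁.append (Walk.cons gap.symm Walk.nil))))
    with hNdef
  have hNE : N.edges = s(a,q) :: (P₂.edges ++ s(y,x) :: (P₁.edges ++ [s(p,a)])) := by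
    simp [hNdef, Walk.edges_append]
  have hNtail : N.support.tail = P₂.support ++ (P₁.support ++ [a]) := by
    simp [hNdef, Walk.support_append]
  have hperm : N.support.tail.Perm (H.rotate a ha).support.tail := by
    rw [hNtail, hCtail, ← List.append_assoc]
    exact List.perm_append_comm.append_right _
  have hpermH : N.support.tail.Perm H.support.tail :=
    hperm.trans (H.support_rotate a ha).perm
  have hNnd : N.edges.Nodup := by
    rw [hNE]
    simp only [List.nodup_cons, List.nodup_append', List.mem_append, List.mem_cons,
      List.mem_singleton, List.nodup_singleton, List.not_mem_nil, not_or, and_true,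
      List.disjoint_singleton, List.singleton_disjoint]
    refine ⟨⟨?_, ?_, ?_, ?_, not_false⟩, hnd₂, ⟨⟨?_, ?_, not_false⟩, hnd₁,
      ⟨not_false, List.nodup_nil⟩, ?_⟩, ?_⟩
    · exact fun h => haP₂ (Walk.fst_mem_support_of_mem_edges _ h)
    · intro h
      rw [Sym2.eq_iff] at h
      rcases h with ⟨h, -⟩ | ⟨h, -⟩
      · exact hay.ne h
      · exact hax.ne h
    · exact fun h => haP₁ (Walk.fst_mem_support_of_mem_edges _ h)
    · intro h
      rw [Sym2.eq_iff] at h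
      rcases h with ⟨h, -⟩ | ⟨-, h⟩
      · exact gap.ne h
      · exact hpq.ne' h
    · exact fun h => hyP₁ (Walk.fst_mem_support_of_mem_edges _ h)
    · intro h
      rw [Sym2.eq_iff] at h
      rcases h with ⟨-, h⟩ | ⟨h, -⟩
      · exact hax.ne' h
      · exact hay.ne' h
    · exact fun h => haP₁ (Walk.snd_mem_support_of_mem_edges _ h)
    · intro ed h h'
      rcases List.mem_cons.mp h' with rfl | h'
      · exact hxP₂ (Walk.snd_mem_support_of_mem_edges _ h)
      · rcases List.mem_append.mp h' with h' | h'
        · exact hedisj h' h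
        · rw [List.mem_singleton] at h'
          subst h'
          exact haP₂ (Walk.snd_mem_support_of_mem_edges _ h)
  have key : ∀ ed : Sym2 V, ed ∈ N.edges ↔
      ((ed ∈ H.edges ∧ ed ≠ s(a,x) ∧ ed ≠ s(y,a) ∧ ed ≠ s(p,q)) ∨
        (ed = s(y,x) ∨ ed = s(a,q) ∨ ed = s(p,a))) := by
    intro ed
    have hmemN : ed ∈ N.edges ↔
        (ed = s(a,q) ∨ ed ∈ P₂.edges ∨ ed = s(y,x) ∨ ed ∈ P₁.edges ∨ ed = s(p,a)) := by
      rw [hNE]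
      simp [or_assoc]
    have hmemH : ed ∈ H.edges ↔
        (ed = s(a,x) ∨ (ed ∈ P₁.edges ∨ ed = s(p,q) ∨ ed ∈ P₂.edges) ∨ ed = s(y,a)) := by
      rw [hCedges ed, hPE]
      simp [or_assoc]
    rw [hmemN, hmemH]
    constructor
    · rintro (rfl | h | rfl | h | rfl)
      · exact Or.inr (Or.inr (Or.inl rfl))
      · refine Or.inl ⟨Or.inr (Or.inl (Or.inr (Or.inr h))), ?_, ?_, ?_⟩ <;> rintro rfl
        · exact nAx₂ h
        · exact nYa₂ h
        · exact npq₂ h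
      · exact Or.inr (Or.inl rfl)
      · refine Or.inl ⟨Or.inr (Or.inl (Or.inl h)), ?_, ?_, ?_⟩ <;> rintro rfl
        · exact nAx₁ h
        · exact nYa₁ h
        · exact npq₁ h
      · exact Or.inr (Or.inr (Or.inr rfl))
    · rintro (⟨hh, h1, h2, h3⟩ | rfl | rfl | rfl)
      · rcases hh with rfl | (h | rfl | h) | rfl
        · exact absurd rfl h1
        · exact Or.inr (Or.inr (Or.inr (Or.inl h)))
        · exact absurd rfl h3
        · exact Or.inr (Or.inl h)
        · exact absurd rfl h2
      · exact Or.inr (Or.inr (Or.inl rfl))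
      · exact Or.inl rfl
      · exact Or.inr (Or.inr (Or.inr (Or.inr rfl)))
  have E1' : ∀ ed : Sym2 V, (ed ≠ s(a,x) ∧ ed ≠ s(y,a)) ↔ (ed ≠ s(a,b) ∧ ed ≠ s(a,c)) := by
    intro ed
    rw [show s(y,a) = s(a,y) from Sym2.eq_swap]
    rcases hxy with ⟨rfl, rfl⟩ | ⟨rfl, rfl⟩ <;> first | exact Iff.rfl | exact and_comm
  have E2 : s(y,x) = s(b,c) := by
    rcases hxy with ⟨rfl, rfl⟩ | ⟨rfl, rfl⟩
    · exact Sym2.eq_swap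
    · rfl
  have E3 : s(p,q) = s(d,e) := by
    rcases hpqde with ⟨rfl, rfl⟩ | ⟨rfl, rfl⟩
    · rfl
    · exact Sym2.eq_swap
  have E4 : ∀ ed : Sym2 V, (ed = s(a,q) ∨ ed = s(p,a)) ↔ (ed = s(a,d) ∨ ed = s(a,e)) := by
    intro ed
    rw [show s(p,a) = s(a,p) from Sym2.eq_swap]
    rcases hpqde with ⟨rfl, rfl⟩ | ⟨rfl, rfl⟩ <;> first | exact Iff.rfl | exact or_comm
  refine ⟨a, N, ?_, ?_⟩
  · rw [Walk.isHamiltonianCycle_iff_isCycle_and_support_count_tail_eq_one]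
    constructor
    · rw [Walk.isCycle_def]
      refine ⟨⟨hNnd⟩, by simp [hNdef], ?_⟩
      exact hperm.nodup_iff.mpr ((Walk.isCycle_def _).mp hCcyc).2.2
    · intro w
      rw [hpermH.count_eq]
      exact (Walk.isHamiltonianCycle_iff_isCycle_and_support_count_tail_eq_one.mp hH).2 w
  · intro ed
    rw [key ed, E2, E3]
    have A := E1' ed
    have B := E4 ed
    constructor
    · rintro (⟨h1, h2, h3, h4⟩ | h | h | h)
      · exact Or.inl ⟨h1, (A.mp ⟨h2, h3⟩).1, (A.mp ⟨h2, h3⟩).2, h4⟩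
      · exact Or.inr (Or.inl h)
      · rcases B.mp (Or.inl h) with h | h
        · exact Or.inr (Or.inr (Or.inl h))
        · exact Or.inr (Or.inr (Or.inr h))
      · rcases B.mp (Or.inr h) with h | h
        · exact Or.inr (Or.inr (Or.inl h))
        · exact Or.inr (Or.inr (Or.inr h))
    · rintro (⟨h1, h2, h3, h4⟩ | h | h | h)
      · exact Or.inl ⟨h1, (A.mpr ⟨h2, h3⟩).1, (A.mpr ⟨h2, h3⟩).2, h4⟩
      · exact Or.inr (Or.inl h)
      · rcases B.mpr (Or.inl h) with h | h
        · exact Or.inr (Or.inr (Or.inl h))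
        · exact Or.inr (Or.inr (Or.inr h))
      · rcases B.mpr (Or.inr h) with h | h
        · exact Or.inr (Or.inr (Or.inl h))
        · exact Or.inr (Or.inr (Or.inr h))

/-- The bowtie rotation: given `t` pairwise vertex-disjoint bowties `aᵢbᵢcᵢdᵢeᵢ` in `G`
(all `5t` vertices distinct, and for each `i` the six edges `aᵢbᵢ, aᵢcᵢ, aᵢdᵢ, aᵢeᵢ, bᵢcᵢ, dᵢeᵢ`
belong to `G`), if `H₁` is a Hamilton cycle of `G` containing the edges `aᵢbᵢ, aᵢcᵢ, dᵢeᵢ`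
for all `i`, then the spanning subgraph with edge set
`(E(H₁) ∖ {aᵢbᵢ, aᵢcᵢ, dᵢeᵢ}) ∪ {bᵢcᵢ, aᵢdᵢ, aᵢeᵢ}` is also a Hamilton cycle of `G`. -/
theorem statement7 {V : Type*} [Fintype V] [DecidableEq V] (G : SimpleGraph V) (t : ℕ)
    (a b c d e : Fin t → V)
    (hdistinct : Function.Injective
      fun p : Fin t × Fin 5 => ![a p.1, b p.1, c p.1, d p.1, e p.1] p.2)
    (hadj : ∀ i : Fin t, G.Adj (a i) (b i) ∧ G.Adj (a i) (c i) ∧ G.Adj (a i) (d i) ∧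
      G.Adj (a i) (e i) ∧ G.Adj (b i) (c i) ∧ G.Adj (d i) (e i))
    (v : V) (H₁ : G.Walk v v) (hH₁ : H₁.IsHamiltonianCycle)
    (hcont : ∀ i : Fin t,
      s(a i, b i) ∈ H₁.edges ∧ s(a i, c i) ∈ H₁.edges ∧ s(d i, e i) ∈ H₁.edges) :
    ∃ (u : V) (H₂ : G.Walk u u), H₂.IsHamiltonianCycle ∧
      ∀ ed : Sym2 V, ed ∈ H₂.edges ↔
        ((ed ∈ H₁.edges ∧
            ¬ ∃ i : Fin t, ed = s(a i, b i) ∨ ed = s(a i, c i) ∨ ed = s(d i, e i)) ∨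
          ∃ i : Fin t, ed = s(b i, c i) ∨ ed = s(a i, d i) ∨ ed = s(a i, e i)) := by
  classical
  set f : Fin t → Fin 5 → V := fun i k => ![a i, b i, c i, d i, e i] k with hf
  have hinj : ∀ (i j : Fin t) (k l : Fin 5), f i k = f j l → i = j ∧ k = l := by
    intro i j k l h
    have := hdistinct (a₁ := (i, k)) (a₂ := (j, l)) h
    exact ⟨congrArg Prod.fst this, congrArg Prod.snd this⟩
  have hne : ∀ (i : Fin t) (k l : Fin 5), k ≠ l → f i k ≠ f i l :=
    fun i k l hkl h => hkl (hinj i i k l h).2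
  have hS : ∀ (i j : Fin t), i ≠ j → ∀ (k₁ k₂ l₁ l₂ : Fin 5),
      s(f i k₁, f i k₂) ≠ s(f j l₁, f j l₂) := by
    intro i j hij k₁ k₂ l₁ l₂ h
    rw [Sym2.eq_iff] at h
    rcases h with ⟨h, -⟩ | ⟨h, -⟩ <;> exact hij (hinj _ _ _ _ h).1
  have main : ∀ n : ℕ, n ≤ t → ∃ (u : V) (H₂ : G.Walk u u), H₂.IsHamiltonianCycle ∧
      ∀ ed : Sym2 V, ed ∈ H₂.edges ↔
        ((ed ∈ H₁.edges ∧ ¬ ∃ i : Fin t, i.val < n ∧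
            (ed = s(a i, b i) ∨ ed = s(a i, c i) ∨ ed = s(d i, e i))) ∨
          ∃ i : Fin t, i.val < n ∧
            (ed = s(b i, c i) ∨ ed = s(a i, d i) ∨ ed = s(a i, e i))) := by
    intro n
    induction n with
    | zero =>
      intro _
      exact ⟨v, H₁, hH₁, by simp⟩
    | succ n ih =>
      intro hn1
      obtain ⟨u, Hn, hHn, hiff⟩ := ih (Nat.le_of_succ_le hn1)
      set i : Fin t := ⟨n, hn1⟩ with hidef
      have hj_ne : ∀ j : Fin t, j.val < n → i ≠ j := by
        intro j hj h
        rw [← h] at hj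
        exact Nat.lt_irrefl n hj
      -- the three edges of bowtie i are present in Hn
      have hnotrem : ∀ (k₁ k₂ : Fin 5),
          ¬ ∃ j : Fin t, j.val < n ∧
            (s(f i k₁, f i k₂) = s(a j, b j) ∨ s(f i k₁, f i k₂) = s(a j, c j) ∨
              s(f i k₁, f i k₂) = s(d j, e j)) := by
        rintro k₁ k₂ ⟨j, hj, h | h | h⟩
        · exact hS i j (hj_ne j hj) k₁ k₂ 0 1 h
        · exact hS i j (hj_ne j hj) k₁ k₂ 0 2 h
        · exact hS i j (hj_ne j hj) k₁ k₂ 3 4 h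
      have m1 : s(a i, b i) ∈ Hn.edges :=
        (hiff _).mpr (Or.inl ⟨(hcont i).1, hnotrem 0 1⟩)
      have m2 : s(a i, c i) ∈ Hn.edges :=
        (hiff _).mpr (Or.inl ⟨(hcont i).2.1, hnotrem 0 2⟩)
      have m3 : s(d i, e i) ∈ Hn.edges :=
        (hiff _).mpr (Or.inl ⟨(hcont i).2.2, hnotrem 3 4⟩)
      obtain ⟨u', N, hN, hNiff⟩ := bowtie_swap
        (hne i 0 1 (by decide)) (hne i 0 2 (by decide)) (hne i 0 3 (by decide))
        (hne i 0 4 (by decide)) (hne i 1 2 (by decide)) (hne i 1 3 (by decide))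
        (hne i 1 4 (by decide)) (hne i 2 3 (by decide)) (hne i 2 4 (by decide))
        (hne i 3 4 (by decide))
        (hadj i).2.2.2.2.1 (hadj i).2.2.1 (hadj i).2.2.2.1 hHn m1 m2 m3
      refine ⟨u', N, hN, ?_⟩
      intro ed
      rw [hNiff ed]
      constructor
      · rintro (⟨hed, h1, h2, h3⟩ | h | h | h)
        · rcases (hiff ed).mp hed with ⟨hm, hnot⟩ | ⟨j, hj, hadd⟩
          · refine Or.inl ⟨hm, ?_⟩
            rintro ⟨j, hj, hcase⟩
            rcases Nat.lt_succ_iff_lt_or_eq.mp hj with hj' | hj'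
            · exact hnot ⟨j, hj', hcase⟩
            · have : j = i := Fin.ext hj'
              subst this
              rcases hcase with h | h | h
              · exact h1 h
              · exact h2 h
              · exact h3 h
          · exact Or.inr ⟨j, Nat.lt_succ_of_lt hj, hadd⟩
        · exact Or.inr ⟨i, Nat.lt_succ_self n, Or.inl h⟩
        · exact Or.inr ⟨i, Nat.lt_succ_self n, Or.inr (Or.inl h)⟩
        · exact Or.inr ⟨i, Nat.lt_succ_self n, Or.inr (Or.inr h)⟩
      · rintro (⟨hm, hnot⟩ | ⟨j, hj, hadd⟩)
        · refine Or.inl ⟨(hiff ed).mpr (Or.inl ⟨hm, ?_⟩), ?_, ?_, ?_⟩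
          · rintro ⟨j, hj, hcase⟩
            exact hnot ⟨j, Nat.lt_succ_of_lt hj, hcase⟩
          · intro h
            exact hnot ⟨i, Nat.lt_succ_self n, Or.inl h⟩
          · intro h
            exact hnot ⟨i, Nat.lt_succ_self n, Or.inr (Or.inl h)⟩
          · intro h
            exact hnot ⟨i, Nat.lt_succ_self n, Or.inr (Or.inr h)⟩
        · rcases Nat.lt_succ_iff_lt_or_eq.mp hj with hj' | hj'
          · refine Or.inl ⟨(hiff ed).mpr (Or.inr ⟨j, hj', hadd⟩), ?_, ?_, ?_⟩ <;>
              rintro rfl <;> rcases hadd with h | h | h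
            · exact hS j i (Ne.symm (hj_ne j hj')) 1 2 0 1 h.symm
            · exact hS j i (Ne.symm (hj_ne j hj')) 0 3 0 1 h.symm
            · exact hS j i (Ne.symm (hj_ne j hj')) 0 4 0 1 h.symm
            · exact hS j i (Ne.symm (hj_ne j hj')) 1 2 0 2 h.symm
            · exact hS j i (Ne.symm (hj_ne j hj')) 0 3 0 2 h.symm
            · exact hS j i (Ne.symm (hj_ne j hj')) 0 4 0 2 h.symm
            · exact hS j i (Ne.symm (hj_ne j hj')) 1 2 3 4 h.symm
            · exact hS j i (Ne.symm (hj_ne j hj')) 0 3 3 4 h.symm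
            · exact hS j i (Ne.symm (hj_ne j hj')) 0 4 3 4 h.symm
          · have : j = i := Fin.ext hj'
            subst this
            rcases hadd with h | h | h
            · exact Or.inr (Or.inl h)
            · exact Or.inr (Or.inr (Or.inl h))
            · exact Or.inr (Or.inr (Or.inr h))
  obtain ⟨u, H₂, hH₂, hiff⟩ := main t le_rfl
  refine ⟨u, H₂, hH₂, ?_⟩
  intro ed
  rw [hiff ed]
  have hlt : ∀ (Q : Fin t → Prop), (∃ i : Fin t, i.val < t ∧ Q i) ↔ ∃ i, Q i :=
    fun Q => ⟨fun ⟨i, _, h⟩ => ⟨i, h⟩, fun ⟨i, h⟩ => ⟨i, i.isLt, h⟩⟩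
  rw [hlt, hlt]
end

section
/- Let G be a graph with an edge-coloring χ : E(G) → [r] and let v, u₁, u₂, w₁, w₂ be five distinct vertices such that all six edges vu₁, vu₂, vw₁, vw₂, u₁u₂, w₁w₂ belong to G, so that B = v u₁ u₂ w₁ w₂ is a bowtie subgraph with center v. If B is not bad (i.e., f(B,k) = 0 for every color k ∈ [r]), then the triangles vu₁u₂ and vw₁w₂ have a common type: there exist parameters such that both triangles are of type a(j,k,ℓ), or both are of type b(k,ℓ), or both are of type c(k). -/
/-!
A bowtie is not bad exactly when the colour multisets `{χ(vu₁), χ(vu₂), χ(w₁w₂)}` and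
`{χ(vw₁), χ(vw₂), χ(u₁u₂)}` coincide, so the colours `(χ(vw₁), χ(vw₂), χ(u₁u₂))` are a
permutation of `(χ(vu₁), χ(vu₂), χ(w₁w₂))`. If the permutation matches the two rims, the
triangles have the same spoke colours up to order and the same rim colour, and the type of a
triangle depends only on these. Otherwise in each triangle the rim has the colour of a spoke,
and the other spoke has the same colour `k` in both triangles: both are of type `c(k)`.
-/

open SimpleGraph

/-- The triangle `vuw` is of type `a(j,k,ℓ)`: `j,k,ℓ` pairwise distinct,
`{χ(vu), χ(vw)} = {j,k}` and `χ(uw) = ℓ`. -/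
def TriTypeA {V : Type*} {r : ℕ} (χ : Sym2 V → Fin r) (v u w : V) (j k ℓ : Fin r) : Prop :=
  j ≠ k ∧ j ≠ ℓ ∧ k ≠ ℓ ∧
    ((χ s(v, u) = j ∧ χ s(v, w) = k) ∨ (χ s(v, u) = k ∧ χ s(v, w) = j)) ∧ χ s(u, w) = ℓ

/-- The triangle `vuw` is of type `b(k,ℓ)`: `ℓ ≠ k`, `χ(vu) = χ(vw) = k` and `χ(uw) = ℓ`. -/
def TriTypeB {V : Type*} {r : ℕ} (χ : Sym2 V → Fin r) (v u w : V) (k ℓ : Fin r) : Prop :=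
  ℓ ≠ k ∧ χ s(v, u) = k ∧ χ s(v, w) = k ∧ χ s(u, w) = ℓ

/-- The triangle `vuw` is of type `c(k)`: either `χ(vu) = χ(vw) = χ(uw) = k`, or there is
`ℓ ≠ k` with `{χ(vu), χ(vw)} = {k,ℓ}` and `χ(uw) = ℓ`. -/
def TriTypeC {V : Type*} {r : ℕ} (χ : Sym2 V → Fin r) (v u w : V) (k : Fin r) : Prop :=
  (χ s(v, u) = k ∧ χ s(v, w) = k ∧ χ s(u, w) = k) ∨
    ∃ ℓ : Fin r, ℓ ≠ k ∧
      ((χ s(v, u) = k ∧ χ s(v, w) = ℓ) ∨ (χ s(v, u) = ℓ ∧ χ s(v, w) = k)) ∧ χ s(u, w) = ℓ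

theorem Multiset.eq_of_triple_eq_triple {α : Type*} {a b c d e f : α}
    (h : ({a, b, c} : Multiset α) = {d, e, f}) :
    (d = a ∧ e = b ∧ f = c) ∨ (d = a ∧ e = c ∧ f = b) ∨ (d = b ∧ e = a ∧ f = c) ∨
    (d = b ∧ e = c ∧ f = a) ∨ (d = c ∧ e = a ∧ f = b) ∨ (d = c ∧ e = b ∧ f = a) := by
  have hp : [d, e, f] ∈ [a, b, c].permutations :=
    List.mem_permutations.2 (Multiset.coe_eq_coe.1 h).symm
  simp only [List.permutations, List.permutationsAux, List.foldr_cons, List.permutationsAux.rec,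
    List.foldr_nil, List.permutationsAux2_snd_nil, List.permutationsAux2_snd_cons, List.append_nil,
    id_eq, List.cons_append, List.nil_append, List.mem_cons, List.cons.injEq, and_true,
    List.not_mem_nil, or_false] at hp
  tauto

section Bowtie

variable {V : Type*} {r : ℕ} (χ : Sym2 V → Fin r)

theorem bowtieF_eq_zero_iff (v₁ v₂ v₃ v₄ v₅ : V) :
    (∀ k, bowtieF χ v₁ v₂ v₃ v₄ v₅ k = 0) ↔
      ({χ s(v₁, v₂), χ s(v₁, v₃), χ s(v₄, v₅)} : Multiset (Fin r)) =
        {χ s(v₁, v₄), χ s(v₁, v₅), χ s(v₂, v₃)} := by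
  rw [Multiset.ext]
  refine forall_congr' fun k => ?_
  simp only [bowtieF, Multiset.insert_eq_cons, Multiset.count_cons, Multiset.count_singleton,
    @eq_comm _ k]
  split_ifs <;> omega

theorem triTypeC_of_left {v u w : V} {k : Fin r} (hu : χ s(v, u) = k)
    (hw : χ s(v, w) = χ s(u, w)) : TriTypeC χ v u w k := by
  by_cases hk : χ s(u, w) = k
  · exact Or.inl ⟨hu, hw.trans hk, hk⟩
  · exact Or.inr ⟨_, hk, Or.inl ⟨hu, hw⟩, rfl⟩

theorem triTypeC_of_right {v u w : V} {k : Fin r} (hw : χ s(v, w) = k)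
    (hu : χ s(v, u) = χ s(u, w)) : TriTypeC χ v u w k := by
  by_cases hk : χ s(u, w) = k
  · exact Or.inl ⟨hu.trans hk, hw, hk⟩
  · exact Or.inr ⟨_, hk, Or.inr ⟨hu, hw⟩, rfl⟩

theorem triTypeA_comm (v u w : V) (j k ℓ : Fin r) :
    TriTypeA χ v u w j k ℓ ↔ TriTypeA χ v w u j k ℓ := by
  rw [TriTypeA, TriTypeA, Sym2.eq_swap (a := u)]
  tauto

theorem triTypeB_comm (v u w : V) (k ℓ : Fin r) :
    TriTypeB χ v u w k ℓ ↔ TriTypeB χ v w u k ℓ := by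
  rw [TriTypeB, TriTypeB, Sym2.eq_swap (a := u)]
  tauto

theorem triTypeC_comm (v u w : V) (k : Fin r) :
    TriTypeC χ v u w k ↔ TriTypeC χ v w u k := by
  rw [TriTypeC, TriTypeC, Sym2.eq_swap (a := u)]
  exact or_congr (by tauto) (exists_congr fun ℓ => by tauto)

def CommonTriType (v u₁ u₂ w₁ w₂ : V) : Prop :=
  (∃ j k ℓ : Fin r, TriTypeA χ v u₁ u₂ j k ℓ ∧ TriTypeA χ v w₁ w₂ j k ℓ) ∨
    (∃ k ℓ : Fin r, TriTypeB χ v u₁ u₂ k ℓ ∧ TriTypeB χ v w₁ w₂ k ℓ) ∨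
    (∃ k : Fin r, TriTypeC χ v u₁ u₂ k ∧ TriTypeC χ v w₁ w₂ k)

theorem commonTriType_comm_right (v u₁ u₂ w₁ w₂ : V) :
    CommonTriType χ v u₁ u₂ w₁ w₂ ↔ CommonTriType χ v u₁ u₂ w₂ w₁ := by
  simp only [CommonTriType, triTypeA_comm χ v w₁, triTypeB_comm χ v w₁, triTypeC_comm χ v w₁]

theorem commonTriType_self (v u w : V) : CommonTriType χ v u w u w := by
  by_cases hru : χ s(u, w) = χ s(v, u)
  · exact Or.inr <| Or.inr ⟨_, triTypeC_of_right χ rfl hru.symm, triTypeC_of_right χ rfl hru.symm⟩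
  by_cases hrw : χ s(u, w) = χ s(v, w)
  · exact Or.inr <| Or.inr ⟨_, triTypeC_of_left χ rfl hrw.symm, triTypeC_of_left χ rfl hrw.symm⟩
  by_cases hs : χ s(v, u) = χ s(v, w)
  · have hB : TriTypeB χ v u w (χ s(v, u)) (χ s(u, w)) := ⟨hru, rfl, hs.symm, rfl⟩
    exact Or.inr <| Or.inl ⟨_, _, hB, hB⟩
  · have hA : TriTypeA χ v u w (χ s(v, u)) (χ s(v, w)) (χ s(u, w)) :=
      ⟨hs, Ne.symm hru, Ne.symm hrw, Or.inl ⟨rfl, rfl⟩, rfl⟩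
    exact Or.inl ⟨_, _, _, hA, hA⟩

theorem commonTriType_of_colors_eq {v u₁ u₂ w₁ w₂ : V} (h₁ : χ s(v, w₁) = χ s(v, u₁))
    (h₂ : χ s(v, w₂) = χ s(v, u₂)) (hr : χ s(w₁, w₂) = χ s(u₁, u₂)) :
    CommonTriType χ v u₁ u₂ w₁ w₂ := by
  simpa only [CommonTriType, TriTypeA, TriTypeB, TriTypeC, h₁, h₂, hr] using
    commonTriType_self χ v u₁ u₂

end Bowtie

theorem statement8_general {V : Type*} {r : ℕ}
    (χ : Sym2 V → Fin r) (v u₁ u₂ w₁ w₂ : V)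
    (hnotbad : ∀ k : Fin r, bowtieF χ v u₁ u₂ w₁ w₂ k = 0) :
    (∃ j k ℓ : Fin r, TriTypeA χ v u₁ u₂ j k ℓ ∧ TriTypeA χ v w₁ w₂ j k ℓ) ∨
    (∃ k ℓ : Fin r, TriTypeB χ v u₁ u₂ k ℓ ∧ TriTypeB χ v w₁ w₂ k ℓ) ∨
    (∃ k : Fin r, TriTypeC χ v u₁ u₂ k ∧ TriTypeC χ v w₁ w₂ k) := by
  obtain ⟨h₁, h₂, hr⟩ | ⟨h₁, h₂, hr⟩ | ⟨h₁, h₂, hr⟩ | ⟨h₁, h₂, hr⟩ | ⟨h₁, h₂, hr⟩ | ⟨h₁, h₂, hr⟩ :=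
    Multiset.eq_of_triple_eq_triple ((bowtieF_eq_zero_iff χ v u₁ u₂ w₁ w₂).1 hnotbad)
  · exact commonTriType_of_colors_eq χ h₁ h₂ hr.symm
  · exact Or.inr <| Or.inr
      ⟨_, triTypeC_of_left χ rfl hr.symm, triTypeC_of_left χ h₁ h₂⟩
  · exact (commonTriType_comm_right χ v u₁ u₂ w₁ w₂).2 <|
      commonTriType_of_colors_eq χ h₂ h₁ (by rw [Sym2.eq_swap, hr])
  · exact Or.inr <| Or.inr
      ⟨_, triTypeC_of_right χ rfl hr.symm, triTypeC_of_left χ h₁ h₂⟩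
  · exact Or.inr <| Or.inr
      ⟨_, triTypeC_of_left χ rfl hr.symm, triTypeC_of_right χ h₂ h₁⟩
  · exact Or.inr <| Or.inr
      ⟨_, triTypeC_of_right χ rfl hr.symm, triTypeC_of_right χ h₂ h₁⟩

/-- If `v u₁ u₂ w₁ w₂` is a bowtie (five distinct vertices, all six edges present) that is
not bad, then the two triangles `vu₁u₂` and `vw₁w₂` have a common type: both of type
`a(j,k,ℓ)` for some parameters, or both of type `b(k,ℓ)`, or both of type `c(k)`. -/
theorem statement8 {V : Type*} [DecidableEq V] {r : ℕ} (G : SimpleGraph V)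
    (χ : Sym2 V → Fin r) (v u₁ u₂ w₁ w₂ : V)
    (hnodup : [v, u₁, u₂, w₁, w₂].Nodup)
    (h1 : G.Adj v u₁) (h2 : G.Adj v u₂) (h3 : G.Adj v w₁) (h4 : G.Adj v w₂)
    (h5 : G.Adj u₁ u₂) (h6 : G.Adj w₁ w₂)
    (hnotbad : ∀ k : Fin r, bowtieF χ v u₁ u₂ w₁ w₂ k = 0) :
    (∃ j k ℓ : Fin r, TriTypeA χ v u₁ u₂ j k ℓ ∧ TriTypeA χ v w₁ w₂ j k ℓ) ∨
    (∃ k ℓ : Fin r, TriTypeB χ v u₁ u₂ k ℓ ∧ TriTypeB χ v w₁ w₂ k ℓ) ∨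
    (∃ k : Fin r, TriTypeC χ v u₁ u₂ k ∧ TriTypeC χ v w₁ w₂ k) :=
  statement8_general χ v u₁ u₂ w₁ w₂ hnotbad
end

section
/- Let m ≥ 1 be an integer, let G be an n-vertex graph with minimum degree δ(G) ≥ n/2 + 54m and edge-coloring χ : E(G) → [3], and let G' be an induced subgraph of G with |V(G) ∖ V(G')| ≤ 30m such that G' contains no bad bowtie. Then either V(G') = A(1,2,3) ∪ A(2,3,1) ∪ A(3,1,2), i.e. every vertex of G' is of type A(1,2,3), A(2,3,1), or A(3,1,2) in G'; or there exists a color k ∈ [3] such that every vertex of G' is either of type C(k) in G' or of type B(ℓ,k) in G' for some ℓ ∈ [3]∖{k}. -/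
open SimpleGraph

/-- Vertex `v` is of type `A(j,k,ℓ)` in the subgraph of `G` induced on `W`:
`L(v) = {j,k}`, the neighborhoods `N^j(v)` and `N^k(v)` are independent, and every induced
edge inside `N^j(v) ∪ N^k(v)` has color `ℓ`. -/
def TypeA {V : Type*} {r : ℕ} (G : SimpleGraph V) (χ : Sym2 V → Fin r) (W : Finset V)
    (v : V) (j k ℓ : Fin r) : Prop :=
  (∀ c : Fin r, (∃ u ∈ W, G.Adj v u ∧ χ s(v, u) = c) ↔ (c = j ∨ c = k)) ∧
  (∀ u₁ ∈ W, ∀ u₂ ∈ W, G.Adj v u₁ ∧ χ s(v, u₁) = j → G.Adj v u₂ ∧ χ s(v, u₂) = j →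
    ¬ G.Adj u₁ u₂) ∧
  (∀ u₁ ∈ W, ∀ u₂ ∈ W, G.Adj v u₁ ∧ χ s(v, u₁) = k → G.Adj v u₂ ∧ χ s(v, u₂) = k →
    ¬ G.Adj u₁ u₂) ∧
  (∀ u₁ ∈ W, ∀ u₂ ∈ W,
    G.Adj v u₁ ∧ (χ s(v, u₁) = j ∨ χ s(v, u₁) = k) →
    G.Adj v u₂ ∧ (χ s(v, u₂) = j ∨ χ s(v, u₂) = k) →
    G.Adj u₁ u₂ → χ s(u₁, u₂) = ℓ)

/-- Vertex `v` is of type `B(k,ℓ)` in the subgraph of `G` induced on `W`: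
`L(v) = {k}` and every induced edge inside `N^k(v)` has color `ℓ`. -/
def TypeB {V : Type*} {r : ℕ} (G : SimpleGraph V) (χ : Sym2 V → Fin r) (W : Finset V)
    (v : V) (k ℓ : Fin r) : Prop :=
  (∀ c : Fin r, (∃ u ∈ W, G.Adj v u ∧ χ s(v, u) = c) ↔ c = k) ∧
  (∀ u₁ ∈ W, ∀ u₂ ∈ W, G.Adj v u₁ ∧ χ s(v, u₁) = k → G.Adj v u₂ ∧ χ s(v, u₂) = k →
    G.Adj u₁ u₂ → χ s(u₁, u₂) = ℓ)

/-- Vertex `v` is of type `C(k)` in the subgraph of `G` induced on `W`: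
every induced edge inside `N^k(v)` has color `k`, the set `N^{≠k}(v)` is independent, and
for every `ℓ ≠ k` every induced edge between `N^k(v)` and `N^ℓ(v)` has color `ℓ`. -/
def TypeC {V : Type*} {r : ℕ} (G : SimpleGraph V) (χ : Sym2 V → Fin r) (W : Finset V)
    (v : V) (k : Fin r) : Prop :=
  (∀ u₁ ∈ W, ∀ u₂ ∈ W, G.Adj v u₁ ∧ χ s(v, u₁) = k → G.Adj v u₂ ∧ χ s(v, u₂) = k →
    G.Adj u₁ u₂ → χ s(u₁, u₂) = k) ∧
  (∀ u₁ ∈ W, ∀ u₂ ∈ W, G.Adj v u₁ ∧ χ s(v, u₁) ≠ k → G.Adj v u₂ ∧ χ s(v, u₂) ≠ k →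
    ¬ G.Adj u₁ u₂) ∧
  (∀ ℓ : Fin r, ℓ ≠ k → ∀ u₁ ∈ W, ∀ u₂ ∈ W,
    G.Adj v u₁ ∧ χ s(v, u₁) = k → G.Adj v u₂ ∧ χ s(v, u₂) = ℓ →
    G.Adj u₁ u₂ → χ s(u₁, u₂) = ℓ)

namespace Statement11Aux

def mfv (p q r k : Fin 3) : ℤ :=
  (if p = k then 1 else 0) + (if q = k then 1 else 0) - (if r = k then 1 else 0)

def Kc (p q r : Fin 3) : Fin 3 := if p = q then r else if r = p then q else p

lemma dA : ∀ c1 c2 c3 p q r : Fin 3, (p ≠ q ∧ q ≠ r ∧ p ≠ r) →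
    (∀ k, mfv c1 c2 c3 k = mfv p q r k) → (c1 ≠ c2 ∧ c2 ≠ c3 ∧ c1 ≠ c3) := by decide

lemma dA2 : ∀ c x y p q r : Fin 3, (p ≠ q ∧ q ≠ r ∧ p ≠ r) →
    (∀ k, mfv c x y k = mfv p q r k) → (c = p ∨ c = q) := by decide

lemma dA3 : ∀ c s p q r : Fin 3, (p ≠ q ∧ q ≠ r ∧ p ≠ r) →
    (∀ k, mfv c c s k = mfv p q r k) → False := by decide

lemma dA4 : ∀ c1 c2 s p q r : Fin 3, (p ≠ q ∧ q ≠ r ∧ p ≠ r) →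
    (c1 = p ∨ c1 = q) → (c2 = p ∨ c2 = q) →
    (∀ k, mfv c1 c2 s k = mfv p q r k) → s = r := by decide

lemma dB1 : ∀ c x y l r : Fin 3, l ≠ r →
    (∀ k, mfv c x y k = mfv l l r k) → c = l := by decide

lemma dB2 : ∀ l s r : Fin 3, (∀ k, mfv l l s k = mfv l l r k) → s = r := by decide

lemma dK : ∀ p q r : Fin 3, ¬(p ≠ q ∧ q ≠ r ∧ p ≠ r) → ¬(p = q ∧ p ≠ r) →
    ∀ k, mfv p q r k = (if Kc p q r = k then 1 else 0) := by decide

lemma dC1 : ∀ s c : Fin 3, (∀ k, mfv c c s k = (if c = k then 1 else 0)) → s = c := by decide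

lemma dC2 : ∀ c1 c2 s c : Fin 3, c1 ≠ c → c2 ≠ c →
    (∀ k, mfv c1 c2 s k = (if c = k then 1 else 0)) → False := by decide

lemma dC3 : ∀ l s c : Fin 3, l ≠ c →
    (∀ k, mfv c l s k = (if c = k then 1 else 0)) → s = l := by decide

lemma dD1 : ∀ p q r c1 c2 c3 : Fin 3, ¬(p ≠ q ∧ q ≠ r ∧ p ≠ r) →
    (∀ k, mfv c1 c2 c3 k = mfv p q r k) →
    (¬(c1 ≠ c2 ∧ c2 ≠ c3 ∧ c1 ≠ c3) ∧ Kc c1 c2 c3 = Kc p q r) := by decide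

lemma dD3 : ∀ c1 c2 c3 : Fin 3, ¬(c1 ≠ c2 ∧ c2 ≠ c3 ∧ c1 ≠ c3) →
    Kc c1 c2 c3 = Kc c1 c3 c2 := by decide

lemma dND : ∀ a b c : Fin 3, ¬(a ≠ b ∧ b ≠ c ∧ a ≠ c) → ¬(a ≠ c ∧ c ≠ b ∧ a ≠ b) := by decide

lemma dDsw : ∀ a b c : Fin 3, (a ≠ b ∧ b ≠ c ∧ a ≠ c) → (a ≠ c ∧ c ≠ b ∧ a ≠ b) := by decide

lemma dperm : ∀ p q r : Fin 3, p ≠ q → q ≠ r → p ≠ r →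
    (p=0∧q=1∧r=2)∨(p=1∧q=0∧r=2)∨(p=1∧q=2∧r=0)∨(p=2∧q=1∧r=0)∨(p=2∧q=0∧r=1)∨(p=0∧q=2∧r=1) := by
  decide

lemma card5 {α : Type*} [DecidableEq α] (a b c d e : α) :
    ({a,b,c,d,e} : Finset α).card ≤ 8 := by
  have h1 := Finset.card_insert_le a ({b,c,d,e} : Finset α)
  have h2 := Finset.card_insert_le b ({c,d,e} : Finset α)
  have h3 := Finset.card_insert_le c ({d,e} : Finset α)
  have h4 := Finset.card_insert_le d ({e} : Finset α)
  have h5 : ({e} : Finset α).card = 1 := Finset.card_singleton e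
  omega

lemma card6 {α : Type*} [DecidableEq α] (a b c d e f : α) :
    ({a,b,c,d,e,f} : Finset α).card ≤ 8 := by
  have h0 := Finset.card_insert_le a ({b,c,d,e,f} : Finset α)
  have h1 := Finset.card_insert_le b ({c,d,e,f} : Finset α)
  have h2 := Finset.card_insert_le c ({d,e,f} : Finset α)
  have h3 := Finset.card_insert_le d ({e,f} : Finset α)
  have h4 := Finset.card_insert_le e ({f} : Finset α)
  have h5 : ({f} : Finset α).card = 1 := Finset.card_singleton f
  omega

lemma typeA_swap {V : Type*} {r : ℕ} {G : SimpleGraph V} {χ : Sym2 V → Fin r} {W : Finset V}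
    {v : V} {j k ℓ : Fin r} (h : TypeA G χ W v j k ℓ) : TypeA G χ W v k j ℓ := by
  obtain ⟨h1, h2, h3, h4⟩ := h
  exact ⟨fun c => (h1 c).trans or_comm, h3, h2,
    fun u1 hu1 u2 hu2 a1 a2 => h4 u1 hu1 u2 hu2 ⟨a1.1, a1.2.symm⟩ ⟨a2.1, a2.2.symm⟩⟩

end Statement11Aux
open Statement11Aux

/-- Global structure for `r = 3` (colors `0,1,2` playing the roles of `1,2,3`): if `G'` is an
induced subgraph of `G` (on vertex set `W`) obtained by deleting at most `30m` vertices and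
containing no bad bowtie, then either every vertex of `G'` is of type `A(0,1,2)`, `A(1,2,0)`
or `A(2,0,1)`, or there is a color `k` such that every vertex of `G'` is of type `C(k)` or of
type `B(ℓ,k)` for some `ℓ ≠ k`. -/
theorem statement11 {V : Type*} [Fintype V] [DecidableEq V] (m : ℕ) (hm : 1 ≤ m)
    (G : SimpleGraph V) [DecidableRel G.Adj] (χ : Sym2 V → Fin 3)
    (hδ : (Fintype.card V : ℚ) / 2 + 54 * m ≤ (G.minDegree : ℚ))
    (W : Finset V) (hW : (Finset.univ \ W).card ≤ 30 * m)
    (hnobad : ∀ v₁ ∈ W, ∀ v₂ ∈ W, ∀ v₃ ∈ W, ∀ v₄ ∈ W, ∀ v₅ ∈ W,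
      IsBowtie G v₁ v₂ v₃ v₄ v₅ → ∀ k : Fin 3, bowtieF χ v₁ v₂ v₃ v₄ v₅ k = 0) :
    (∀ v ∈ W, TypeA G χ W v 0 1 2 ∨ TypeA G χ W v 1 2 0 ∨ TypeA G χ W v 2 0 1) ∨
    (∃ k : Fin 3, ∀ v ∈ W,
      TypeC G χ W v k ∨ ∃ ℓ : Fin 3, ℓ ≠ k ∧ TypeB G χ W v ℓ k) := by
  classical
  have hWc : ((Finset.univ \ W).card : ℚ) ≤ 30 * m := by exact_mod_cast hW
  have hm1 : (1:ℚ) ≤ (m:ℚ) := by exact_mod_cast hm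
  have hdeg : ∀ x : V, ((Fintype.card V : ℚ) / 2 + 54 * m) ≤ (G.degree x : ℚ) :=
    fun x => hδ.trans (by exact_mod_cast G.minDegree_le_degree x)
  -- common neighbours avoiding a small set
  have hcommon : ∀ u v : V, u ≠ v → ∀ S : Finset V, S.card ≤ 8 →
      ∃ w, w ∈ W ∧ w ∉ S ∧ G.Adj u w ∧ G.Adj v w := by
    intro u v huv S hS
    set T := ((G.neighborFinset u ∩ G.neighborFinset v) ∩ W) \ S with hT
    have hsub : (G.neighborFinset u ∩ G.neighborFinset v) ⊆ T ∪ (Finset.univ \ W) ∪ S := by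
      intro x hx
      by_cases hxS : x ∈ S
      · exact Finset.mem_union_right _ hxS
      by_cases hxW : x ∈ W
      · exact Finset.mem_union_left _ (Finset.mem_union_left _
          (Finset.mem_sdiff.mpr ⟨Finset.mem_inter.mpr ⟨hx, hxW⟩, hxS⟩))
      · exact Finset.mem_union_left _ (Finset.mem_union_right _
          (Finset.mem_sdiff.mpr ⟨Finset.mem_univ x, hxW⟩))
    have h1 : (G.neighborFinset u ∩ G.neighborFinset v).card ≤
        T.card + (Finset.univ \ W).card + S.card := by
      refine le_trans (Finset.card_le_card hsub) ?_
      refine le_trans (Finset.card_union_le _ _) ?_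
      exact Nat.add_le_add_right (Finset.card_union_le _ _) _
    have h2 : G.degree u + G.degree v ≤
        (G.neighborFinset u ∩ G.neighborFinset v).card + Fintype.card V := by
      have e0 := Finset.card_union_add_card_inter (G.neighborFinset u) (G.neighborFinset v)
      have e3 := Finset.card_le_univ (G.neighborFinset u ∪ G.neighborFinset v)
      have e1 : (G.neighborFinset u).card = G.degree u := G.card_neighborFinset_eq_degree u
      have e2 : (G.neighborFinset v).card = G.degree v := G.card_neighborFinset_eq_degree v
      omega
    have hpos : 0 < T.card := by
      have hq1 : ((G.neighborFinset u ∩ G.neighborFinset v).card : ℚ) ≤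
          (T.card : ℚ) + ((Finset.univ \ W).card : ℚ) + (S.card : ℚ) := by exact_mod_cast h1
      have hq2 : (G.degree u : ℚ) + (G.degree v : ℚ) ≤
          ((G.neighborFinset u ∩ G.neighborFinset v).card : ℚ) + (Fintype.card V : ℚ) := by
        exact_mod_cast h2
      have hqS : (S.card : ℚ) ≤ 8 := by exact_mod_cast hS
      have hdu := hdeg u
      have hdv := hdeg v
      have : (0:ℚ) < (T.card : ℚ) := by linarith
      exact_mod_cast this
    obtain ⟨w, hw⟩ := Finset.card_pos.mp hpos
    rw [hT, Finset.mem_sdiff, Finset.mem_inter, Finset.mem_inter,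
      SimpleGraph.mem_neighborFinset, SimpleGraph.mem_neighborFinset] at hw
    exact ⟨w, hw.1.2, hw.2, hw.1.1.1, hw.1.1.2⟩
  -- neighbours in W avoiding a small set
  have hnbr : ∀ v : V, ∀ S : Finset V, S.card ≤ 8 → ∃ u, u ∈ W ∧ u ∉ S ∧ G.Adj v u := by
    intro v S hS
    set T := (G.neighborFinset v ∩ W) \ S with hT
    have hsub : G.neighborFinset v ⊆ T ∪ (Finset.univ \ W) ∪ S := by
      intro x hx
      by_cases hxS : x ∈ S
      · exact Finset.mem_union_right _ hxS
      by_cases hxW : x ∈ W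
      · exact Finset.mem_union_left _ (Finset.mem_union_left _
          (Finset.mem_sdiff.mpr ⟨Finset.mem_inter.mpr ⟨hx, hxW⟩, hxS⟩))
      · exact Finset.mem_union_left _ (Finset.mem_union_right _
          (Finset.mem_sdiff.mpr ⟨Finset.mem_univ x, hxW⟩))
    have h1 : (G.neighborFinset v).card ≤ T.card + (Finset.univ \ W).card + S.card := by
      refine le_trans (Finset.card_le_card hsub) ?_
      refine le_trans (Finset.card_union_le _ _) ?_
      exact Nat.add_le_add_right (Finset.card_union_le _ _) _
    have hpos : 0 < T.card := by
      have e1 : (G.neighborFinset v).card = G.degree v := G.card_neighborFinset_eq_degree v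
      rw [e1] at h1
      have hq1 : (G.degree v : ℚ) ≤
          (T.card : ℚ) + ((Finset.univ \ W).card : ℚ) + (S.card : ℚ) := by exact_mod_cast h1
      have hqS : (S.card : ℚ) ≤ 8 := by exact_mod_cast hS
      have hdv := hdeg v
      have hn0 : (0:ℚ) ≤ (Fintype.card V : ℚ) := Nat.cast_nonneg _
      have : (0:ℚ) < (T.card : ℚ) := by linarith
      exact_mod_cast this
    obtain ⟨w, hw⟩ := Finset.card_pos.mp hpos
    rw [hT, Finset.mem_sdiff, Finset.mem_inter, SimpleGraph.mem_neighborFinset] at hw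
    exact ⟨w, hw.1.2, hw.2, hw.1.1⟩
  -- the bowtie equality in mfv form, disjoint case
  have hbow : ∀ v a b c d : V, v ∈ W → a ∈ W → b ∈ W → c ∈ W → d ∈ W →
      G.Adj v a → G.Adj v b → G.Adj a b → G.Adj v c → G.Adj v d → G.Adj c d →
      a ≠ c → a ≠ d → b ≠ c → b ≠ d →
      ∀ k, mfv (χ s(v,a)) (χ s(v,b)) (χ s(a,b)) k
         = mfv (χ s(v,c)) (χ s(v,d)) (χ s(c,d)) k := by
    intro v a b c d hvW haW hbW hcW hdW hva hvb hab hvc hvd hcd hac had hbc hbd k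
    have hnd : [v,a,b,c,d].Nodup := by
      simp only [List.nodup_cons, List.mem_cons, List.mem_singleton, List.not_mem_nil,
        or_false, List.nodup_nil, and_true, not_or]
      exact ⟨⟨hva.ne, hvb.ne, hvc.ne, hvd.ne⟩, ⟨hab.ne, hac, had⟩, ⟨hbc, hbd⟩, hcd.ne, not_false⟩
    have h0 := hnobad v hvW a haW b hbW c hcW d hdW ⟨hnd, hva, hvb, hvc, hvd, hab, hcd⟩ k
    simp only [bowtieF] at h0
    simp only [mfv]
    linarith
  -- constancy of mfv over triangles with a common apex
  have hMc : ∀ v a b c d : V, v ∈ W → a ∈ W → b ∈ W → c ∈ W → d ∈ W →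
      G.Adj v a → G.Adj v b → G.Adj a b → G.Adj v c → G.Adj v d → G.Adj c d →
      ∀ k, mfv (χ s(v,a)) (χ s(v,b)) (χ s(a,b)) k
         = mfv (χ s(v,c)) (χ s(v,d)) (χ s(c,d)) k := by
    intro v a b c d hvW haW hbW hcW hdW hva hvb hab hvc hvd hcd
    obtain ⟨u, huW, huS, hvu⟩ := hnbr v {v,a,b,c,d} (card5 _ _ _ _ _)
    obtain ⟨w, hwW, hwS, hvw, huw⟩ := hcommon v u hvu.ne ({v,a,b,c,d,u}) (card6 _ _ _ _ _ _)
    simp only [Finset.mem_insert, Finset.mem_singleton, not_or] at huS hwS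
    have e1 := hbow v a b u w hvW haW hbW huW hwW hva hvb hab hvu hvw huw
      (fun h => huS.2.1 h.symm) (fun h => hwS.2.1 h.symm)
      (fun h => huS.2.2.1 h.symm) (fun h => hwS.2.2.1 h.symm)
    have e2 := hbow v c d u w hvW hcW hdW huW hwW hvc hvd hcd hvu hvw huw
      (fun h => huS.2.2.2.1 h.symm) (fun h => hwS.2.2.2.1 h.symm)
      (fun h => huS.2.2.2.2 h.symm) (fun h => hwS.2.2.2.2.1 h.symm)
    exact fun k => (e1 k).trans (e2 k).symm
  -- canonical triangle at each vertex of W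
  have htri : ∀ v : V, ∃ a b : V, v ∈ W →
      a ∈ W ∧ b ∈ W ∧ G.Adj v a ∧ G.Adj v b ∧ G.Adj a b := by
    intro v
    by_cases hv : v ∈ W
    · obtain ⟨u, huW, -, hvu⟩ := hnbr v ∅ (by simp)
      obtain ⟨w, hwW, -, hvw, huw⟩ := hcommon v u hvu.ne ∅ (by simp)
      exact ⟨u, w, fun _ => ⟨huW, hwW, hvu, hvw, huw⟩⟩
    · exact ⟨v, v, fun h => absurd h hv⟩
  choose fa fb hfab using htri
  -- every triangle at v has the same mfv-vector as the canonical one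
  have hMtri : ∀ v, v ∈ W → ∀ x y, x ∈ W → y ∈ W → G.Adj v x → G.Adj v y → G.Adj x y →
      ∀ k, mfv (χ s(v,x)) (χ s(v,y)) (χ s(x,y)) k
         = mfv (χ s(v, fa v)) (χ s(v, fb v)) (χ s(fa v, fb v)) k := by
    intro v hv x y hx hy hvx hvy hxy
    obtain ⟨haW, hbW, hva, hvb, hab⟩ := hfab v hv
    exact hMc v x y (fa v) (fb v) hv hx hy haW hbW hvx hvy hxy hva hvb hab
  -- decode: type A
  have hdecA : ∀ v, v ∈ W →
      (χ s(v, fa v) ≠ χ s(v, fb v) ∧ χ s(v, fb v) ≠ χ s(fa v, fb v) ∧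
        χ s(v, fa v) ≠ χ s(fa v, fb v)) →
      TypeA G χ W v (χ s(v, fa v)) (χ s(v, fb v)) (χ s(fa v, fb v)) := by
    intro v hv hD
    obtain ⟨haW, hbW, hva, hvb, hab⟩ := hfab v hv
    refine ⟨?_, ?_, ?_, ?_⟩
    · intro c
      constructor
      · rintro ⟨u, huW, hadj, hc⟩
        obtain ⟨w, hwW, -, hvw, huw⟩ := hcommon v u hadj.ne ∅ (by simp)
        have ht := hMtri v hv u w huW hwW hadj hvw huw
        rw [← hc]
        exact dA2 _ _ _ _ _ _ hD ht
      · rintro (rfl | rfl)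
        · exact ⟨fa v, haW, hva, rfl⟩
        · exact ⟨fb v, hbW, hvb, rfl⟩
    · rintro u1 h1 u2 h2 ⟨ha1, hc1⟩ ⟨ha2, hc2⟩ hadj
      have ht := hMtri v hv u1 u2 h1 h2 ha1 ha2 hadj
      rw [hc1, hc2] at ht
      exact dA3 _ _ _ _ _ hD ht
    · rintro u1 h1 u2 h2 ⟨ha1, hc1⟩ ⟨ha2, hc2⟩ hadj
      have ht := hMtri v hv u1 u2 h1 h2 ha1 ha2 hadj
      rw [hc1, hc2] at ht
      exact dA3 _ _ _ _ _ hD ht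
    · rintro u1 h1 u2 h2 ⟨ha1, hc1⟩ ⟨ha2, hc2⟩ hadj
      have ht := hMtri v hv u1 u2 h1 h2 ha1 ha2 hadj
      exact dA4 _ _ _ _ _ _ hD hc1 hc2 ht
  -- decode: type B
  have hdecB : ∀ v, v ∈ W → χ s(v, fa v) = χ s(v, fb v) →
      χ s(v, fa v) ≠ χ s(fa v, fb v) →
      TypeB G χ W v (χ s(v, fa v)) (χ s(fa v, fb v)) := by
    intro v hv hPQ hPR
    obtain ⟨haW, hbW, hva, hvb, hab⟩ := hfab v hv
    constructor
    · intro c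
      constructor
      · rintro ⟨u, huW, hadj, hc⟩
        obtain ⟨w, hwW, -, hvw, huw⟩ := hcommon v u hadj.ne ∅ (by simp)
        have ht := hMtri v hv u w huW hwW hadj hvw huw
        rw [← hPQ] at ht
        rw [← hc]
        exact dB1 _ _ _ _ _ hPR ht
      · rintro rfl
        exact ⟨fa v, haW, hva, rfl⟩
    · rintro u1 h1 u2 h2 ⟨ha1, hc1⟩ ⟨ha2, hc2⟩ hadj
      have ht := hMtri v hv u1 u2 h1 h2 ha1 ha2 hadj
      rw [hc1, hc2, ← hPQ] at ht
      exact dB2 _ _ _ ht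
  -- decode: type C
  have hdecC : ∀ v, v ∈ W →
      ¬(χ s(v, fa v) ≠ χ s(v, fb v) ∧ χ s(v, fb v) ≠ χ s(fa v, fb v) ∧
        χ s(v, fa v) ≠ χ s(fa v, fb v)) →
      ¬(χ s(v, fa v) = χ s(v, fb v) ∧ χ s(v, fa v) ≠ χ s(fa v, fb v)) →
      TypeC G χ W v (Kc (χ s(v, fa v)) (χ s(v, fb v)) (χ s(fa v, fb v))) := by
    intro v hv hnd hnb
    have hMe : ∀ k, mfv (χ s(v, fa v)) (χ s(v, fb v)) (χ s(fa v, fb v)) k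
        = (if Kc (χ s(v, fa v)) (χ s(v, fb v)) (χ s(fa v, fb v)) = k then 1 else 0) :=
      dK _ _ _ hnd hnb
    refine ⟨?_, ?_, ?_⟩
    · rintro u1 h1 u2 h2 ⟨ha1, hc1⟩ ⟨ha2, hc2⟩ hadj
      have ht := fun k => (hMtri v hv u1 u2 h1 h2 ha1 ha2 hadj k).trans (hMe k)
      rw [hc1, hc2] at ht
      exact dC1 _ _ ht
    · rintro u1 h1 u2 h2 ⟨ha1, hc1⟩ ⟨ha2, hc2⟩ hadj
      have ht := fun k => (hMtri v hv u1 u2 h1 h2 ha1 ha2 hadj k).trans (hMe k)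
      exact dC2 _ _ _ _ hc1 hc2 ht
    · rintro ℓ hℓ u1 h1 u2 h2 ⟨ha1, hc1⟩ ⟨ha2, hc2⟩ hadj
      have ht := fun k => (hMtri v hv u1 u2 h1 h2 ha1 ha2 hadj k).trans (hMe k)
      rw [hc1, hc2] at ht
      exact dC3 _ _ _ hℓ ht
  -- propagation along edges
  have hstepA : ∀ u v, u ∈ W → v ∈ W → G.Adj u v →
      (χ s(u, fa u) ≠ χ s(u, fb u) ∧ χ s(u, fb u) ≠ χ s(fa u, fb u) ∧
        χ s(u, fa u) ≠ χ s(fa u, fb u)) →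
      (χ s(v, fa v) ≠ χ s(v, fb v) ∧ χ s(v, fb v) ≠ χ s(fa v, fb v) ∧
        χ s(v, fa v) ≠ χ s(fa v, fb v)) := by
    intro u v hu hv hadj hD
    obtain ⟨w, hwW, -, huw, hvw⟩ := hcommon u v hadj.ne ∅ (by simp)
    have h1 := hMtri u hu v w hv hwW hadj huw hvw
    have h2 := hMtri v hv u w hu hwW hadj.symm hvw huw
    have hsw : χ s(v,u) = χ s(u,v) := by rw [Sym2.eq_swap]
    rw [hsw] at h2
    have hd1 := dA _ _ _ _ _ _ hD h1
    have hd2 := dDsw _ _ _ hd1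
    exact dA _ _ _ _ _ _ hd2 (fun k => (h2 k).symm)
  have hstepK : ∀ u v, u ∈ W → v ∈ W → G.Adj u v →
      ¬(χ s(u, fa u) ≠ χ s(u, fb u) ∧ χ s(u, fb u) ≠ χ s(fa u, fb u) ∧
        χ s(u, fa u) ≠ χ s(fa u, fb u)) →
      (¬(χ s(v, fa v) ≠ χ s(v, fb v) ∧ χ s(v, fb v) ≠ χ s(fa v, fb v) ∧
        χ s(v, fa v) ≠ χ s(fa v, fb v)) ∧
        Kc (χ s(v, fa v)) (χ s(v, fb v)) (χ s(fa v, fb v))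
          = Kc (χ s(u, fa u)) (χ s(u, fb u)) (χ s(fa u, fb u))) := by
    intro u v hu hv hadj hND
    obtain ⟨w, hwW, -, huw, hvw⟩ := hcommon u v hadj.ne ∅ (by simp)
    have h1 := hMtri u hu v w hv hwW hadj huw hvw
    have h2 := hMtri v hv u w hu hwW hadj.symm hvw huw
    have hsw : χ s(v,u) = χ s(u,v) := by rw [Sym2.eq_swap]
    rw [hsw] at h2
    obtain ⟨hnd1, hk1⟩ := dD1 _ _ _ _ _ _ hND h1
    have hnd1' := dND _ _ _ hnd1
    obtain ⟨hnd2, hk2⟩ := dD1 _ _ _ _ _ _ hnd1' (fun k => (h2 k).symm)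
    refine ⟨hnd2, ?_⟩
    rw [hk2, ← dD3 _ _ _ hnd1, hk1]
  -- final assembly
  rcases W.eq_empty_or_nonempty with hWe | ⟨v0, hv0⟩
  · right
    exact ⟨0, by simp [hWe]⟩
  by_cases hA : χ s(v0, fa v0) ≠ χ s(v0, fb v0) ∧ χ s(v0, fb v0) ≠ χ s(fa v0, fb v0) ∧
      χ s(v0, fa v0) ≠ χ s(fa v0, fb v0)
  · left
    intro v hv
    have hAv : χ s(v, fa v) ≠ χ s(v, fb v) ∧ χ s(v, fb v) ≠ χ s(fa v, fb v) ∧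
        χ s(v, fa v) ≠ χ s(fa v, fb v) := by
      by_cases hvv : v = v0
      · rw [hvv]; exact hA
      · obtain ⟨w, hwW, -, h1, h2⟩ := hcommon v0 v (fun h => hvv h.symm) ∅ (by simp)
        exact hstepA w v hwW hv h2.symm (hstepA v0 w hv0 hwW h1 hA)
    have hTA := hdecA v hv hAv
    obtain ⟨h1, h2, h3⟩ := hAv
    rcases dperm _ _ _ h1 h2 h3 with h | h | h | h | h | h <;>
      rw [h.1, h.2.1, h.2.2] at hTA
    · exact Or.inl hTA
    · exact Or.inl (typeA_swap hTA)
    · exact Or.inr (Or.inl hTA)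
    · exact Or.inr (Or.inl (typeA_swap hTA))
    · exact Or.inr (Or.inr hTA)
    · exact Or.inr (Or.inr (typeA_swap hTA))
  · right
    refine ⟨Kc (χ s(v0, fa v0)) (χ s(v0, fb v0)) (χ s(fa v0, fb v0)), ?_⟩
    intro v hv
    have hKv : ¬(χ s(v, fa v) ≠ χ s(v, fb v) ∧ χ s(v, fb v) ≠ χ s(fa v, fb v) ∧
        χ s(v, fa v) ≠ χ s(fa v, fb v)) ∧
        Kc (χ s(v, fa v)) (χ s(v, fb v)) (χ s(fa v, fb v))
          = Kc (χ s(v0, fa v0)) (χ s(v0, fb v0)) (χ s(fa v0, fb v0)) := by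
      by_cases hvv : v = v0
      · rw [hvv]; exact ⟨hA, rfl⟩
      · obtain ⟨w, hwW, -, h1, h2⟩ := hcommon v0 v (fun h => hvv h.symm) ∅ (by simp)
        have s1 := hstepK v0 w hv0 hwW h1 hA
        have s2 := hstepK w v hwW hv h2.symm s1.1
        exact ⟨s2.1, s2.2.trans s1.2⟩
    obtain ⟨hnd, hK⟩ := hKv
    by_cases hB : χ s(v, fa v) = χ s(v, fb v) ∧ χ s(v, fa v) ≠ χ s(fa v, fb v)
    · right
      have hKR : Kc (χ s(v, fa v)) (χ s(v, fb v)) (χ s(fa v, fb v)) = χ s(fa v, fb v) := by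
        simp [Kc, hB.1]
      refine ⟨χ s(v, fa v), ?_, ?_⟩
      · rw [← hK, hKR]
        exact hB.2
      · rw [← hK, hKR]
        exact hdecB v hv hB.1 hB.2
    · left
      rw [← hK]
      exact hdecC v hv hnd hB
end

section
/- Let r ≥ 2 be an integer with 2r | n and n ≥ 2r. Let G be the n-vertex graph whose vertex set is partitioned as V(G) = V₁ ∪ ⋯ ∪ V_r with |V_i| = n/(2r) for 1 ≤ i < r and |V_r| = (r+1)n/(2r), and whose edge set consists of all pairs of vertices having at least one endpoint in V_r; define χ : E(G) → [r] by χ(uv) = i whenever u ∈ V_r and v ∈ V_i with 1 ≤ i < r, and χ(uv) = r whenever both u, v ∈ V_r. Then every Hamilton cycle H of G contains exactly n/r edges of each color; in particular d_χ(H) = 0. -/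
open SimpleGraph

lemma my_countP_or {α : Type*} (p q : α → Prop) [DecidablePred p] [DecidablePred q] :
    ∀ L : List α, (∀ x ∈ L, ¬(p x ∧ q x)) →
      L.countP (fun x => decide (p x) || decide (q x)) = L.countP (fun x => decide (p x))
        + L.countP (fun x => decide (q x))
  | [], _ => by simp
  | a :: L, h => by
    have hrec := my_countP_or p q L (fun x hx => h x (List.mem_cons_of_mem _ hx))
    have ha := h a List.mem_cons_self
    by_cases hp : p a <;> by_cases hq : q a <;>
      all_goals (simp_all [List.countP_cons]; try omega)

lemma my_incid {V : Type*} [DecidableEq V] {G : SimpleGraph V} {v : V} (H : G.Walk v v)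
    (hH : H.IsHamiltonianCycle) (a : V) : H.edges.countP (fun e => a ∈ e) = 2 := by
  have htail : H.support.tail.count a = 1 := by
    rw [← Walk.support_tail_of_not_nil _ hH.1.not_nil]
    exact hH.isHamiltonian_tail a
  have hdrop : H.support.dropLast.count a = 1 := by
    have h1 : H.support.dropLast ++ [v] = H.support := by
      conv_rhs => rw [← H.support.dropLast_append_getLast (by simp [Walk.support_ne_nil])]
      rw [Walk.getLast_support]
    have h2 : H.support = v :: H.support.tail := by
      rw [← Walk.support_tail_of_not_nil _ hH.1.not_nil]
      exact (H.cons_support_tail hH.1.not_nil).symm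
    have h3 := congrArg (List.count a) h1
    have h4 := congrArg (List.count a) h2
    rw [List.count_append] at h3
    rw [List.count_cons] at h4
    by_cases hv : v = a <;> simp [List.count_cons, hv] at h3 h4 <;> omega
  rw [Walk.edges, List.countP_map]
  have hcg : List.countP ((fun e => decide (a ∈ e)) ∘ Dart.edge) H.darts
      = List.countP (fun d : G.Dart => decide (d.toProd.1 = a) || decide (d.toProd.2 = a)) H.darts := by
    apply List.countP_congr
    intro d _
    have : d.edge = s(d.toProd.1, d.toProd.2) := rfl
    simp only [Function.comp_apply, this, Sym2.mem_iff, decide_eq_true_eq, Bool.or_eq_true]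
    constructor
    · rintro (h | h) <;> simp [h]
    · rintro (h | h) <;> simp [h]
  rw [hcg, my_countP_or _ _ H.darts (fun d _ ⟨h1, h2⟩ => d.fst_ne_snd (h1.trans h2.symm))]
  have hfst : H.darts.countP (fun d : G.Dart => decide (d.toProd.1 = a)) = 1 := by
    have h1 : (H.darts.map (·.fst)).count a = 1 := by rw [H.map_fst_darts]; exact hdrop
    rw [List.count_eq_countP, List.countP_map] at h1
    rw [← h1]
    apply List.countP_congr; intro d _; simp [Function.comp, beq_iff_eq]
  have hsnd : H.darts.countP (fun d : G.Dart => decide (d.toProd.2 = a)) = 1 := by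
    have h1 : (H.darts.map (·.snd)).count a = 1 := by rw [H.map_snd_darts]; exact htail
    rw [List.count_eq_countP, List.countP_map] at h1
    rw [← h1]
    apply List.countP_congr; intro d _; simp [Function.comp, beq_iff_eq]
  omega

lemma my_total {V : Type*} {r : ℕ} (χ : Sym2 V → Fin r) :
    ∀ L : List (Sym2 V), ∑ i : Fin r, L.countP (fun e => χ e = i) = L.length
  | [] => by simp
  | e :: L => by
    simp only [List.countP_cons, List.length_cons, Finset.sum_add_distrib, my_total χ L]
    have : ∑ i : Fin r, (if χ e = i then 1 else 0) = 1 := by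
      rw [Finset.sum_ite_eq (Finset.univ) (χ e) (fun _ => 1)]
      simp
    simp only [decide_eq_true_eq] at *
    omega

lemma my_swap {V : Type*} [DecidableEq V] {r : ℕ} (χ : Sym2 V → Fin r) (i : Fin r) (S : Finset V) :
    ∀ L : List (Sym2 V), (∀ e ∈ L, (χ e = i ↔ ∃ v ∈ S, v ∈ e)) →
      (∀ e ∈ L, ∀ v ∈ S, ∀ w ∈ S, v ∈ e → w ∈ e → v = w) →
      L.countP (fun e => χ e = i) = ∑ v ∈ S, L.countP (fun e => v ∈ e)
  | [], _, _ => by simp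
  | e :: L, h1, h2 => by
    have hrec := my_swap χ i S L (fun e he => h1 e (List.mem_cons_of_mem _ he))
      (fun e he => h2 e (List.mem_cons_of_mem _ he))
    simp only [List.countP_cons, Finset.sum_add_distrib, ← hrec]
    have hkey : ∑ v ∈ S, (if v ∈ e then 1 else 0) = if χ e = i then 1 else 0 := by
      rw [← Finset.card_filter]
      by_cases hc : χ e = i
      · obtain ⟨v, hvS, hve⟩ := (h1 e List.mem_cons_self).1 hc
        rw [if_pos hc, Finset.card_eq_one]
        refine ⟨v, ?_⟩
        ext w
        simp only [Finset.mem_filter, Finset.mem_singleton]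
        constructor
        · rintro ⟨hwS, hwe⟩
          exact h2 e List.mem_cons_self w hwS v hvS hwe hve
        · rintro rfl; exact ⟨hvS, hve⟩
      · rw [if_neg hc, Finset.card_eq_zero]
        ext w
        simp only [Finset.mem_filter, Finset.notMem_empty, iff_false, not_and]
        intro hwS hwe
        exact hc ((h1 e List.mem_cons_self).2 ⟨w, hwS, hwe⟩)
    simp only [decide_eq_true_eq] at *
    omega

/-- The extremal construction for general `r ≥ 2`: the vertex set is partitioned into parts
`P 0, …, P (r-1)` where the last part `P kr` (with `kr = r - 1`) has size `(r+1)n/(2r)` and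
all other parts have size `n/(2r)`; the edges are exactly the pairs meeting `P kr`, an edge
between `P kr` and `P i` gets color `i`, and edges inside `P kr` get color `kr`. Then every
Hamilton cycle contains exactly `n/r` edges of each color (in particular its color-bias is 0). -/
theorem statement12 {V : Type*} [Fintype V] [DecidableEq V] (r n : ℕ) (hr : 2 ≤ r)
    (hn : n = Fintype.card V) (hdvd : 2 * r ∣ n) (hge : 2 * r ≤ n)
    (P : Fin r → Finset V)
    (hdisj : ∀ i j : Fin r, i ≠ j → Disjoint (P i) (P j))
    (hcover : Finset.univ.biUnion P = Finset.univ)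
    (kr : Fin r) (hkr : (kr : ℕ) = r - 1)
    (hsize : ∀ i : Fin r, i ≠ kr → 2 * r * (P i).card = n)
    (hsizek : 2 * r * (P kr).card = (r + 1) * n)
    (G : SimpleGraph V)
    (hG : ∀ u w : V, G.Adj u w ↔ u ≠ w ∧ (u ∈ P kr ∨ w ∈ P kr))
    (χ : Sym2 V → Fin r)
    (hχ : ∀ u w : V, u ≠ w → u ∈ P kr → ∀ i : Fin r, w ∈ P i → χ s(u, w) = i) :
    ∀ (v : V) (H : G.Walk v v), H.IsHamiltonianCycle →
      ∀ i : Fin r, r * (H.edges.filter (fun e => χ e = i)).length = n := by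
  intro v H hH
  have hpart : ∀ w : V, ∃ j : Fin r, w ∈ P j := by
    intro w
    have : w ∈ Finset.univ.biUnion P := by rw [hcover]; exact Finset.mem_univ w
    simpa using Finset.mem_biUnion.1 this
  have hnotin : ∀ (j : Fin r) (w : V), j ≠ kr → w ∈ P j → w ∉ P kr := by
    intro j w hj hw hwk
    exact (Finset.disjoint_left.1 (hdisj j kr hj)) hw hwk
  have hcount : ∀ j : Fin r, j ≠ kr →
      H.edges.countP (fun e => χ e = j) = 2 * (P j).card := by
    intro j hj
    rw [my_swap χ j (P j) H.edges ?_ ?_]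
    · rw [Finset.sum_congr rfl (fun w _ => my_incid H hH w)]
      simp [Finset.sum_const, mul_comm]
    · -- h1
      intro e he
      obtain ⟨x, y, rfl⟩ : ∃ x y, e = s(x, y) := ⟨e.out.1, e.out.2, by exact (Quot.out_eq e).symm⟩
      have hadj : G.Adj x y := H.adj_of_mem_edges he
      obtain ⟨hxy, hmem⟩ := (hG x y).1 hadj
      constructor
      · intro hc
        rcases hmem with hx | hy
        · obtain ⟨t, hyt⟩ := hpart y
          have := hχ x y hxy hx t hyt
          rw [hc] at this
          exact ⟨y, this ▸ hyt, by simp⟩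
        · obtain ⟨t, hxt⟩ := hpart x
          have := hχ y x (Ne.symm hxy) hy t hxt
          rw [Sym2.eq_swap, hc] at this
          exact ⟨x, this ▸ hxt, by simp⟩
      · rintro ⟨w, hwPj, hwe⟩
        rcases Sym2.mem_iff.1 hwe with rfl | rfl
        · have hynk : w ∉ P kr := hnotin j w hj hwPj
          have hy : y ∈ P kr := by tauto
          have := hχ y w (Ne.symm hxy) hy j hwPj
          rwa [Sym2.eq_swap] at this
        · have hxnk : w ∉ P kr := hnotin j w hj hwPj
          have hx : x ∈ P kr := by tauto
          exact hχ x w hxy hx j hwPj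
    · -- h2
      intro e he w hw w' hw' hwe hw'e
      by_contra hne
      have hee : e = s(w, w') := (Sym2.mem_and_mem_iff hne).1 ⟨hwe, hw'e⟩
      have hadj : G.Adj w w' := by
        have := H.adj_of_mem_edges (hee ▸ he)
        exact this
      obtain ⟨-, hmem⟩ := (hG w w').1 hadj
      rcases hmem with h | h
      · exact hnotin j w hj hw h
      · exact hnotin j w' hj hw' h
  have hlen : H.edges.length = n := by
    rw [Walk.length_edges, hH.length_eq, hn]
  have htot := my_total χ H.edges
  rw [hlen] at htot
  intro i
  rw [← List.countP_eq_length_filter]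
  by_cases hi : i = kr
  · subst hi
    have hsplit : ∑ j ∈ (Finset.univ : Finset (Fin r)).erase i, H.edges.countP (fun e => χ e = j)
        + H.edges.countP (fun e => χ e = i) = n := by
      rw [Finset.sum_erase_add _ _ (Finset.mem_univ i)]; exact htot
    have hterm : ∀ j ∈ (Finset.univ : Finset (Fin r)).erase i,
        r * H.edges.countP (fun e => χ e = j) = n := by
      intro j hj
      rw [hcount j (Finset.ne_of_mem_erase hj)]
      calc r * (2 * (P j).card) = 2 * r * (P j).card := by ring
      _ = n := hsize j (Finset.ne_of_mem_erase hj)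
    have herase : ∑ j ∈ (Finset.univ : Finset (Fin r)).erase i,
        r * H.edges.countP (fun e => χ e = j) = (r - 1) * n := by
      rw [Finset.sum_congr rfl hterm, Finset.sum_const,
        Finset.card_erase_of_mem (Finset.mem_univ _), Finset.card_univ, Fintype.card_fin,
        smul_eq_mul]
    have hmul := congrArg (r * ·) hsplit
    simp only [mul_add, Finset.mul_sum] at hmul
    rw [herase] at hmul
    have hrn : (r - 1) * n + n = r * n := by
      cases r with
      | zero => omega
      | succ m => simp [Nat.succ_mul]
    omega
  · rw [hcount i hi]
    calc r * (2 * (P i).card) = 2 * r * (P i).card := by ring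
    _ = n := hsize i hi
end

section
/- Let n ≥ 3 with 3 | n, and let G be the complete 3-partite graph with vertex partition V(G) = V₁ ∪ V₂ ∪ V₃, |V₁| = |V₂| = |V₃| = n/3 (edges exactly between distinct parts). Define χ : E(G) → [3] by χ(uv) = k if and only if u, v ∉ V_k. Then every Hamilton cycle H of G contains exactly n/3 edges of each of the three colors; in particular d_χ(H) = 0. -/
open SimpleGraph

private lemma countP_or_disj {α : Type*} (l : List α) (p q : α → Bool)
    (h : ∀ x ∈ l, ¬(p x = true ∧ q x = true)) :
    l.countP (fun x => p x || q x) = l.countP p + l.countP q := by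
  induction l with
  | nil => simp
  | cons a t ih =>
    simp only [List.countP_cons]
    rw [ih (fun x hx => h x (List.mem_cons_of_mem _ hx))]
    have := h a List.mem_cons_self
    cases hp : p a <;> cases hq : q a <;> simp_all <;> omega

private lemma sum_countP_list {V : Type*} [DecidableEq V] (s : Finset V) (l : List (Sym2 V))
    (h : ∀ e ∈ l, (s.filter (fun v => v ∈ e)).card ≤ 1) :
    ∑ v ∈ s, l.countP (fun e => decide (v ∈ e)) =
      l.countP (fun e => decide (∃ v ∈ s, v ∈ e)) := by
  induction l with
  | nil => simp
  | cons e t ih =>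
    simp only [List.countP_cons]
    rw [Finset.sum_add_distrib, ih (fun e he => h e (List.mem_cons_of_mem _ he))]
    congr 1
    have hcard := h e List.mem_cons_self
    by_cases hex : ∃ v ∈ s, v ∈ e
    · rw [if_pos (decide_eq_true hex)]
      have h1 : 1 ≤ (s.filter (fun v => v ∈ e)).card := by
        obtain ⟨v, hv, hve⟩ := hex
        exact Finset.card_pos.mpr ⟨v, Finset.mem_filter.mpr ⟨hv, hve⟩⟩
      have : (s.filter (fun v => v ∈ e)).card = 1 := le_antisymm hcard h1
      calc ∑ v ∈ s, (if decide (v ∈ e) = true then 1 else 0)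
          = (s.filter (fun v => v ∈ e)).card := by
            rw [Finset.card_filter]
            refine Finset.sum_congr rfl fun v _ => by by_cases hv : v ∈ e <;> simp [hv]
        _ = 1 := this
    · rw [if_neg (by simpa using hex)]
      refine Finset.sum_eq_zero fun v hv => ?_
      have : ¬ v ∈ e := fun hve => hex ⟨v, hv, hve⟩
      simp [this]

/-- The extremal construction for `r = 3`: `G` is the complete 3-partite graph with parts
`P 0, P 1, P 2` of size `n/3` each, and an edge `uv` gets color `k` if and only if
`u, v ∉ P k`. Then every Hamilton cycle of `G` contains exactly `n/3` edges of each of the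
three colors (in particular its color-bias is 0). -/
theorem statement13 {V : Type*} [Fintype V] [DecidableEq V] (n : ℕ)
    (hn : n = Fintype.card V) (hdvd : 3 ∣ n) (hge : 3 ≤ n)
    (P : Fin 3 → Finset V)
    (hdisj : ∀ i j : Fin 3, i ≠ j → Disjoint (P i) (P j))
    (hcover : Finset.univ.biUnion P = Finset.univ)
    (hsize : ∀ i : Fin 3, 3 * (P i).card = n)
    (G : SimpleGraph V)
    (hG : ∀ u w : V, G.Adj u w ↔ ∃ i j : Fin 3, i ≠ j ∧ u ∈ P i ∧ w ∈ P j)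
    (χ : Sym2 V → Fin 3)
    (hχ : ∀ u w : V, G.Adj u w → ∀ k : Fin 3, (χ s(u, w) = k ↔ (u ∉ P k ∧ w ∉ P k))) :
    ∀ (v : V) (H : G.Walk v v), H.IsHamiltonianCycle →
      ∀ k : Fin 3, 3 * (H.edges.filter (fun e => χ e = k)).length = n := by
  intro v H hH k
  -- a vertex is in at most one part
  have huniq : ∀ (x : V) (i j : Fin 3), x ∈ P i → x ∈ P j → i = j := by
    intro x i j hi hj
    by_contra hne
    exact Finset.disjoint_left.mp (hdisj i j hne) hi hj
  -- every vertex is incident with exactly two edges of the cycle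
  have hlen : H.length = n := by rw [hH.length_eq, hn]
  have htail : ∀ x : V, H.support.tail.count x = 1 := by
    rw [Walk.isHamiltonianCycle_iff_isCycle_and_support_count_tail_eq_one] at hH
    exact hH.2
  have hdropLast : ∀ x : V, H.support.dropLast.count x = 1 := by
    intro x
    have hne : H.support ≠ [] := H.support_ne_nil
    have h1 : H.support.dropLast ++ [H.support.getLast hne] = H.support :=
      List.dropLast_append_getLast hne
    have hgl : H.support.getLast hne = v := H.getLast_support
    have h2 : H.support = v :: H.support.tail := H.support_eq_cons
    have c1 : H.support.count x = H.support.dropLast.count x + [v].count x := by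
      conv_lhs => rw [← h1, hgl]
      rw [List.count_append]
    have c2 : H.support.count x = [v].count x + H.support.tail.count x := by
      conv_lhs => rw [h2]
      rcases eq_or_ne v x with rfl | hvx
      · rw [List.count_cons]; simp [Nat.add_comm]
      · rw [List.count_cons]; simp [hvx]
    have := htail x
    omega
  have hmem : ∀ (d : G.Dart) (x : V), x ∈ d.edge ↔ x = d.fst ∨ x = d.snd := by
    rintro ⟨⟨a, b⟩, hab⟩ x
    simp [Dart.edge]
  have htwo : ∀ x : V, H.edges.countP (fun e => decide (x ∈ e)) = 2 := by
    intro x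
    have : H.edges.countP (fun e => decide (x ∈ e)) =
        H.darts.countP (fun d => decide (d.fst = x) || decide (d.snd = x)) := by
      rw [Walk.edges, List.countP_map]
      refine List.countP_congr fun d _ => ?_
      simp only [Function.comp_apply, hmem d x, decide_eq_true_eq, Bool.or_eq_true]
      constructor
      · rintro (rfl | rfl)
        · exact Or.inl rfl
        · exact Or.inr rfl
      · rintro (h | h)
        · exact Or.inl h.symm
        · exact Or.inr h.symm
    rw [this, countP_or_disj _ _ _ (by
      intro d _ hd
      simp only [decide_eq_true_eq] at hd
      exact d.adj.ne (hd.1.trans hd.2.symm))]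
    have hf : H.darts.countP (fun d => decide (d.fst = x)) = H.support.dropLast.count x := by
      rw [← Walk.map_fst_darts, List.count_eq_countP, List.countP_map]
      refine List.countP_congr fun d _ => ?_
      simp [Function.comp]
    have hs : H.darts.countP (fun d => decide (d.snd = x)) = H.support.tail.count x := by
      rw [← Walk.map_snd_darts, List.count_eq_countP, List.countP_map]
      refine List.countP_congr fun d _ => ?_
      simp [Function.comp]
    rw [hf, hs, hdropLast, htail]
  -- per-edge facts
  have hedgeG : ∀ e ∈ H.edges, e ∈ G.edgeSet := fun e he => H.edges_subset_edgeSet he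
  have hone : ∀ e ∈ H.edges, ((P k).filter (fun x => x ∈ e)).card ≤ 1 := by
    intro e he
    have hG' := hedgeG e he
    induction e with
    | h u w =>
      rw [mem_edgeSet, hG u w] at hG'
      obtain ⟨i, j, hij, hu, hw⟩ := hG'
      have hnot : ¬ (u ∈ P k ∧ w ∈ P k) := by
        rintro ⟨hu', hw'⟩
        exact hij ((huniq u i k hu hu').trans (huniq w j k hw hw').symm)
      by_cases huk : u ∈ P k
      · refine Finset.card_le_one.mpr fun a ha b hb => ?_
        simp only [Finset.mem_filter, Sym2.mem_iff] at ha hb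
        have hwk : w ∉ P k := fun h => hnot ⟨huk, h⟩
        rcases ha.2 with rfl | rfl
        · rcases hb.2 with rfl | rfl
          · rfl
          · exact absurd hb.1 hwk
        · exact absurd ha.1 hwk
      · refine Finset.card_le_one.mpr fun a ha b hb => ?_
        simp only [Finset.mem_filter, Sym2.mem_iff] at ha hb
        rcases ha.2 with rfl | rfl
        · exact absurd ha.1 huk
        · rcases hb.2 with rfl | rfl
          · exact absurd hb.1 huk
          · rfl
  have hcolor : ∀ e ∈ H.edges, ((∃ x ∈ P k, x ∈ e) ↔ ¬ χ e = k) := by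
    intro e he
    have hG' := hedgeG e he
    induction e with
    | h u w =>
      rw [mem_edgeSet] at hG'
      have hiff := hχ u w hG' k
      by_cases hck : χ s(u, w) = k
      · have := hiff.mp hck
        have hnone : ¬ ∃ x ∈ P k, x ∈ s(u, w) := by
          rintro ⟨x, hx, hxe⟩
          rw [Sym2.mem_iff] at hxe
          rcases hxe with rfl | rfl
          · exact this.1 hx
          · exact this.2 hx
        exact iff_of_false hnone (not_not_intro hck)
      · have : u ∈ P k ∨ w ∈ P k := by
          by_contra hcon
          push_neg at hcon
          exact hck (hiff.mpr hcon)
        have hex : ∃ x ∈ P k, x ∈ s(u, w) := by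
          rcases this with h | h
          · exact ⟨u, h, by simp⟩
          · exact ⟨w, h, by simp⟩
        exact iff_of_true hex hck
  -- count edges touching `P k`
  have htouch : H.edges.countP (fun e => decide (∃ x ∈ P k, x ∈ e)) = 2 * (P k).card := by
    rw [← sum_countP_list (P k) H.edges hone]
    rw [Finset.sum_congr rfl (fun x _ => htwo x), Finset.sum_const, smul_eq_mul, mul_comm]
  have hsplit : H.edges.length = H.edges.countP (fun e => decide (χ e = k)) +
      H.edges.countP (fun e => decide (∃ x ∈ P k, x ∈ e)) := by
    rw [List.length_eq_countP_add_countP (fun e => decide (χ e = k))]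
    congr 1
    refine List.countP_congr fun e he => ?_
    simpa using (hcolor e he).symm
  have hlen' : H.edges.length = n := by rw [Walk.length_edges, hlen]
  have hfilter : (H.edges.filter (fun e => χ e = k)).length =
      H.edges.countP (fun e => decide (χ e = k)) := List.countP_eq_length_filter.symm
  have hsz := hsize k
  omega
end

section
/- Let n and t be positive integers with t < n and n − t even. Let G be the n-vertex graph with vertex partition V(G) = V₀ ∪ V₁ ∪ V₂ where |V₁| = |V₂| = (n−t)/2 and |V₀| = t, whose edges are: all pairs inside V₀ ∪ V₂ (colored red), all pairs inside V₁ (colored blue), and all pairs between V₀ and V₁ (colored blue). Then δ(G) = (n+t)/2 − 1, and every Hamilton cycle H of G contains at least (n−t)/2 red edges and at least (n−t)/2 blue edges; consequently, the number of edges of H of each color differs from n/2 by at most t/2. -/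
open SimpleGraph

private lemma aux_fin2 : ∀ x : Fin 2, x = 0 ∨ x = 1 := by decide

private lemma aux_sum_add {α : Type*} (l : List α) (f g : α → ℕ) :
    (l.map fun x => f x + g x).sum = (l.map f).sum + (l.map g).sum := by
  induction l with
  | nil => simp
  | cons a l ih => simp [ih]; omega

private lemma aux_sum_le {α : Type*} (l : List α) (g : α → ℕ) (p : α → Bool)
    (hle : ∀ d ∈ l, g d ≤ 2) (h0 : ∀ d ∈ l, p d = false → g d = 0) :
    (l.map g).sum ≤ 2 * (l.filter p).length := by
  induction l with
  | nil => simp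
  | cons a l ih =>
    have ih' := ih (fun d hd => hle d (List.mem_cons_of_mem _ hd))
      (fun d hd => h0 d (List.mem_cons_of_mem _ hd))
    cases h : p a with
    | true =>
      have := hle a List.mem_cons_self
      simp only [List.map_cons, List.sum_cons, List.filter_cons, h, if_true,
        List.length_cons]
      omega
    | false =>
      have hz := h0 a List.mem_cons_self h
      simp only [List.map_cons, List.sum_cons, List.filter_cons, h, hz, Bool.false_eq_true,
        if_false]
      omega

private lemma aux_two_filter {β : Type*} (χ : β → Fin 2) (l : List β) :
    (l.filter (fun e => χ e = 0)).length + (l.filter (fun e => χ e = 1)).length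
      = l.length := by
  induction l with
  | nil => simp
  | cons a l ih =>
    rcases aux_fin2 (χ a) with h | h <;> simp [List.filter_cons, h] <;> omega

/-- The extremal construction witnessing optimality of the error term for `r = 2`.
Color `0 : Fin 2` plays the role of red and `1 : Fin 2` the role of blue.
`G` has vertex partition `V₀ ∪ V₁ ∪ V₂` with `|V₁| = |V₂| = (n-t)/2`, `|V₀| = t`; all pairs
inside `V₀ ∪ V₂` are (red) edges, all pairs inside `V₁` and between `V₀` and `V₁` are (blue)
edges. Then `δ(G) = (n+t)/2 − 1`, every Hamilton cycle has at least `(n−t)/2` edges of each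
color, and hence the number of edges of each color differs from `n/2` by at most `t/2`. -/
theorem statement14 {V : Type*} [Fintype V] [DecidableEq V]
    (n t : ℕ) (hn : n = Fintype.card V) (ht : 1 ≤ t) (htn : t < n) (heven : Even (n - t))
    (V₀ V₁ V₂ : Finset V)
    (hd01 : Disjoint V₀ V₁) (hd02 : Disjoint V₀ V₂) (hd12 : Disjoint V₁ V₂)
    (hcover : V₀ ∪ V₁ ∪ V₂ = Finset.univ)
    (hc1 : 2 * V₁.card = n - t) (hc2 : 2 * V₂.card = n - t) (hc0 : V₀.card = t)
    (G : SimpleGraph V) [DecidableRel G.Adj]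
    (hG : ∀ u w : V, G.Adj u w ↔ u ≠ w ∧
      ((u ∈ V₀ ∪ V₂ ∧ w ∈ V₀ ∪ V₂) ∨ (u ∈ V₁ ∧ w ∈ V₁) ∨
        (u ∈ V₀ ∧ w ∈ V₁) ∨ (u ∈ V₁ ∧ w ∈ V₀)))
    (χ : Sym2 V → Fin 2)
    (hχ : ∀ u w : V, G.Adj u w →
      (χ s(u, w) = 0 ↔ (u ∈ V₀ ∪ V₂ ∧ w ∈ V₀ ∪ V₂))) :
    2 * (G.minDegree + 1) = n + t ∧
    ∀ (v : V) (H : G.Walk v v), H.IsHamiltonianCycle →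
      (n - t ≤ 2 * (H.edges.filter (fun e => χ e = 0)).length ∧
       n - t ≤ 2 * (H.edges.filter (fun e => χ e = 1)).length ∧
       ∀ i : Fin 2,
         |((H.edges.filter (fun e => χ e = i)).length : ℚ) - (n : ℚ) / 2| ≤ (t : ℚ) / 2) := by
  have hm1 : V₁.card = V₂.card := by omega
  set m := V₂.card with hm
  have hnm : n = t + 2 * m := by omega
  have hmpos : 1 ≤ m := by omega
  have hnea : Nonempty V := by
    rw [← Fintype.card_pos_iff]
    omega
  have hmem : ∀ x : V, x ∈ V₀ ∨ x ∈ V₁ ∨ x ∈ V₂ := by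
    intro x
    have hx : x ∈ V₀ ∪ V₁ ∪ V₂ := hcover ▸ Finset.mem_univ x
    simpa [Finset.mem_union, or_assoc] using hx
  have h01 : ∀ x ∈ V₀, x ∉ V₁ := fun x hx => Finset.disjoint_left.mp hd01 hx
  have h02 : ∀ x ∈ V₀, x ∉ V₂ := fun x hx => Finset.disjoint_left.mp hd02 hx
  have h12 : ∀ x ∈ V₁, x ∉ V₂ := fun x hx => Finset.disjoint_left.mp hd12 hx
  have h10 : ∀ x ∈ V₁, x ∉ V₀ := fun x hx => Finset.disjoint_right.mp hd01 hx
  have h20 : ∀ x ∈ V₂, x ∉ V₀ := fun x hx => Finset.disjoint_right.mp hd02 hx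
  have h21 : ∀ x ∈ V₂, x ∉ V₁ := fun x hx => Finset.disjoint_right.mp hd12 hx
  -- degree computations
  have hdeg2 : ∀ x ∈ V₂, G.degree x = t + m - 1 := by
    intro x hx
    have hne : G.neighborFinset x = (V₀ ∪ V₂).erase x := by
      ext w
      simp only [SimpleGraph.mem_neighborFinset, hG, Finset.mem_erase, Finset.mem_union, ne_eq]
      constructor
      · rintro ⟨hxw, h | h | h | h⟩
        · exact ⟨fun h' => hxw h'.symm, h.2⟩
        · exact absurd hx (h12 _ h.1)
        · exact absurd hx (h02 _ h.1)
        · exact absurd hx (h12 _ h.1)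
      · rintro ⟨hwx, hw⟩
        exact ⟨fun h' => hwx h'.symm, Or.inl ⟨Or.inr hx, hw⟩⟩
    have hcard : (V₀ ∪ V₂).card = t + m := by
      rw [Finset.card_union_of_disjoint hd02, hc0]
    rw [SimpleGraph.degree, hne, Finset.card_erase_of_mem (Finset.mem_union_right _ hx), hcard]
  have hdeg1 : ∀ x ∈ V₁, G.degree x = t + m - 1 := by
    intro x hx
    have hne : G.neighborFinset x = (V₀ ∪ V₁).erase x := by
      ext w
      simp only [SimpleGraph.mem_neighborFinset, hG, Finset.mem_erase, Finset.mem_union, ne_eq]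
      constructor
      · rintro ⟨hxw, h | h | h | h⟩
        · rcases h.1 with h' | h'
          · exact absurd h' (h10 _ hx)
          · exact absurd h' (h12 _ hx)
        · exact ⟨fun h' => hxw h'.symm, Or.inr h.2⟩
        · exact absurd hx (h01 _ h.1)
        · exact ⟨fun h' => hxw h'.symm, Or.inl h.2⟩
      · rintro ⟨hwx, hw | hw⟩
        · exact ⟨fun h' => hwx h'.symm, Or.inr (Or.inr (Or.inr ⟨hx, hw⟩))⟩
        · exact ⟨fun h' => hwx h'.symm, Or.inr (Or.inl ⟨hx, hw⟩)⟩
    have hcard : (V₀ ∪ V₁).card = t + m := by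
      rw [Finset.card_union_of_disjoint hd01, hc0, hm1]
    rw [SimpleGraph.degree, hne, Finset.card_erase_of_mem (Finset.mem_union_right _ hx), hcard]
  have hdeg0 : ∀ x ∈ V₀, G.degree x = n - 1 := by
    intro x hx
    have hne : G.neighborFinset x = Finset.univ.erase x := by
      ext w
      simp only [SimpleGraph.mem_neighborFinset, hG, Finset.mem_erase, Finset.mem_univ,
        and_true, ne_eq]
      constructor
      · rintro ⟨hxw, -⟩
        exact fun h' => hxw h'.symm
      · intro hwx
        refine ⟨fun h' => hwx h'.symm, ?_⟩
        rcases hmem w with hw | hw | hw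
        · exact Or.inl ⟨Finset.mem_union_left _ hx, Finset.mem_union_left _ hw⟩
        · exact Or.inr (Or.inr (Or.inl ⟨hx, hw⟩))
        · exact Or.inl ⟨Finset.mem_union_left _ hx, Finset.mem_union_right _ hw⟩
    rw [SimpleGraph.degree, hne, Finset.card_erase_of_mem (Finset.mem_univ x),
      Finset.card_univ, ← hn]
  have hmindeg : G.minDegree = t + m - 1 := by
    obtain ⟨x, hx⟩ := Finset.card_pos.mp (show 0 < V₂.card by omega)
    refine le_antisymm ?_ ?_
    · rw [← hdeg2 x hx]
      exact SimpleGraph.minDegree_le_degree G x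
    · apply SimpleGraph.le_minDegree_of_forall_le_degree
      intro w
      rcases hmem w with hw | hw | hw
      · rw [hdeg0 w hw]; omega
      · rw [hdeg1 w hw]
      · rw [hdeg2 w hw]
  refine ⟨by omega, ?_⟩
  intro v H hH
  have hlen : H.edges.length = n := by
    rw [SimpleGraph.Walk.length_edges, hH.length_eq, hn]
  -- counting vertices along the cycle
  have hsupsum : ∀ S : Finset V,
      (H.support.tail.map fun x => if x ∈ S then (1 : ℕ) else 0).sum = S.card := by
    intro S
    have hcount : ∀ a, H.support.tail.count a = 1 := by
      intro a
      rw [← SimpleGraph.Walk.support_tail_of_not_nil _ hH.isCycle.not_nil]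
      exact hH.isHamiltonian_tail a
    have hnd : H.support.tail.Nodup :=
      List.nodup_iff_count_le_one.mpr (fun a => (hcount a).le)
    have hmeml : ∀ a, a ∈ H.support.tail := by
      intro a
      rw [← List.count_pos_iff]
      rw [hcount a]
      norm_num
    have htf : H.support.tail.toFinset = Finset.univ :=
      Finset.eq_univ_iff_forall.mpr (fun a => List.mem_toFinset.mpr (hmeml a))
    rw [← List.sum_toFinset _ hnd, htf, Finset.sum_ite_mem, Finset.univ_inter,
      Finset.sum_const, smul_eq_mul, mul_one]
  have hdropsum : ∀ S : Finset V,
      (H.support.dropLast.map fun x => if x ∈ S then (1 : ℕ) else 0).sum = S.card := by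
    intro S
    set f : V → ℕ := fun x => if x ∈ S then 1 else 0 with hf
    have h2 : H.support.dropLast ++ [v] = H.support := by
      have h3 := List.dropLast_append_getLast (l := H.support) (by simp)
      rwa [SimpleGraph.Walk.getLast_support] at h3
    have h4 : (H.support.map f).sum = (H.support.dropLast.map f).sum + f v := by
      conv_lhs => rw [← h2]
      rw [List.map_append, List.sum_append, List.map_singleton, List.sum_singleton]
    have h5 : (H.support.map f).sum = f v + (H.support.tail.map f).sum := by
      conv_lhs => rw [SimpleGraph.Walk.support_eq_cons]
      rw [List.map_cons, List.sum_cons]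
    have h6 := hsupsum S
    rw [← hf] at h6
    omega
  have hdartsum : ∀ S : Finset V,
      (H.darts.map fun d => (if d.fst ∈ S then (1 : ℕ) else 0)
        + (if d.snd ∈ S then (1 : ℕ) else 0)).sum = 2 * S.card := by
    intro S
    rw [aux_sum_add]
    have e1 : (H.darts.map fun d => if d.fst ∈ S then (1 : ℕ) else 0)
        = (H.darts.map (·.fst)).map fun x => if x ∈ S then (1 : ℕ) else 0 := by
      rw [List.map_map]; rfl
    have e2 : (H.darts.map fun d => if d.snd ∈ S then (1 : ℕ) else 0)
        = (H.darts.map (·.snd)).map fun x => if x ∈ S then (1 : ℕ) else 0 := by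
      rw [List.map_map]; rfl
    rw [e1, e2, SimpleGraph.Walk.map_fst_darts, SimpleGraph.Walk.map_snd_darts,
      hdropsum S, hsupsum S]
    omega
  have hedge : ∀ d : G.Dart, d.edge = s(d.fst, d.snd) := by
    rintro ⟨⟨a, b⟩, h⟩; rfl
  -- color facts
  have hred : ∀ d : G.Dart, (d.fst ∈ V₂ ∨ d.snd ∈ V₂) → χ d.edge = 0 := by
    intro d hd2
    have hadj := d.adj
    rw [hedge d, hχ _ _ hadj]
    rcases (hG _ _).mp hadj with ⟨-, h | h | h | h⟩
    · exact h
    · rcases hd2 with hh | hh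
      · exact absurd hh (h12 _ h.1)
      · exact absurd hh (h12 _ h.2)
    · rcases hd2 with hh | hh
      · exact absurd hh (h02 _ h.1)
      · exact absurd hh (h12 _ h.2)
    · rcases hd2 with hh | hh
      · exact absurd hh (h12 _ h.1)
      · exact absurd hh (h02 _ h.2)
  have hblue : ∀ d : G.Dart, (d.fst ∈ V₁ ∨ d.snd ∈ V₁) → χ d.edge = 1 := by
    intro d hd1
    have hadj := d.adj
    rcases aux_fin2 (χ d.edge) with h | h
    · exfalso
      rw [hedge d, hχ _ _ hadj] at h
      rcases hd1 with hh | hh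
      · rcases Finset.mem_union.mp h.1 with h' | h'
        · exact h10 _ hh h'
        · exact h12 _ hh h'
      · rcases Finset.mem_union.mp h.2 with h' | h'
        · exact h10 _ hh h'
        · exact h12 _ hh h'
    · exact h
  have hedges : H.edges = H.darts.map SimpleGraph.Dart.edge := rfl
  have hfillen : ∀ c : Fin 2, (H.edges.filter (fun e => χ e = c)).length
      = (H.darts.filter (fun d => χ d.edge = c)).length := by
    intro c
    rw [hedges, List.filter_map, List.length_map]
    rfl
  -- red lower bound
  have hredbd : n - t ≤ 2 * (H.edges.filter (fun e => χ e = 0)).length := by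
    have hkey := aux_sum_le H.darts
      (fun d => (if d.fst ∈ V₂ then (1 : ℕ) else 0) + (if d.snd ∈ V₂ then (1 : ℕ) else 0))
      (fun d => χ d.edge = 0)
      (fun d _ => by split_ifs <;> omega)
      (by
        intro d _ hfalse
        have hne : ¬ χ d.edge = 0 := by simpa using hfalse
        have h1 : d.fst ∉ V₂ := fun h => hne (hred d (Or.inl h))
        have h2 : d.snd ∉ V₂ := fun h => hne (hred d (Or.inr h))
        simp [h1, h2])
    rw [hdartsum V₂] at hkey
    rw [hfillen 0]
    omega
  have hbluebd : n - t ≤ 2 * (H.edges.filter (fun e => χ e = 1)).length := by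
    have hkey := aux_sum_le H.darts
      (fun d => (if d.fst ∈ V₁ then (1 : ℕ) else 0) + (if d.snd ∈ V₁ then (1 : ℕ) else 0))
      (fun d => χ d.edge = 1)
      (fun d _ => by split_ifs <;> omega)
      (by
        intro d _ hfalse
        have hne : ¬ χ d.edge = 1 := by simpa using hfalse
        have h1 : d.fst ∉ V₁ := fun h => hne (hblue d (Or.inl h))
        have h2 : d.snd ∉ V₁ := fun h => hne (hblue d (Or.inr h))
        simp [h1, h2])
    rw [hdartsum V₁, hm1] at hkey
    rw [hfillen 1]
    omega
  refine ⟨hredbd, hbluebd, ?_⟩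
  have htot : (H.edges.filter (fun e => χ e = 0)).length
      + (H.edges.filter (fun e => χ e = 1)).length = n := by
    rw [aux_two_filter χ H.edges, hlen]
  intro i
  rcases aux_fin2 i with rfl | rfl
  · set r := (H.edges.filter (fun e => χ e = 0)).length
    have hr1 : (n : ℚ) ≤ 2 * r + t := by exact_mod_cast (by omega : n ≤ 2 * r + t)
    have hr2 : (2 * r : ℚ) ≤ n + t := by exact_mod_cast (by omega : 2 * r ≤ n + t)
    rw [abs_le]
    constructor <;> linarith
  · set r := (H.edges.filter (fun e => χ e = 1)).length
    have hr1 : (n : ℚ) ≤ 2 * r + t := by exact_mod_cast (by omega : n ≤ 2 * r + t)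
    have hr2 : (2 * r : ℚ) ≤ n + t := by exact_mod_cast (by omega : 2 * r ≤ n + t)
    rw [abs_le]
    constructor <;> linarith
end

section
/- Let r ≥ 2, let G be an n-vertex graph with an edge-coloring χ : E(G) → [r], and let H be a Hamilton cycle of G with d_χ(H) < m. Fix a color ℓ ∈ [r] and let B, V₀ ⊆ V(G) be disjoint vertex sets such that: (i) B is an independent set of G; (ii) every edge of G with at least one endpoint in B and no endpoint in V₀ has color ℓ; and (iii) every edge of G of color ℓ with no endpoint in V₀ has at least one endpoint in B. Then n/(2r) − m/2 − |V₀| ≤ |B| ≤ n/(2r) + m/2 + 2|V₀|. -/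
open SimpleGraph

private lemma aux_exists_edge {V : Type*} {G : SimpleGraph V} {u w : V} (p : G.Walk u w)
    (x : V) (hx : x ∈ p.support) (hxw : x ≠ w) : ∃ e ∈ p.edges, x ∈ e := by
  induction p with
  | nil => simp at hx; exact absurd hx hxw
  | cons h q ih =>
    rename_i a b c
    rw [SimpleGraph.Walk.support_cons, List.mem_cons] at hx
    rcases hx with rfl | hx
    · exact ⟨s(x, b), by simp, Sym2.mem_mk_left _ _⟩
    · obtain ⟨e, he, hxe⟩ := ih hx hxw
      exact ⟨e, by simp [he], hxe⟩

private lemma aux_sum_countP {V : Type*} [Fintype V] [DecidableEq V] (l : List (Sym2 V))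
    (hl : ∀ e ∈ l, ¬ e.IsDiag) :
    ∑ x : V, l.countP (fun e => x ∈ e) = 2 * l.length := by
  induction l with
  | nil => simp
  | cons e l ih =>
    have hcard : (Finset.univ.filter (fun x : V => x ∈ e)).card = 2 := by
      induction e using Sym2.ind with
      | _ a b =>
        have hab : a ≠ b := by
          have := hl s(a, b) List.mem_cons_self
          simpa [Sym2.isDiag_iff_proj_eq] using this
        have : Finset.univ.filter (fun x : V => x ∈ s(a, b)) = {a, b} := by
          ext x; simp [Sym2.mem_iff]
        rw [this, Finset.card_pair hab]
    have hsum : ∑ x : V, (if x ∈ e then 1 else 0) = 2 := by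
      rw [← Finset.card_filter]
      exact hcard
    calc ∑ x : V, (e :: l).countP (fun e => x ∈ e)
        = ∑ x : V, (l.countP (fun e => x ∈ e) + if x ∈ e then 1 else 0) := by
          apply Finset.sum_congr rfl
          intro x _
          rw [List.countP_cons]
          simp
      _ = 2 * l.length + 2 := by
          rw [Finset.sum_add_distrib, ih (fun e he => hl e (List.mem_cons_of_mem _ he)), hsum]
      _ = 2 * (e :: l).length := by simp [List.length_cons]; ring

private lemma aux_filter_card {α : Type*} [DecidableEq α] (l : List α) (hl : l.Nodup)
    (p : α → Prop) [DecidablePred p] :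
    (l.toFinset.filter p).card = l.countP (fun a => p a) := by
  rw [List.countP_eq_length_filter, ← List.toFinset_card_of_nodup (hl.filter _)]
  congr 1
  ext a
  simp

private lemma aux_deg_two {V : Type*} [Fintype V] [DecidableEq V] {G : SimpleGraph V} {v : V}
    (H : G.Walk v v) (hH : H.IsHamiltonianCycle) (x : V) :
    H.edges.countP (fun e => x ∈ e) = 2 := by
  set f : V → ℕ := fun x => H.edges.countP (fun e => x ∈ e) with hf
  have hle : ∀ y : V, 2 ≤ f y := by
    intro y
    have heven : Even (f y) := by
      rw [hf]
      simp only
      rw [hH.isCycle.isTrail.even_countP_edges_iff y]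
      intro h; exact absurd rfl h
    have hpos : 0 < f y := by
      rw [hf]
      simp only
      rw [List.countP_pos_iff]
      by_cases hy : y = v
      · subst hy
        have hnil : ¬ H.Nil := hH.isCycle.not_nil
        rw [SimpleGraph.Walk.not_nil_iff] at hnil
        obtain ⟨u, h, q, rfl⟩ := hnil
        exact ⟨s(y, u), by simp, by simp [Sym2.mem_mk_left]⟩
      · obtain ⟨e, he, hxe⟩ := aux_exists_edge H y (hH.mem_support y) hy
        exact ⟨e, he, by simp [hxe]⟩
    obtain ⟨k, hk⟩ := heven
    omega
  have hsum : ∑ y : V, f y = 2 * Fintype.card V := by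
    rw [hf]
    have hdiag : ∀ e ∈ H.edges, ¬ e.IsDiag := by
      intro e he
      induction e using Sym2.ind with
      | _ a b =>
        have : G.Adj a b := H.adj_of_mem_edges he
        simpa [Sym2.isDiag_iff_proj_eq] using this.ne
    rw [aux_sum_countP H.edges hdiag, SimpleGraph.Walk.length_edges, hH.length_eq]
  by_contra hne
  have h2 : 2 < f x := lt_of_le_of_ne (hle x) (Ne.symm hne)
  have : ∑ y : V, (2 : ℕ) < ∑ y : V, f y :=
    Finset.sum_lt_sum (fun y _ => hle y) ⟨x, Finset.mem_univ x, h2⟩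
  rw [hsum] at this
  simp [Finset.sum_const, Finset.card_univ, mul_comm] at this

/-- Counting lemma: if `H` is a Hamilton cycle with color-bias less than `m`, `B` is an
independent set, every edge meeting `B` and avoiding `V₀` has color `ℓ`, and every edge of
color `ℓ` avoiding `V₀` meets `B`, then `n/(2r) − m/2 − |V₀| ≤ |B| ≤ n/(2r) + m/2 + 2|V₀|`. -/
theorem statement16 {V : Type*} [Fintype V] [DecidableEq V] (r m : ℕ) (hr : 2 ≤ r)
    (G : SimpleGraph V) (χ : Sym2 V → Fin r)
    (v : V) (H : G.Walk v v) (hH : H.IsHamiltonianCycle)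
    (hbias : ∀ i : Fin r,
      |((H.edges.filter (fun e => χ e = i)).length : ℚ) - (Fintype.card V : ℚ) / r| < m)
    (ℓ : Fin r) (B V₀ : Finset V) (hdisj : Disjoint B V₀)
    (hBind : ∀ u ∈ B, ∀ w ∈ B, ¬ G.Adj u w)
    (hmono : ∀ u w : V, G.Adj u w → (u ∈ B ∨ w ∈ B) → u ∉ V₀ → w ∉ V₀ → χ s(u, w) = ℓ)
    (hcover : ∀ u w : V, G.Adj u w → χ s(u, w) = ℓ → u ∉ V₀ → w ∉ V₀ → (u ∈ B ∨ w ∈ B)) :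
    (Fintype.card V : ℚ) / (2 * r) - (m : ℚ) / 2 - V₀.card ≤ B.card ∧
      (B.card : ℚ) ≤ (Fintype.card V : ℚ) / (2 * r) + (m : ℚ) / 2 + 2 * V₀.card := by
  classical
  set n := Fintype.card V with hn
  have hnodup : H.edges.Nodup := hH.isCycle.isTrail.edges_nodup
  set E : Finset (Sym2 V) := H.edges.toFinset with hE
  -- degree sets
  set D : V → Finset (Sym2 V) := fun x => E.filter (fun e => x ∈ e) with hDdef
  have hD : ∀ x : V, (D x).card = 2 := by
    intro x
    rw [hDdef]
    simp only
    rw [hE, aux_filter_card _ hnodup]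
    exact aux_deg_two H hH x
  set EB : Finset (Sym2 V) := E.filter (fun e => ∃ x ∈ B, x ∈ e) with hEBdef
  set E₀ : Finset (Sym2 V) := E.filter (fun e => ∃ x ∈ V₀, x ∈ e) with hE₀def
  set Eℓ : Finset (Sym2 V) := E.filter (fun e => χ e = ℓ) with hEℓdef
  have hmemE : ∀ e, e ∈ E ↔ e ∈ H.edges := by intro e; rw [hE]; exact List.mem_toFinset
  -- EB = biUnion of D over B
  have hEB : EB.card = 2 * B.card := by
    have hbi : EB = B.biUnion D := by
      ext e
      simp only [hEBdef, hDdef, Finset.mem_filter, Finset.mem_biUnion]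
      constructor
      · rintro ⟨he, x, hxB, hxe⟩; exact ⟨x, hxB, he, hxe⟩
      · rintro ⟨x, hxB, he, hxe⟩; exact ⟨he, x, hxB, hxe⟩
    rw [hbi, Finset.card_biUnion, Finset.sum_congr rfl (fun x _ => hD x)]
    · simp [mul_comm]
    · intro a ha b hb hab
      simp only [Finset.disjoint_left, hDdef, Finset.mem_filter]
      rintro e ⟨heE, hae⟩ ⟨-, hbe⟩
      have he' : e = s(a, b) := (Sym2.mem_and_mem_iff hab).mp ⟨hae, hbe⟩
      have : G.Adj a b := H.adj_of_mem_edges (by rwa [← he', ← hmemE])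
      exact hBind a ha b hb this
  have hE₀ : E₀.card ≤ 2 * V₀.card := by
    have hsub : E₀ ⊆ V₀.biUnion D := by
      intro e he
      simp only [hE₀def, Finset.mem_filter] at he
      obtain ⟨heE, x, hxV, hxe⟩ := he
      simp only [Finset.mem_biUnion, hDdef, Finset.mem_filter]
      exact ⟨x, hxV, heE, hxe⟩
    calc E₀.card ≤ (V₀.biUnion D).card := Finset.card_le_card hsub
      _ ≤ ∑ x ∈ V₀, (D x).card := Finset.card_biUnion_le
      _ = 2 * V₀.card := by rw [Finset.sum_congr rfl (fun x _ => hD x)]; simp [mul_comm]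
  -- inclusion (a): Eℓ ⊆ EB ∪ E₀
  have hincA : Eℓ ⊆ EB ∪ E₀ := by
    intro e he
    simp only [hEℓdef, Finset.mem_filter] at he
    obtain ⟨heE, hχ⟩ := he
    induction e using Sym2.ind with
    | _ u w =>
      have hadj : G.Adj u w := H.adj_of_mem_edges ((hmemE _).mp heE)
      by_cases hu : u ∈ V₀
      · exact Finset.mem_union_right _ (by
          simp only [hE₀def, Finset.mem_filter]
          exact ⟨heE, u, hu, Sym2.mem_mk_left _ _⟩)
      by_cases hw : w ∈ V₀
      · exact Finset.mem_union_right _ (by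
          simp only [hE₀def, Finset.mem_filter]
          exact ⟨heE, w, hw, Sym2.mem_mk_right _ _⟩)
      · rcases hcover u w hadj hχ hu hw with hB | hB
        · exact Finset.mem_union_left _ (by
            simp only [hEBdef, Finset.mem_filter]
            exact ⟨heE, u, hB, Sym2.mem_mk_left _ _⟩)
        · exact Finset.mem_union_left _ (by
            simp only [hEBdef, Finset.mem_filter]
            exact ⟨heE, w, hB, Sym2.mem_mk_right _ _⟩)
  -- inclusion (b): EB ⊆ Eℓ ∪ E₀
  have hincB : EB ⊆ Eℓ ∪ E₀ := by
    intro e he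
    simp only [hEBdef, Finset.mem_filter] at he
    obtain ⟨heE, x, hxB, hxe⟩ := he
    induction e using Sym2.ind with
    | _ u w =>
      have hadj : G.Adj u w := H.adj_of_mem_edges ((hmemE _).mp heE)
      by_cases hu : u ∈ V₀
      · exact Finset.mem_union_right _ (by
          simp only [hE₀def, Finset.mem_filter]
          exact ⟨heE, u, hu, Sym2.mem_mk_left _ _⟩)
      by_cases hw : w ∈ V₀
      · exact Finset.mem_union_right _ (by
          simp only [hE₀def, Finset.mem_filter]
          exact ⟨heE, w, hw, Sym2.mem_mk_right _ _⟩)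
      · have hxuw : x = u ∨ x = w := Sym2.mem_iff.mp hxe
        have hB : u ∈ B ∨ w ∈ B := by
          rcases hxuw with rfl | rfl
          · exact Or.inl hxB
          · exact Or.inr hxB
        have hχ : χ s(u, w) = ℓ := hmono u w hadj hB hu hw
        exact Finset.mem_union_left _ (by
          simp only [hEℓdef, Finset.mem_filter]
          exact ⟨heE, hχ⟩)
  -- card inequalities
  have hcardA : Eℓ.card ≤ 2 * B.card + 2 * V₀.card := by
    calc Eℓ.card ≤ (EB ∪ E₀).card := Finset.card_le_card hincA
      _ ≤ EB.card + E₀.card := Finset.card_union_le _ _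
      _ ≤ 2 * B.card + 2 * V₀.card := by rw [hEB]; omega
  have hcardB : 2 * B.card ≤ Eℓ.card + 2 * V₀.card := by
    calc 2 * B.card = EB.card := hEB.symm
      _ ≤ (Eℓ ∪ E₀).card := Finset.card_le_card hincB
      _ ≤ Eℓ.card + E₀.card := Finset.card_union_le _ _
      _ ≤ Eℓ.card + 2 * V₀.card := by omega
  -- link with hbias
  have hlen : (H.edges.filter (fun e => χ e = ℓ)).length = Eℓ.card := by
    rw [hEℓdef, hE, aux_filter_card _ hnodup, List.countP_eq_length_filter]
  have hb := hbias ℓ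
  rw [hlen] at hb
  rw [abs_lt] at hb
  have h1 : (n : ℚ) / r - m < (Eℓ.card : ℚ) := by
    have := hb.1; rw [hn]; linarith
  have h2 : (Eℓ.card : ℚ) < (n : ℚ) / r + m := by
    have := hb.2; rw [hn]; linarith
  have hA : (Eℓ.card : ℚ) ≤ 2 * B.card + 2 * V₀.card := by exact_mod_cast hcardA
  have hB' : 2 * (B.card : ℚ) ≤ Eℓ.card + 2 * V₀.card := by exact_mod_cast hcardB
  have hrpos : (0 : ℚ) < r := by positivity
  have hkey : (n : ℚ) / (2 * r) = ((n : ℚ) / r) / 2 := by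
    rw [div_div]; ring_nf
  rw [hn] at hkey ⊢
  constructor
  · rw [hkey]; linarith
  · rw [hkey]; linarith
end
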